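/- arXiv:1606.03342 — 7 statements merged into one kernel-verified Lean document; each statement's English description precedes it below -/
import Mathlib

section
/- Let n ≥ 1, let ν be the product exponential probability measure on ℝ₊ⁿ, and set ψ(t) = (1/(n−1)!)·∫ₜ^∞ e^{-x} x^{n−1} dx for t ≥ 0. The following are equivalent: (a) for every Borel set A ⊆ ℝ₊ⁿ with 0 < ν(A) < 1/2 and every s > 0 with ψ(s) = ν(A), one has ν⁺(A) ≥ s^{n−1}e^{-s}/(n−1)!; (b) for every set B ⊆ ℝ₊ⁿ that is a finite union of open ℓ₁-balls, every h > 0 with ν(B^h) < 1/2, and all s, s' > 0 with ψ(s) = ν(B) and ψ(s') = ν(B^h), one has s' ≤ s − h. Moreover, (b) is also equivalent to the statement (a) restricted to sets A that are finite unions of open ℓ₁-balls. -/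
open MeasureTheory Real Set Filter
open scoped ENNReal Topology

/-- The positive orthant `ℝ₊ⁿ = [0,∞)ⁿ`. -/
def posOrthant (n : ℕ) : Set (Fin n → ℝ) := {x | ∀ i, 0 ≤ x i}

/-- The product exponential measure on `ℝ₊ⁿ`, with density `e^{-(x₁+⋯+xₙ)}`. -/
noncomputable def expMeasure (n : ℕ) : Measure (Fin n → ℝ) :=
  (volume.restrict (posOrthant n)).withDensity
    (fun x => ENNReal.ofReal (Real.exp (-(∑ i, x i))))

/-- The open `h`-neighbourhood of `A` inside `ℝ₊ⁿ` with respect to the `ℓ₁`-distance. -/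
def l1Nbhd (n : ℕ) (A : Set (Fin n → ℝ)) (h : ℝ) : Set (Fin n → ℝ) :=
  {x | x ∈ posOrthant n ∧ ∃ y ∈ A, ∑ i, |x i - y i| < h}

/-- The boundary measure `ν⁺(A) = liminf_{h→0⁺} (ν(A^h) − ν(A))/h`. -/
noncomputable def bdryMeasure (n : ℕ) (A : Set (Fin n → ℝ)) : ℝ≥0∞ :=
  Filter.liminf
    (fun h : ℝ => (expMeasure n (l1Nbhd n A h) - expMeasure n A) / ENNReal.ofReal h)
    (nhdsWithin 0 (Set.Ioi 0))

/-- The closed `ℓ₁`-ball `tB₁ⁿ` of radius `t` centred at the origin. -/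
def l1Ball (n : ℕ) (t : ℝ) : Set (Fin n → ℝ) := {x | ∑ i, |x i| ≤ t}

/-- `B` is a finite union of open `ℓ₁`-balls in `ℝ₊ⁿ`. -/
def IsFiniteUnionOfL1Balls (n : ℕ) (B : Set (Fin n → ℝ)) : Prop :=
  ∃ (m : ℕ) (c : Fin m → (Fin n → ℝ)) (r : Fin m → ℝ),
    (∀ j, c j ∈ posOrthant n ∧ 0 < r j) ∧
    B = ⋃ j, {x | x ∈ posOrthant n ∧ ∑ i, |x i - c j i| < r j}

/-- `ψ(t) = (1/(n−1)!) ∫ₜ^∞ e^{-x} x^{n−1} dx`, the measure of the complement of the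
simplex of radius `t`. -/
noncomputable def psiFn (n : ℕ) (t : ℝ) : ℝ :=
  (1 / (Nat.factorial (n - 1) : ℝ)) * ∫ x in Set.Ioi t, Real.exp (-x) * x ^ (n - 1)

namespace IsoAux

noncomputable def cFac (n : ℕ) : ℝ := (1 / (Nat.factorial (n - 1) : ℝ))

lemma cFac_pos (n : ℕ) : 0 < cFac n := by
  unfold cFac; positivity

noncomputable def fE (n : ℕ) : ℝ → ℝ := fun x => Real.exp (-x) * x ^ (n - 1)

lemma fE_cont (n : ℕ) : Continuous (fE n) :=
  (Real.continuous_exp.comp continuous_neg).mul (continuous_pow _)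

lemma fE_nonneg (n : ℕ) {x : ℝ} (hx : 0 ≤ x) : 0 ≤ fE n x :=
  mul_nonneg (Real.exp_pos _).le (pow_nonneg hx _)

lemma fE_pos (n : ℕ) {x : ℝ} (hx : 0 < x) : 0 < fE n x :=
  mul_pos (Real.exp_pos _) (pow_pos hx _)

lemma psiFn_eq (n : ℕ) (t : ℝ) : psiFn n t = cFac n * ∫ x in Set.Ioi t, fE n x := rfl

lemma fE_intOn (n : ℕ) (hn : 1 ≤ n) {t : ℝ} (ht : 0 ≤ t) :
    IntegrableOn (fE n) (Ioi t) := by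
  have hpos : (0:ℝ) < n := by exact_mod_cast Nat.pos_of_ne_zero (by omega)
  have h0 : IntegrableOn (fun x : ℝ => Real.exp (-x) * x ^ ((n : ℝ) - 1)) (Ioi 0) :=
    Real.GammaIntegral_convergent hpos
  have hcast : ((n:ℝ) - 1) = ((n - 1 : ℕ) : ℝ) := by
    rw [Nat.cast_sub hn]; norm_num
  have h1 : IntegrableOn (fE n) (Ioi 0) := by
    refine h0.congr_fun (fun x hx => ?_) measurableSet_Ioi
    show Real.exp (-x) * x ^ ((n:ℝ) - 1) = fE n x
    rw [hcast, Real.rpow_natCast]; rfl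
  exact h1.mono_set (Ioi_subset_Ioi ht)

lemma psi_split (n : ℕ) (hn : 1 ≤ n) {a b : ℝ} (ha : 0 ≤ a) (hab : a ≤ b) :
    psiFn n a = (cFac n * ∫ x in Ioc a b, fE n x) + psiFn n b := by
  have h1 : Ioi a = Ioc a b ∪ Ioi b := (Ioc_union_Ioi_eq_Ioi hab).symm
  have hd : Disjoint (Ioc a b) (Ioi b) := by
    rw [disjoint_left]; intro x hx1 hx2; exact absurd hx1.2 (not_le.2 hx2)
  have h2 : ∫ x in Ioi a, fE n x = (∫ x in Ioc a b, fE n x) + ∫ x in Ioi b, fE n x := by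
    rw [h1, setIntegral_union hd measurableSet_Ioi
      ((fE_intOn n hn ha).mono_set Ioc_subset_Ioi_self)
      (fE_intOn n hn (ha.trans hab))]
  rw [psiFn_eq, psiFn_eq, h2]; ring

lemma psi_hasDerivAt (n : ℕ) (hn : 1 ≤ n) {t : ℝ} (ht : 0 < t) :
    HasDerivAt (psiFn n) (-(cFac n * fE n t)) t := by
  set a := t/2 with ha
  have ha0 : (0:ℝ) ≤ a := by positivity
  have hat : a < t := by simp only [ha]; linarith
  have hF : HasDerivAt (fun u => ∫ x in a..u, fE n x) (fE n t) t :=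
    intervalIntegral.integral_hasDerivAt_right ((fE_cont n).intervalIntegrable _ _)
      ((fE_cont n).stronglyMeasurable.stronglyMeasurableAtFilter)
      ((fE_cont n).continuousAt)
  have hG : HasDerivAt (fun u => psiFn n a - cFac n * ∫ x in a..u, fE n x)
      (-(cFac n * fE n t)) t := by
    simpa using ((hF.const_mul (cFac n)).const_sub (psiFn n a))
  refine hG.congr_of_eventuallyEq ?_
  filter_upwards [Ioi_mem_nhds hat] with u hu
  show psiFn n u = psiFn n a - cFac n * ∫ x in a..u, fE n x
  rw [psi_split n hn ha0 (le_of_lt hu), intervalIntegral.integral_of_le (le_of_lt hu)]; ring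

lemma psi_contOn (n : ℕ) (hn : 1 ≤ n) : ContinuousOn (psiFn n) (Ici 0) := by
  have hc : Continuous (fun u : ℝ => psiFn n 0 - cFac n * ∫ x in (0:ℝ)..u, fE n x) :=
    continuous_const.sub (continuous_const.mul (intervalIntegral.continuous_primitive
      (μ := volume) (fun a b => (fE_cont n).intervalIntegrable a b) 0))
  refine (hc.continuousOn).congr ?_
  intro u hu
  show psiFn n u = psiFn n 0 - cFac n * ∫ x in (0:ℝ)..u, fE n x
  rw [psi_split n hn le_rfl hu, intervalIntegral.integral_of_le hu]; ring

lemma psi_zero (n : ℕ) (hn : 1 ≤ n) : psiFn n 0 = 1 := by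
  have hpos : (0:ℝ) < n := by exact_mod_cast Nat.pos_of_ne_zero (by omega)
  have hcast : ((n:ℝ) - 1) = ((n - 1 : ℕ) : ℝ) := by
    rw [Nat.cast_sub hn]; norm_num
  have h1 : ∫ x in Ioi (0:ℝ), fE n x = Real.Gamma n := by
    rw [Real.Gamma_eq_integral hpos]
    refine setIntegral_congr_fun measurableSet_Ioi (fun x hx => ?_)
    show fE n x = _
    unfold fE
    rw [hcast, Real.rpow_natCast]
  have h2 : Real.Gamma n = (Nat.factorial (n-1) : ℝ) := by
    have h3 : (n:ℝ) = ((n-1:ℕ):ℝ) + 1 := by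
      rw [Nat.cast_sub hn]; norm_num
    rw [h3, Real.Gamma_nat_eq_factorial]
  rw [psiFn_eq, h1, h2]
  unfold cFac
  field_simp

lemma psi_pos (n : ℕ) (hn : 1 ≤ n) {t : ℝ} (ht : 0 ≤ t) : 0 < psiFn n t := by
  rw [psi_split n hn ht (by linarith : t ≤ t + 1)]
  have h1 : 0 < ∫ x in Ioc t (t+1), fE n x := by
    rw [← intervalIntegral.integral_of_le (by linarith : t ≤ t + 1)]
    refine intervalIntegral.intervalIntegral_pos_of_pos_on
      ((fE_cont n).intervalIntegrable _ _) (fun x hx => fE_pos n (by cases hx; linarith)) (by linarith)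
  have h2 : 0 ≤ psiFn n (t+1) := by
    rw [psiFn_eq]
    refine mul_nonneg (cFac_pos n).le (setIntegral_nonneg measurableSet_Ioi fun x hx => ?_)
    exact fE_nonneg n (by simp at hx; linarith)
  nlinarith [cFac_pos n]

lemma psi_strictAnti (n : ℕ) (hn : 1 ≤ n) : StrictAntiOn (psiFn n) (Ici 0) := by
  refine strictAntiOn_of_deriv_neg (convex_Ici 0) (psi_contOn n hn) (fun x hx => ?_)
  rw [interior_Ici] at hx
  rw [(psi_hasDerivAt n hn hx).deriv]
  have h1 := fE_pos n hx
  have h2 := cFac_pos n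
  nlinarith

lemma psi_anti (n : ℕ) (hn : 1 ≤ n) {x y : ℝ} (hx : 0 ≤ x) (hy : 0 ≤ y) (h : x ≤ y) :
    psiFn n y ≤ psiFn n x := by
  rcases eq_or_lt_of_le h with rfl | h
  · exact le_rfl
  · exact (psi_strictAnti n hn hx hy h).le

lemma le_of_psi_le (n : ℕ) (hn : 1 ≤ n) {x y : ℝ} (hx : 0 ≤ x) (hy : 0 ≤ y)
    (h : psiFn n x ≤ psiFn n y) : y ≤ x := by
  by_contra hc
  push_neg at hc
  exact absurd (psi_strictAnti n hn hx hy hc) (not_lt.2 h)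

lemma psi_inj (n : ℕ) (hn : 1 ≤ n) {x y : ℝ} (hx : 0 ≤ x) (hy : 0 ≤ y)
    (h : psiFn n x = psiFn n y) : x = y :=
  le_antisymm (le_of_psi_le n hn hy hx h.ge) (le_of_psi_le n hn hx hy h.le)

lemma psi_exists_root (n : ℕ) (hn : 1 ≤ n) {v : ℝ} (h0 : 0 < v) (h1 : v < 1) :
    ∃ z, 0 < z ∧ psiFn n z = v := by
  obtain ⟨T, hT0, hTv⟩ : ∃ T : ℝ, 0 ≤ T ∧ psiFn n T < v := by
    have hmono : Monotone (fun k : ℕ => Ioc (0:ℝ) k) := by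
      intro a b hab
      exact Ioc_subset_Ioc le_rfl (by exact_mod_cast hab)
    have hunion : ⋃ k : ℕ, Ioc (0:ℝ) (k:ℝ) = Ioi 0 := by
      ext x
      simp only [mem_iUnion, mem_Ioc, mem_Ioi]
      constructor
      · rintro ⟨k, hk, -⟩; exact hk
      · intro hx
        obtain ⟨k, hk⟩ := exists_nat_ge x
        exact ⟨k, hx, hk⟩
    have ht := tendsto_setIntegral_of_monotone (fun k => measurableSet_Ioc) hmono
      (by rw [hunion]; exact fE_intOn n hn le_rfl)
    rw [hunion] at ht
    have hps : ∀ k : ℕ, psiFn n (k:ℝ) = psiFn n 0 - cFac n * ∫ x in Ioc (0:ℝ) (k:ℝ), fE n x :=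
      fun k => by rw [psi_split n hn le_rfl (Nat.cast_nonneg k)]; ring
    have ht2 : Tendsto (fun k : ℕ => psiFn n (k:ℝ)) atTop
        (𝓝 (psiFn n 0 - cFac n * ∫ x in Ioi (0:ℝ), fE n x)) := by
      simp_rw [hps]
      exact tendsto_const_nhds.sub (ht.const_mul _)
    have hz : psiFn n 0 - cFac n * ∫ x in Ioi (0:ℝ), fE n x = 0 := by
      rw [psiFn_eq]; ring
    rw [hz] at ht2
    obtain ⟨k, hk⟩ := (ht2.eventually_lt_const h0).exists
    exact ⟨k, Nat.cast_nonneg k, hk⟩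
  have hvmem : v ∈ Icc (psiFn n T) (psiFn n 0) := ⟨hTv.le, by rw [psi_zero n hn]; linarith⟩
  obtain ⟨z, hz, hzv⟩ := intermediate_value_Icc' hT0
    ((psi_contOn n hn).mono (Icc_subset_Ici_self)) hvmem
  refine ⟨z, ?_, hzv⟩
  rcases eq_or_lt_of_le hz.1 with h | h
  · exfalso
    rw [← h, psi_zero n hn] at hzv
    linarith
  · exact h

end IsoAux

namespace IsoAux

variable {n : ℕ}

lemma sum_abs_tri (x y z : Fin n → ℝ) :
    (∑ i, |x i - z i|) ≤ (∑ i, |x i - y i|) + ∑ i, |y i - z i| := by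
  rw [← Finset.sum_add_distrib]
  exact Finset.sum_le_sum fun i _ => abs_sub_le _ _ _

lemma measurableSet_posOrthant (n : ℕ) : MeasurableSet (posOrthant n) := by
  have h : posOrthant n = ⋂ i, {x : Fin n → ℝ | 0 ≤ x i} := by
    ext x; simp [posOrthant]
  rw [h]
  exact MeasurableSet.iInter fun i => measurableSet_le measurable_const (measurable_pi_apply i)

lemma contSum (c : Fin n → ℝ) : Continuous fun x : Fin n → ℝ => ∑ i, |x i - c i| :=
  continuous_finset_sum _ fun i _ => ((continuous_apply i).sub continuous_const).abs

def oball (n : ℕ) (c : Fin n → ℝ) (ρ : ℝ) : Set (Fin n → ℝ) :=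
  {x | x ∈ posOrthant n ∧ ∑ i, |x i - c i| < ρ}

lemma oball_subset_orth (c : Fin n → ℝ) (ρ : ℝ) : oball n c ρ ⊆ posOrthant n :=
  fun _ hx => hx.1

lemma oball_measurable (c : Fin n → ℝ) (ρ : ℝ) : MeasurableSet (oball n c ρ) :=
  (measurableSet_posOrthant n).inter ((isOpen_lt (contSum c) continuous_const).measurableSet)

lemma oball_mono {c : Fin n → ℝ} {ρ ρ' : ℝ} (h : ρ ≤ ρ') : oball n c ρ ⊆ oball n c ρ' :=
  fun _ hx => ⟨hx.1, lt_of_lt_of_le hx.2 h⟩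

lemma measurableSet_l1Nbhd (A : Set (Fin n → ℝ)) (h : ℝ) : MeasurableSet (l1Nbhd n A h) := by
  have h1 : {x : Fin n → ℝ | ∃ y ∈ A, ∑ i, |x i - y i| < h} =
      ⋃ y ∈ A, {x | ∑ i, |x i - y i| < h} := by
    ext x; simp
  have h2 : IsOpen {x : Fin n → ℝ | ∃ y ∈ A, ∑ i, |x i - y i| < h} := by
    rw [h1]
    exact isOpen_biUnion fun y _ => isOpen_lt (contSum y) continuous_const
  exact (measurableSet_posOrthant n).inter h2.measurableSet

lemma l1Nbhd_subset_orth (A : Set (Fin n → ℝ)) (h : ℝ) : l1Nbhd n A h ⊆ posOrthant n :=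
  fun _ hx => hx.1

lemma subset_l1Nbhd {A : Set (Fin n → ℝ)} (hA : A ⊆ posOrthant n) {h : ℝ} (hh : 0 < h) :
    A ⊆ l1Nbhd n A h :=
  fun x hx => ⟨hA hx, x, hx, by simp [hh]⟩

lemma l1Nbhd_mono_left {A B : Set (Fin n → ℝ)} (hAB : A ⊆ B) (h : ℝ) :
    l1Nbhd n A h ⊆ l1Nbhd n B h := by
  rintro x ⟨hx, y, hy, hxy⟩
  exact ⟨hx, y, hAB hy, hxy⟩

lemma l1Nbhd_tri (A : Set (Fin n → ℝ)) (δ ε : ℝ) :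
    l1Nbhd n (l1Nbhd n A δ) ε ⊆ l1Nbhd n A (δ + ε) := by
  rintro x ⟨hx, y, ⟨hy, z, hz, hyz⟩, hxy⟩
  exact ⟨hx, z, hz, lt_of_le_of_lt (sum_abs_tri x y z) (by linarith)⟩

lemma l1Nbhd_oball {c : Fin n → ℝ} (hc : c ∈ posOrthant n) {ρ ε : ℝ} (hρ : 0 < ρ)
    (hε : 0 < ε) : l1Nbhd n (oball n c ρ) ε = oball n c (ρ + ε) := by
  ext x
  constructor
  · rintro ⟨hx, y, ⟨hy, hyc⟩, hxy⟩
    exact ⟨hx, lt_of_le_of_lt (sum_abs_tri x y c) (by linarith)⟩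
  · rintro ⟨hx, hxc⟩
    by_cases hD : (∑ i, |x i - c i|) < ρ
    · exact ⟨hx, x, ⟨hx, hD⟩, by simp [hε]⟩
    · push_neg at hD
      set D := ∑ i, |x i - c i| with hDdef
      have hD0 : 0 < D := lt_of_lt_of_le hρ hD
      set θ := ((D - ρ)/D + min (ε/D) 1)/2 with hθdef
      have hlo1 : (D - ρ)/D < ε/D := by
        apply div_lt_div_of_pos_right ?_ hD0
        linarith
      have hlo2 : (D - ρ)/D < 1 := by
        rw [div_lt_one hD0]; linarith
      have hlo : (D - ρ)/D < min (ε/D) 1 := lt_min hlo1 hlo2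
      have hlonn : 0 ≤ (D - ρ)/D := div_nonneg (by linarith) hD0.le
      have hθ1 : θ < min (ε/D) 1 := by rw [hθdef]; linarith
      have hθ2 : (D - ρ)/D < θ := by rw [hθdef]; linarith
      have hθ0 : 0 ≤ θ := le_of_lt (lt_of_le_of_lt hlonn hθ2)
      have hθle1 : θ ≤ 1 := le_of_lt (lt_of_lt_of_le hθ1 (min_le_right _ _))
      refine ⟨hx, (fun i => x i + θ * (c i - x i)), ⟨?_, ?_⟩, ?_⟩
      · intro i
        have hx1 := hx i
        have hc1 := hc i
        show 0 ≤ x i + θ * (c i - x i)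
        nlinarith [mul_nonneg hθ0 hc1, mul_nonneg (sub_nonneg.2 hθle1) hx1]
      · have hsum : ∑ i, |x i + θ*(c i - x i) - c i| = (1-θ)*D := by
          rw [hDdef, Finset.mul_sum]
          refine Finset.sum_congr rfl fun i _ => ?_
          have he : x i + θ*(c i - x i) - c i = (1-θ)*(x i - c i) := by ring
          rw [he, abs_mul, abs_of_nonneg (by linarith : (0:ℝ) ≤ 1-θ)]
        rw [hsum]
        have h1 : 1 - θ < ρ/D := by
          have he : (D-ρ)/D = 1 - ρ/D := by field_simp
          rw [he] at hθ2; linarith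
        calc (1-θ)*D < (ρ/D)*D := mul_lt_mul_of_pos_right h1 hD0
        _ = ρ := by field_simp
      · have hsum : ∑ i, |x i - (x i + θ*(c i - x i))| = θ*D := by
          rw [hDdef, Finset.mul_sum]
          refine Finset.sum_congr rfl fun i _ => ?_
          have he : x i - (x i + θ*(c i - x i)) = θ*(x i - c i) := by ring
          rw [he, abs_mul, abs_of_nonneg hθ0]
        rw [hsum]
        have hθε : θ < ε/D := lt_of_lt_of_le hθ1 (min_le_left _ _)
        calc θ*D < (ε/D)*D := mul_lt_mul_of_pos_right hθε hD0
        _ = ε := by field_simp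

lemma l1Nbhd_iUnion {m : ℕ} (A : Fin m → Set (Fin n → ℝ)) (h : ℝ) :
    l1Nbhd n (⋃ j, A j) h = ⋃ j, l1Nbhd n (A j) h := by
  ext x
  constructor
  · rintro ⟨hx, y, hy, hxy⟩
    obtain ⟨j, hj⟩ := mem_iUnion.1 hy
    exact mem_iUnion.2 ⟨j, hx, y, hj, hxy⟩
  · intro hx
    obtain ⟨j, hx, y, hy, hxy⟩ := mem_iUnion.1 hx
    exact ⟨hx, y, mem_iUnion.2 ⟨j, hy⟩, hxy⟩

lemma l1Nbhd_ballUnion {m : ℕ} {c : Fin m → Fin n → ℝ} {r : Fin m → ℝ}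
    (hc : ∀ j, c j ∈ posOrthant n ∧ 0 < r j) {t ε : ℝ} (ht : 0 ≤ t) (hε : 0 < ε) :
    l1Nbhd n (⋃ j, oball n (c j) (r j + t)) ε = ⋃ j, oball n (c j) (r j + (t + ε)) := by
  rw [l1Nbhd_iUnion]
  refine iUnion_congr fun j => ?_
  rw [l1Nbhd_oball (hc j).1 (by linarith [(hc j).2]) hε, add_assoc]

lemma expMeasure_le_volume {S : Set (Fin n → ℝ)} (hS : MeasurableSet S) :
    expMeasure n S ≤ volume S := by
  rw [expMeasure, withDensity_apply _ hS, Measure.restrict_restrict hS]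
  calc ∫⁻ x in S ∩ posOrthant n, ENNReal.ofReal (Real.exp (-(∑ i, x i))) ∂volume
      ≤ ∫⁻ _ in S ∩ posOrthant n, 1 ∂volume := by
        refine lintegral_mono_ae ?_
        refine (ae_restrict_iff' (hS.inter (measurableSet_posOrthant n))).2 (ae_of_all _ ?_)
        intro x hx
        have h1 : (0:ℝ) ≤ ∑ i, x i := Finset.sum_nonneg fun i _ => hx.2 i
        have h2 : Real.exp (-(∑ i, x i)) ≤ 1 := by
          rw [← Real.exp_zero]
          exact Real.exp_le_exp.2 (by linarith)
        calc ENNReal.ofReal (Real.exp (-(∑ i, x i))) ≤ ENNReal.ofReal 1 :=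
              ENNReal.ofReal_le_ofReal h2
        _ = 1 := ENNReal.ofReal_one
    _ = volume (S ∩ posOrthant n) := by simp
    _ ≤ volume S := measure_mono inter_subset_left

end IsoAux

namespace IsoAux

lemma antitone_dini {h : ℝ} (hh : 0 < h) (u : ℝ → ℝ)
    (hmono : ∀ a b : ℝ, 0 ≤ a → a ≤ b → b ≤ h → u b ≤ u a)
    (hd : ∀ t, 0 ≤ t → t < h → ∀ c', 0 < c' → c' < 1 →
      ∀ᶠ ε in 𝓝[>] (0:ℝ), t + ε ≤ h ∧ u (t+ε) - u t < -(c' * ε)) :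
    u h ≤ u 0 - h := by
  have H : ∀ c', 0 < c' → c' < 1 → u h ≤ u 0 - c' * h := by
    intro c' hc0 hc1
    set S := {t : ℝ | t ∈ Icc 0 h ∧ u t ≤ u 0 - c' * t} with hSdef
    have h0S : (0:ℝ) ∈ S := ⟨⟨le_rfl, hh.le⟩, by simp⟩
    have hne : S.Nonempty := ⟨0, h0S⟩
    have hbdd : BddAbove S := ⟨h, fun t ht => ht.1.2⟩
    set T := sSup S with hT
    have hT0 : 0 ≤ T := le_csSup hbdd h0S
    have hTh : T ≤ h := csSup_le hne fun t ht => ht.1.2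
    have hTS : T ∈ S := by
      refine ⟨⟨hT0, hTh⟩, ?_⟩
      refine le_of_forall_pos_le_add ?_
      intro ε hε
      have hδ : 0 < ε / c' := by positivity
      obtain ⟨τ, hτS, hτ⟩ := exists_lt_of_lt_csSup hne (by linarith : T - ε/c' < T)
      have hτT : τ ≤ T := le_csSup hbdd hτS
      have h1 : u T ≤ u τ := hmono τ T hτS.1.1 hτT hTh
      have h2 : u τ ≤ u 0 - c' * τ := hτS.2
      have h3 : c' * (T - ε/c') < c' * τ := by
        exact mul_lt_mul_of_pos_left hτ hc0
      have h4 : c' * (ε / c') = ε := by field_simp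
      nlinarith
    rcases eq_or_lt_of_le hTh with hEq | hLt
    · rw [hEq] at hTS
      exact hTS.2
    · exfalso
      have hd' := hd T hT0 hLt c' hc0 hc1
      have hmem : ∀ᶠ ε in 𝓝[>] (0:ℝ), ε ∈ Ioi (0:ℝ) := eventually_mem_nhdsWithin
      obtain ⟨ε, ⟨hεh, hslope⟩, hεpos⟩ := (hd'.and hmem).exists
      have hεpos' : (0:ℝ) < ε := hεpos
      have hTε : T + ε ∈ S := by
        refine ⟨⟨by linarith, hεh⟩, ?_⟩
        have := hTS.2
        nlinarith
      have := le_csSup hbdd hTε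
      linarith
  by_contra hcon
  push_neg at hcon
  have huh : u h ≤ u 0 := hmono 0 h le_rfl hh.le le_rfl
  set q := (u 0 - u h)/h with hq
  have hq1 : q < 1 := by rw [hq, div_lt_one hh]; linarith
  have hmax : max q (1/2) < 1 := max_lt hq1 (by norm_num)
  obtain ⟨c', hc'1, hc'2⟩ := exists_between hmax
  have hc'q : q < c' := lt_of_le_of_lt (le_max_left _ _) hc'1
  have hc'0 : (0:ℝ) < c' := lt_of_lt_of_le (by norm_num) (le_of_lt (lt_of_le_of_lt (le_max_right q (1/2)) hc'1))
  have hH := H c' hc'0 hc'2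
  have h5 : q * h = u 0 - u h := by rw [hq]; field_simp
  nlinarith

lemma half_ne_top : (1:ℝ≥0∞)/2 ≠ ⊤ := by
  simp [ENNReal.div_eq_top]

lemma toReal_half : ((1:ℝ≥0∞)/2).toReal = 1/2 := by
  rw [ENNReal.toReal_div]; norm_num

lemma phi_pos (n : ℕ) {z : ℝ} (hz : 0 < z) :
    0 < z ^ (n-1) * Real.exp (-z) / (Nat.factorial (n-1) : ℝ) := by
  have h1 : (0:ℝ) < (Nat.factorial (n-1) : ℝ) := by positivity
  positivity

lemma phi_cont (n : ℕ) : Continuous (fun z : ℝ => z ^ (n-1) * Real.exp (-z) / (Nat.factorial (n-1) : ℝ)) :=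
  (((continuous_pow _).mul (Real.continuous_exp.comp continuous_neg)).div_const _)

lemma dini_step (n : ℕ) (hn : 1 ≤ n) {g u : ℝ → ℝ} {h t : ℝ}
    (ht0 : 0 ≤ t) (hth : t < h)
    (huanti : ∀ a b : ℝ, 0 ≤ a → a ≤ b → b ≤ h → u b ≤ u a)
    (huspec : ∀ τ, τ ∈ Icc (0:ℝ) h → 0 < u τ ∧ psiFn n (u τ) = g τ)
    (hsl : ∀ b : ℝ, 0 < b →
      b < u t ^ (n-1) * Real.exp (-(u t)) / (Nat.factorial (n-1) : ℝ) →
      ∀ᶠ ε in 𝓝[>] (0:ℝ), t + ε ≤ h ∧ b * ε < g (t+ε) - g t)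
    {c' : ℝ} (hc'0 : 0 < c') (hc'1 : c' < 1) :
    ∀ᶠ ε in 𝓝[>] (0:ℝ), t + ε ≤ h ∧ u (t+ε) - u t < -(c' * ε) := by
  have htmem : t ∈ Icc (0:ℝ) h := ⟨ht0, hth.le⟩
  obtain ⟨hut0, hutψ⟩ := huspec t htmem
  set p := (u t) ^ (n-1) * Real.exp (-(u t)) / (Nat.factorial (n-1) : ℝ) with hpdef
  have hpp : 0 < p := phi_pos n hut0
  set c'' := (1 + c')/2 with hc''def
  have hc''1 : c' < c'' := by rw [hc''def]; linarith
  have hc''2 : c'' < 1 := by rw [hc''def]; linarith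
  have hc''0 : 0 < c'' := by linarith
  have hslope := hsl (c'' * p) (by positivity) (by nlinarith)
  have hposε : ∀ᶠ ε in 𝓝[>] (0:ℝ), (0:ℝ) < ε := eventually_mem_nhdsWithin
  by_cases hrc : ∀ δ : ℝ, 0 < δ → ∃ ε0, 0 < ε0 ∧ ε0 < h - t ∧ u t - δ < u (t + ε0)
  · have hφcont : ContinuousAt
        (fun z : ℝ => z ^ (n-1) * Real.exp (-z) / (Nat.factorial (n-1) : ℝ)) (u t) :=
      (phi_cont n).continuousAt
    have htarget : p < c'' * p / c' := by
      rw [lt_div_iff₀ hc'0]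
      nlinarith
    have hev : ∀ᶠ z in 𝓝 (u t),
        z ^ (n-1) * Real.exp (-z) / (Nat.factorial (n-1) : ℝ) < c'' * p / c' :=
      hφcont.eventually_lt continuousAt_const htarget
    obtain ⟨δ2, hδ2pos, hδ2p⟩ := Metric.eventually_nhds_iff.1 hev
    obtain ⟨ε0, hε00, hε0h, hε0u⟩ := hrc δ2 hδ2pos
    have hεle : ∀ᶠ ε in 𝓝[>] (0:ℝ), ε ≤ ε0 := by
      filter_upwards [Ioo_mem_nhdsGT_of_mem (⟨le_rfl, hε00⟩ : (0:ℝ) ∈ Ico 0 ε0)] with ε hε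
      exact hε.2.le
    filter_upwards [hslope, hposε, hεle] with ε h1 h3 h4
    obtain ⟨hth', hgstep⟩ := h1
    refine ⟨hth', ?_⟩
    have htεmem : t + ε ∈ Icc (0:ℝ) h := ⟨by linarith, hth'⟩
    obtain ⟨hutε0, hutεψ⟩ := huspec (t+ε) htεmem
    have hule : u (t+ε) ≤ u t := huanti t (t+ε) ht0 (by linarith) hth'
    have hlt : u (t+ε) < u t := by
      rcases lt_or_eq_of_le hule with hlt | heq
      · exact hlt
      · exfalso
        rw [heq, hutψ] at hutεψ
        have hppe : 0 < c'' * p * ε := by positivity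
        linarith
    obtain ⟨ξ, hξ, hξeq⟩ := exists_hasDerivAt_eq_slope (psiFn n)
      (fun z => -(cFac n * fE n z)) hlt
      ((psi_contOn n hn).mono (fun z hz => hutε0.le.trans hz.1))
      (fun z hz => psi_hasDerivAt n hn (lt_trans hutε0 hz.1))
    rw [hutψ, hutεψ] at hξeq
    have hba : 0 < u t - u (t+ε) := by linarith
    rw [eq_div_iff hba.ne', neg_mul] at hξeq
    have hφξeq : cFac n * fE n ξ =
        ξ ^ (n-1) * Real.exp (-ξ) / (Nat.factorial (n-1) : ℝ) := by
      rw [cFac, fE]; ring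
    have hξ0 : 0 < ξ := lt_trans hutε0 hξ.1
    have hφξpos : 0 < cFac n * fE n ξ := mul_pos (cFac_pos n) (fE_pos n hξ0)
    have hξnear : |ξ - u t| < δ2 := by
      rw [abs_lt]
      constructor
      · have h5 : u (t + ε0) ≤ u (t+ε) :=
          huanti (t+ε) (t+ε0) (by linarith) (by linarith) (by linarith)
        have := hξ.1
        linarith
      · linarith [hξ.2]
    have hφξlt : c' * (cFac n * fE n ξ) < c'' * p := by
      have h5 : cFac n * fE n ξ < c'' * p / c' := by
        rw [hφξeq]
        exact hδ2p (by rwa [Real.dist_eq])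
      rw [lt_div_iff₀ hc'0] at h5
      linarith
    by_contra hcon
    push_neg at hcon
    have h6 : u t - u (t+ε) ≤ c' * ε := by linarith
    have h7 : g (t+ε) - g t = cFac n * fE n ξ * (u t - u (t+ε)) := by linarith [hξeq]
    have h8 : cFac n * fE n ξ * (u t - u (t+ε)) ≤ cFac n * fE n ξ * (c' * ε) :=
      mul_le_mul_of_nonneg_left h6 hφξpos.le
    have h9 : cFac n * fE n ξ * (c' * ε) = (c' * (cFac n * fE n ξ)) * ε := by ring
    have h10 : (c' * (cFac n * fE n ξ)) * ε < (c'' * p) * ε :=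
      mul_lt_mul_of_pos_right hφξlt h3
    linarith
  · push_neg at hrc
    obtain ⟨δ, hδ0, hδall⟩ := hrc
    have hεsmall : ∀ᶠ ε in 𝓝[>] (0:ℝ), ε < δ/c' := by
      filter_upwards [Ioo_mem_nhdsGT_of_mem
        (⟨le_rfl, by positivity⟩ : (0:ℝ) ∈ Ico 0 (δ/c'))] with ε hε
      exact hε.2
    have hsmall : ∀ᶠ ε in 𝓝[>] (0:ℝ), ε < h - t := by
      filter_upwards [Ioo_mem_nhdsGT_of_mem
        (⟨le_rfl, by linarith⟩ : (0:ℝ) ∈ Ico 0 (h-t))] with ε hε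
      exact hε.2
    filter_upwards [hsmall, hposε, hεsmall] with ε h2 h3 h4
    refine ⟨by linarith, ?_⟩
    have h5 := hδall ε h3 h2
    have h6 : c' * ε < δ := by
      rw [lt_div_iff₀ hc'0] at h4
      linarith [h4]
    linarith

set_option maxHeartbeats 800000 in
lemma R_to_Q (n : ℕ) (hn : 1 ≤ n)
    (hR : ∀ A : Set (Fin n → ℝ), IsFiniteUnionOfL1Balls n A →
        0 < expMeasure n A → expMeasure n A < (1 : ℝ≥0∞) / 2 →
        ∀ s : ℝ, 0 < s → psiFn n s = (expMeasure n A).toReal →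
          ENNReal.ofReal (s ^ (n - 1) * Real.exp (-s) / (Nat.factorial (n - 1) : ℝ))
            ≤ bdryMeasure n A) :
    ∀ B : Set (Fin n → ℝ), IsFiniteUnionOfL1Balls n B →
        ∀ h : ℝ, 0 < h → expMeasure n (l1Nbhd n B h) < (1 : ℝ≥0∞) / 2 →
        ∀ s s' : ℝ, 0 < s → 0 < s' →
          psiFn n s = (expMeasure n B).toReal →
          psiFn n s' = (expMeasure n (l1Nbhd n B h)).toReal →
          s' ≤ s - h := by
  intro B hB h hh hhalf s s' hs hs' hps hps'
  obtain ⟨m, c, r, hcr, hBeq⟩ := hB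
  set Bt : ℝ → Set (Fin n → ℝ) := fun t => ⋃ j, oball n (c j) (r j + t) with hBt
  have hB0 : B = Bt 0 := by
    rw [hBeq]; simp only [hBt, add_zero]; rfl
  have hnb : ∀ t : ℝ, 0 ≤ t → ∀ ε : ℝ, 0 < ε → l1Nbhd n (Bt t) ε = Bt (t + ε) := by
    intro t ht ε hε
    simp only [hBt]
    rw [l1Nbhd_ballUnion hcr ht hε]
  have hBtmono : ∀ {t t' : ℝ}, t ≤ t' → Bt t ⊆ Bt t' := by
    intro t t' htt'
    exact iUnion_mono fun j => oball_mono (by linarith)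
  have hBh : l1Nbhd n B h = Bt h := by rw [hB0, hnb 0 le_rfl h hh, zero_add]
  rw [hBh] at hhalf hps'
  have hmt : ∀ t ∈ Icc (0:ℝ) h, expMeasure n (Bt t) ≤ expMeasure n (Bt h) :=
    fun t ht => measure_mono (hBtmono ht.2)
  have hfin : ∀ t ∈ Icc (0:ℝ) h, expMeasure n (Bt t) ≠ ∞ :=
    fun t ht => (lt_of_le_of_lt (hmt t ht) (lt_of_lt_of_le hhalf le_top)).ne
  set g : ℝ → ℝ := fun t => (expMeasure n (Bt t)).toReal with hg
  have hg0 : psiFn n s = g 0 := by rw [hps, hB0]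
  have hgh : psiFn n s' = g h := hps'
  have hghalf : ∀ t ∈ Icc (0:ℝ) h, g t < 1/2 := by
    intro t ht
    have h1 : expMeasure n (Bt t) < (1:ℝ≥0∞)/2 := lt_of_le_of_lt (hmt t ht) hhalf
    have h2 := (ENNReal.toReal_lt_toReal (hfin t ht) half_ne_top).2 h1
    rwa [toReal_half] at h2
  have hgmono : ∀ a b : ℝ, 0 ≤ a → a ≤ b → b ≤ h → g a ≤ g b := fun a b ha hab hbh =>
    ENNReal.toReal_mono (hfin b ⟨ha.trans hab, hbh⟩) (measure_mono (hBtmono hab))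
  have hgpos : ∀ t ∈ Icc (0:ℝ) h, 0 < g t := by
    intro t ht
    have h1 : 0 < g 0 := by rw [← hg0]; exact psi_pos n hn hs.le
    exact lt_of_lt_of_le h1 (hgmono 0 t le_rfl ht.1 ht.2)
  have hex : ∀ t : ℝ, ∃ z, 0 < z ∧ psiFn n z = g (max 0 (min t h)) := by
    intro t
    have htmem : max 0 (min t h) ∈ Icc (0:ℝ) h :=
      ⟨le_max_left _ _, max_le hh.le (min_le_right _ _)⟩
    exact psi_exists_root n hn (hgpos _ htmem) (lt_trans (hghalf _ htmem) (by norm_num))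
  set u : ℝ → ℝ := fun t => Classical.choose (hex t) with hudef
  have huspec : ∀ t ∈ Icc (0:ℝ) h, 0 < u t ∧ psiFn n (u t) = g t := by
    intro t ht
    have h1 := Classical.choose_spec (hex t)
    have harg : (0 ⊔ t ⊓ h) = t := by rw [min_eq_left ht.2, max_eq_right ht.1]
    exact ⟨h1.1, h1.2.trans (congrArg g harg)⟩
  have hu0spec := huspec 0 ⟨le_rfl, hh.le⟩
  have huhspec := huspec h ⟨hh.le, le_rfl⟩
  have hu0 : u 0 = s :=
    psi_inj n hn hu0spec.1.le hs.le (by rw [hu0spec.2, ← hg0])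
  have huh : u h = s' :=
    psi_inj n hn huhspec.1.le hs'.le (by rw [huhspec.2, ← hgh])
  have huanti : ∀ a b : ℝ, 0 ≤ a → a ≤ b → b ≤ h → u b ≤ u a := by
    intro a b ha hab hbh
    have hua := huspec a ⟨ha, hab.trans hbh⟩
    have hub := huspec b ⟨ha.trans hab, hbh⟩
    refine le_of_psi_le n hn hua.1.le hub.1.le ?_
    rw [hua.2, hub.2]
    exact hgmono a b ha hab hbh
  have hdini : ∀ t, 0 ≤ t → t < h → ∀ c', 0 < c' → c' < 1 →
      ∀ᶠ ε in 𝓝[>] (0:ℝ), t + ε ≤ h ∧ u (t+ε) - u t < -(c' * ε) := by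
    intro t ht0 hth c' hc'0 hc'1
    refine dini_step n hn ht0 hth huanti huspec ?_ hc'0 hc'1
    intro b hb0 hbp
    have htmem : t ∈ Icc (0:ℝ) h := ⟨ht0, hth.le⟩
    obtain ⟨hut0, hutψ⟩ := huspec t htmem
    have hBtball : IsFiniteUnionOfL1Balls n (Bt t) :=
      ⟨m, c, fun j => r j + t, fun j => ⟨(hcr j).1,
        by show 0 < r j + t; linarith [(hcr j).2]⟩, rfl⟩
    have hνpos : 0 < expMeasure n (Bt t) := by
      rcases eq_or_lt_of_le (zero_le : 0 ≤ expMeasure n (Bt t)) with hz | hz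
      · exfalso
        have hzz : g t = 0 := by rw [hg]; simp [← hz]
        linarith [hgpos t htmem]
      · exact hz
    have hνhalf : expMeasure n (Bt t) < 1/2 := lt_of_le_of_lt (hmt t htmem) hhalf
    have hbd := hR (Bt t) hBtball hνpos hνhalf (u t) hut0 hutψ
    have hbd' : ENNReal.ofReal (u t ^ (n-1) * Real.exp (-(u t)) / (Nat.factorial (n-1) : ℝ))
        ≤ Filter.liminf
        (fun ε : ℝ => (expMeasure n (l1Nbhd n (Bt t) ε) - expMeasure n (Bt t)) /
          ENNReal.ofReal ε) (𝓝[>] (0:ℝ)) := hbd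
    have hstep : ∀ᶠ ε in 𝓝[>] (0:ℝ), ENNReal.ofReal b <
        (expMeasure n (l1Nbhd n (Bt t) ε) - expMeasure n (Bt t)) / ENNReal.ofReal ε :=
      eventually_lt_of_lt_liminf (lt_of_lt_of_le
        ((ENNReal.ofReal_lt_ofReal_iff (phi_pos n hut0)).2 hbp) hbd')
    have hsmall : ∀ᶠ ε in 𝓝[>] (0:ℝ), ε < h - t := by
      filter_upwards [Ioo_mem_nhdsGT_of_mem (⟨le_rfl, by linarith⟩ : (0:ℝ) ∈ Ico 0 (h-t))]
        with ε hε
      exact hε.2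
    have hposε : ∀ᶠ ε in 𝓝[>] (0:ℝ), (0:ℝ) < ε := eventually_mem_nhdsWithin
    filter_upwards [hstep, hsmall, hposε] with ε h1 h2 h3
    have hth' : t + ε ≤ h := by linarith
    refine ⟨hth', ?_⟩
    rw [hnb t ht0 ε h3] at h1
    have hεne : ENNReal.ofReal ε ≠ 0 := (ENNReal.ofReal_pos.2 h3).ne'
    rw [ENNReal.lt_div_iff_mul_lt (Or.inl hεne) (Or.inl ENNReal.ofReal_ne_top)] at h1
    rw [← ENNReal.ofReal_mul hb0.le] at h1
    have hfin1 : expMeasure n (Bt t) ≠ ∞ := hfin t htmem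
    have hfin2 : expMeasure n (Bt (t+ε)) ≠ ∞ := hfin (t+ε) ⟨by linarith, hth'⟩
    rw [lt_tsub_iff_right] at h1
    have hane : ENNReal.ofReal (b*ε) + expMeasure n (Bt t) ≠ ⊤ :=
      ENNReal.add_ne_top.2 ⟨ENNReal.ofReal_ne_top, hfin1⟩
    have h4 := (ENNReal.toReal_lt_toReal hane hfin2).2 h1
    rw [ENNReal.toReal_add ENNReal.ofReal_ne_top hfin1,
      ENNReal.toReal_ofReal (by positivity)] at h4
    have hgt : g t = (expMeasure n (Bt t)).toReal := rfl
    have hgt2 : g (t+ε) = (expMeasure n (Bt (t+ε))).toReal := rfl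
    rw [← hgt, ← hgt2] at h4
    linarith
  have hfinal := antitone_dini hh u huanti hdini
  rw [hu0, huh] at hfinal
  exact hfinal

end IsoAux

namespace IsoAux

lemma half_ofReal : ENNReal.ofReal (1/2 : ℝ) = (1:ℝ≥0∞)/2 := by
  rw [ENNReal.ofReal_div_of_pos (by norm_num)]
  norm_num

lemma exists_compact_sub (n : ℕ) {A : Set (Fin n → ℝ)} (hA : MeasurableSet A)
    (hAsub : A ⊆ posOrthant n) (hfin : expMeasure n A ≠ ∞) {e : ℝ≥0∞} (he : e ≠ 0) :
    ∃ K, K ⊆ A ∧ IsCompact K ∧ expMeasure n A < expMeasure n K + e := by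
  classical
  by_cases hetop : e = ⊤
  · refine ⟨∅, empty_subset _, isCompact_empty, ?_⟩
    rw [hetop]
    have h1 : expMeasure n (∅ : Set (Fin n → ℝ)) + ⊤ = ⊤ := by simp
    rw [h1]
    exact lt_top_iff_ne_top.2 hfin
  by_cases hA0 : expMeasure n A = 0
  · refine ⟨∅, empty_subset _, isCompact_empty, ?_⟩
    rw [hA0]
    have h1 : expMeasure n (∅ : Set (Fin n → ℝ)) + e = e := by simp
    rw [h1]
    exact pos_iff_ne_zero.2 he
  have he2 : e/2 ≠ 0 := by
    simp [ENNReal.div_eq_zero_iff, he]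
  have he2top : e/2 ≠ ⊤ := by
    simp [ENNReal.div_eq_top, hetop]
  set box : ℕ → Set (Fin n → ℝ) := fun M => Icc 0 (fun _ => (M:ℝ)) with hbox
  have hboxmeas : ∀ M, MeasurableSet (box M) := fun M => measurableSet_Icc
  have hmono : Monotone (fun M => A ∩ box M) := by
    intro a b hab
    refine inter_subset_inter_right _ (Icc_subset_Icc le_rfl ?_)
    intro i
    show (a:ℝ) ≤ b
    exact_mod_cast hab
  have hAM : (⋃ M, A ∩ box M) = A := by
    ext x
    constructor
    · intro hx
      obtain ⟨M, hM, -⟩ := mem_iUnion.1 hx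
      exact hM
    · intro hx
      obtain ⟨M, hM⟩ := exists_nat_ge (∑ i, x i)
      refine mem_iUnion.2 ⟨M, hx, ?_, ?_⟩
      · intro i; exact hAsub hx i
      · intro i
        have h1 : x i ≤ ∑ j, x j :=
          Finset.single_le_sum (fun j _ => hAsub hx j) (Finset.mem_univ i)
        exact le_trans h1 hM
  have hsup : Tendsto (fun M : ℕ => expMeasure n (A ∩ box M)) atTop (𝓝 (expMeasure n A)) := by
    have := tendsto_measure_iUnion_atTop (μ := expMeasure n) hmono
    rwa [hAM] at this
  obtain ⟨M, hM'⟩ : ∃ M : ℕ, expMeasure n A < expMeasure n (A ∩ box M) + e/2 := by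
    rcases le_or_gt (expMeasure n A) (e/2) with hcase | hcase
    · obtain ⟨M, hM⟩ := (hsup.eventually_const_lt (pos_iff_ne_zero.2 hA0)).exists
      refine ⟨M, ?_⟩
      calc expMeasure n A ≤ e/2 := hcase
      _ < e/2 + expMeasure n (A ∩ box M) := ENNReal.lt_add_right he2top hM.ne'
      _ = expMeasure n (A ∩ box M) + e/2 := add_comm _ _
    · obtain ⟨M, hM⟩ := (hsup.eventually_const_lt (ENNReal.sub_lt_self hfin hA0 he2)).exists
      exact ⟨M, (ENNReal.sub_lt_iff_lt_right he2top hcase.le).1 hM⟩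
  have hvolbox : volume (box M) ≠ ∞ := by
    rw [hbox]
    simp only []
    rw [Real.volume_Icc_pi]
    exact (ENNReal.prod_lt_top (fun i _ => ENNReal.ofReal_lt_top)).ne
  have hvolfin : volume (A ∩ box M) ≠ ∞ :=
    (lt_of_le_of_lt (measure_mono inter_subset_right) (lt_top_iff_ne_top.2 hvolbox)).ne
  obtain ⟨K, hKsub, hKcomp, hKvol⟩ :=
    (hA.inter (hboxmeas M)).exists_isCompact_lt_add hvolfin he2
  refine ⟨K, hKsub.trans inter_subset_left, hKcomp, ?_⟩
  have hKvolfin : volume K ≠ ∞ :=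
    (lt_of_le_of_lt (measure_mono hKsub) (lt_top_iff_ne_top.2 hvolfin)).ne
  have hdiff : volume ((A ∩ box M) \ K) < e/2 := by
    rw [measure_diff hKsub hKcomp.measurableSet.nullMeasurableSet hKvolfin]
    rw [ENNReal.sub_lt_iff_lt_right hKvolfin (measure_mono hKsub)]
    rwa [add_comm] at hKvol
  have hν1 : expMeasure n (A ∩ box M) ≤ expMeasure n K + expMeasure n ((A ∩ box M) \ K) := by
    conv_lhs => rw [← union_diff_cancel hKsub]
    exact measure_union_le _ _
  have hν2 : expMeasure n ((A ∩ box M) \ K) ≤ volume ((A ∩ box M) \ K) :=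
    expMeasure_le_volume ((hA.inter (hboxmeas M)).diff hKcomp.measurableSet)
  calc expMeasure n A < expMeasure n (A ∩ box M) + e/2 := hM'
  _ ≤ (expMeasure n K + expMeasure n ((A ∩ box M) \ K)) + e/2 := add_le_add_left hν1 _
  _ ≤ (expMeasure n K + e/2) + e/2 :=
      add_le_add_left (add_le_add_right (hν2.trans hdiff.le) _) _
  _ = expMeasure n K + e := by rw [add_assoc, ENNReal.add_halves]

set_option maxHeartbeats 800000 in
lemma nbhd_lower (n : ℕ) (hn : 1 ≤ n)
    (hQ : ∀ B : Set (Fin n → ℝ), IsFiniteUnionOfL1Balls n B →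
        ∀ h : ℝ, 0 < h → expMeasure n (l1Nbhd n B h) < (1 : ℝ≥0∞) / 2 →
        ∀ s s' : ℝ, 0 < s → 0 < s' →
          psiFn n s = (expMeasure n B).toReal →
          psiFn n s' = (expMeasure n (l1Nbhd n B h)).toReal →
          s' ≤ s - h)
    {A : Set (Fin n → ℝ)} (hAmeas : MeasurableSet A) (hAsub : A ⊆ posOrthant n)
    {s : ℝ} (hs : 0 < s) (hψs : psiFn n s = (expMeasure n A).toReal)
    (hAfin : expMeasure n A ≠ ∞)
    {h : ℝ} (hh : 0 < h) (hhs : h < s)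
    (hhalf : expMeasure n (l1Nbhd n A h) < (1:ℝ≥0∞)/2)
    {η δ : ℝ} (hη : 0 < η) (hδ0 : 0 < δ) (hδh : δ < h) :
    psiFn n (s + η + δ - h) ≤ (expMeasure n (l1Nbhd n A h)).toReal := by
  classical
  set ε' := psiFn n s - psiFn n (s + η) with hε'
  have hε'pos : 0 < ε' := sub_pos.2 (psi_strictAnti n hn (mem_Ici.2 hs.le)
    (mem_Ici.2 (by linarith)) (by linarith))
  obtain ⟨K, hKA, hKcomp, hKν⟩ := exists_compact_sub n hAmeas hAsub hAfin
    (e := ENNReal.ofReal ε') (ENNReal.ofReal_pos.2 hε'pos).ne'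
  have hνA : expMeasure n A = ENNReal.ofReal (psiFn n s) := by
    rw [hψs, ENNReal.ofReal_toReal hAfin]
  have hKlow : ENNReal.ofReal (psiFn n (s+η)) ≤ expMeasure n K := by
    have h1 : expMeasure n A ≤ expMeasure n K + ENNReal.ofReal ε' := hKν.le
    rw [hνA] at h1
    have h2 : ENNReal.ofReal (psiFn n s) - ENNReal.ofReal ε' ≤ expMeasure n K :=
      tsub_le_iff_right.2 h1
    rw [← ENNReal.ofReal_sub _ hε'pos.le] at h2
    rw [hε'] at h2
    rw [sub_sub_cancel] at h2
    exact h2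
  -- finite subcover
  have hcover : K ⊆ ⋃ y : K, {x : Fin n → ℝ | ∑ i, |x i - (y:Fin n → ℝ) i| < δ} := by
    intro x hx
    exact mem_iUnion.2 ⟨⟨x, hx⟩, by simp [hδ0]⟩
  obtain ⟨tset, htset⟩ := hKcomp.elim_finite_subcover
    (fun y : K => {x : Fin n → ℝ | ∑ i, |x i - (y:Fin n → ℝ) i| < δ})
    (fun y => isOpen_lt (contSum _) continuous_const) hcover
  set m := tset.card with hm
  set eqv := tset.equivFin with heqv
  set cc : Fin m → Fin n → ℝ := fun j => ((eqv.symm j).1 : Fin n → ℝ) with hcc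
  set B : Set (Fin n → ℝ) := ⋃ j : Fin m, oball n (cc j) δ with hBdef
  have hccK : ∀ j, (cc j : Fin n → ℝ) ∈ K := fun j => (eqv.symm j).1.2
  have hccA : ∀ j, (cc j : Fin n → ℝ) ∈ A := fun j => hKA (hccK j)
  have hBisU : IsFiniteUnionOfL1Balls n B :=
    ⟨m, cc, fun _ => δ, fun j => ⟨hAsub (hccA j), hδ0⟩, rfl⟩
  have hKB : K ⊆ B := by
    intro x hx
    obtain ⟨y, hyt, hyx⟩ := mem_iUnion₂.1 (htset hx)
    refine mem_iUnion.2 ⟨eqv ⟨y, hyt⟩, hAsub (hKA hx), ?_⟩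
    have he : cc (eqv ⟨y, hyt⟩) = (y : Fin n → ℝ) := by
      rw [hcc]
      simp
    rw [he]
    exact hyx
  have hBA : B ⊆ l1Nbhd n A δ := by
    intro x hx
    obtain ⟨j, hj⟩ := mem_iUnion.1 hx
    exact ⟨hj.1, cc j, hccA j, hj.2⟩
  have hBsub : B ⊆ posOrthant n := iUnion_subset fun j => oball_subset_orth _ _
  have hBh' : l1Nbhd n B (h - δ) ⊆ l1Nbhd n A h := by
    intro x hx
    have h1 := l1Nbhd_tri (n := n) A δ (h-δ) (l1Nbhd_mono_left hBA (h-δ) hx)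
    rwa [show δ + (h-δ) = h by ring] at h1
  have hνAh_fin : expMeasure n (l1Nbhd n A h) ≠ ∞ := (lt_of_lt_of_le hhalf le_top).ne
  have hνBh_le : expMeasure n (l1Nbhd n B (h-δ)) ≤ expMeasure n (l1Nbhd n A h) :=
    measure_mono hBh'
  have hνBh_half : expMeasure n (l1Nbhd n B (h-δ)) < (1:ℝ≥0∞)/2 :=
    lt_of_le_of_lt hνBh_le hhalf
  have hνBh_fin : expMeasure n (l1Nbhd n B (h-δ)) ≠ ∞ :=
    (lt_of_lt_of_le hνBh_half le_top).ne
  have hνB_le : expMeasure n B ≤ expMeasure n (l1Nbhd n B (h-δ)) :=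
    measure_mono (subset_l1Nbhd hBsub (by linarith))
  have hνB_fin : expMeasure n B ≠ ∞ := (lt_of_le_of_lt hνB_le
    (lt_top_iff_ne_top.2 hνBh_fin)).ne
  set v0 := (expMeasure n B).toReal with hv0
  set v1 := (expMeasure n (l1Nbhd n B (h-δ))).toReal with hv1
  have hv0low : psiFn n (s+η) ≤ v0 := by
    have h1 := le_trans hKlow (measure_mono hKB)
    exact (ENNReal.ofReal_le_iff_le_toReal hνB_fin).1 h1
  have hv0pos : 0 < v0 := lt_of_lt_of_le (psi_pos n hn (by linarith)) hv0low
  have hv01 : v0 ≤ v1 := ENNReal.toReal_mono hνBh_fin hνB_le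
  have hv1half : v1 < 1/2 := by
    have h1 := (ENNReal.toReal_lt_toReal hνBh_fin half_ne_top).2 hνBh_half
    rwa [toReal_half] at h1
  obtain ⟨sB, hsB0, hsBv⟩ := psi_exists_root n hn hv0pos (by linarith)
  obtain ⟨s2, hs20, hs2v⟩ := psi_exists_root n hn (v := v1) (by linarith) (by linarith)
  have hQ' := hQ B hBisU (h-δ) (by linarith) hνBh_half sB s2 hsB0 hs20 hsBv hs2v
  have hsBle : sB ≤ s + η := by
    refine le_of_psi_le n hn (by linarith : (0:ℝ) ≤ s + η) hsB0.le ?_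
    rw [hsBv]
    exact hv0low
  have hchain1 : psiFn n (sB - (h - δ)) ≤ psiFn n s2 :=
    psi_anti n hn hs20.le (by linarith) hQ'
  have hchain2 : psiFn n (s + η + δ - h) ≤ psiFn n (sB - (h-δ)) :=
    psi_anti n hn (by linarith) (by linarith) (by linarith)
  have hv1le : v1 ≤ (expMeasure n (l1Nbhd n A h)).toReal :=
    ENNReal.toReal_mono hνAh_fin hνBh_le
  rw [hs2v] at hchain1
  linarith

end IsoAux

namespace IsoAux

set_option maxHeartbeats 800000 in
lemma Q_to_P (n : ℕ) (hn : 1 ≤ n)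
    (hQ : ∀ B : Set (Fin n → ℝ), IsFiniteUnionOfL1Balls n B →
        ∀ h : ℝ, 0 < h → expMeasure n (l1Nbhd n B h) < (1 : ℝ≥0∞) / 2 →
        ∀ s s' : ℝ, 0 < s → 0 < s' →
          psiFn n s = (expMeasure n B).toReal →
          psiFn n s' = (expMeasure n (l1Nbhd n B h)).toReal →
          s' ≤ s - h) :
    ∀ A : Set (Fin n → ℝ), MeasurableSet A → A ⊆ posOrthant n →
        0 < expMeasure n A → expMeasure n A < (1 : ℝ≥0∞) / 2 →
        ∀ s : ℝ, 0 < s → psiFn n s = (expMeasure n A).toReal →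
          ENNReal.ofReal (s ^ (n - 1) * Real.exp (-s) / (Nat.factorial (n - 1) : ℝ))
            ≤ bdryMeasure n A := by
  intro A hAmeas hAsub hApos hAhalf s hs hψs
  have hAfin : expMeasure n A ≠ ∞ := (lt_of_lt_of_le hAhalf le_top).ne
  have hψshalf : psiFn n s < 1/2 := by
    rw [hψs]
    have h1 := (ENNReal.toReal_lt_toReal hAfin half_ne_top).2 hAhalf
    rwa [toReal_half] at h1
  have hνA : expMeasure n A = ENNReal.ofReal (psiFn n s) := by
    rw [hψs, ENNReal.ofReal_toReal hAfin]
  -- continuity of h ↦ ψ(s−h) at 0⁺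
  have hbase : Tendsto (fun h : ℝ => s - h) (𝓝[>] (0:ℝ)) (𝓝 s) := by
    have h1 : Tendsto (fun h : ℝ => s - h) (𝓝 (0:ℝ)) (𝓝 (s - 0)) :=
      (continuous_const.sub continuous_id).tendsto 0
    rw [sub_zero] at h1
    exact h1.mono_left nhdsWithin_le_nhds
  have hcont : Tendsto (fun h : ℝ => psiFn n (s - h)) (𝓝[>] (0:ℝ)) (𝓝 (psiFn n s)) := by
    have h1 : Tendsto (fun h : ℝ => s - h) (𝓝[>] (0:ℝ)) (𝓝[Ici 0] s) := by
      refine tendsto_nhdsWithin_of_tendsto_nhds_of_eventually_within _ hbase ?_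
      filter_upwards [Ioo_mem_nhdsGT_of_mem (⟨le_rfl, hs⟩ : (0:ℝ) ∈ Ico 0 s)] with x hx
      exact mem_Ici.2 (by linarith [hx.2])
    exact ((psi_contOn n hn) s (mem_Ici.2 hs.le)).tendsto.comp h1
  -- derivative limit
  have hderiv : Tendsto (fun h : ℝ => (psiFn n (s - h) - psiFn n s)/h) (𝓝[>] (0:ℝ))
      (𝓝 (s ^ (n-1) * Real.exp (-s) / (Nat.factorial (n-1) : ℝ))) := by
    have hd := psi_hasDerivAt n hn hs
    rw [hasDerivAt_iff_tendsto_slope] at hd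
    have hmap : Tendsto (fun h : ℝ => s - h) (𝓝[>] (0:ℝ)) (𝓝[≠] s) := by
      refine tendsto_nhdsWithin_of_tendsto_nhds_of_eventually_within _ hbase ?_
      filter_upwards [eventually_mem_nhdsWithin] with x hx
      have hx' : (0:ℝ) < x := hx
      simp only [mem_compl_iff, mem_singleton_iff]
      intro hcon
      have : x = 0 := by linarith [sub_eq_self.1 hcon]
      linarith
    have hcomp := hd.comp hmap
    have hneg := hcomp.neg
    rw [neg_neg] at hneg
    have heq : ∀ h : ℝ, -((slope (psiFn n) s ∘ fun h : ℝ => s - h) h) =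
        (psiFn n (s-h) - psiFn n s)/h := by
      intro h
      show -(slope (psiFn n) s (s - h)) = _
      rw [slope_def_field, show s - h - s = -h by ring, div_neg, neg_neg]
    have hfinal := hneg.congr heq
    have hval : cFac n * fE n s = s ^ (n-1) * Real.exp (-s) / (Nat.factorial (n-1) : ℝ) := by
      rw [cFac, fE]; ring
    rwa [hval] at hfinal
  -- main pointwise bound
  have hC1 : ∀ᶠ h in 𝓝[>] (0:ℝ),
      ENNReal.ofReal (psiFn n (s - h)) ≤ expMeasure n (l1Nbhd n A h) := by
    have hhalfev : ∀ᶠ h in 𝓝[>] (0:ℝ), psiFn n (s - h) < 1/2 :=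
      hcont.eventually_lt_const hψshalf
    filter_upwards [hhalfev, Ioo_mem_nhdsGT_of_mem (⟨le_rfl, hs⟩ : (0:ℝ) ∈ Ico 0 s)]
      with h hhhalf hhmem
    rcases le_or_gt ((1:ℝ≥0∞)/2) (expMeasure n (l1Nbhd n A h)) with hbig | hsmall
    · refine le_trans ?_ hbig
      calc ENNReal.ofReal (psiFn n (s-h)) ≤ ENNReal.ofReal (1/2) :=
            ENNReal.ofReal_le_ofReal hhhalf.le
      _ = (1:ℝ≥0∞)/2 := half_ofReal
    · have hseq : ∀ k : ℕ, (1:ℝ) ≤ k → (1:ℝ)/k < h →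
          ENNReal.ofReal (psiFn n (s - h + 2/k)) ≤ expMeasure n (l1Nbhd n A h) := by
        intro k hk hkh
        have hk0 : (0:ℝ) < 1/k := by positivity
        have hstep := nbhd_lower n hn hQ hAmeas hAsub hs hψs hAfin hhmem.1 hhmem.2 hsmall
          (η := 1/k) (δ := 1/k) hk0 hk0 hkh
        rw [ENNReal.ofReal_le_iff_le_toReal ((lt_of_lt_of_le hsmall le_top).ne)]
        calc psiFn n (s - h + 2/k) = psiFn n (s + 1/k + 1/k - h) := by ring_nf
        _ ≤ _ := hstep
      have harg : Tendsto (fun k : ℕ => s - h + 2/k) atTop (𝓝[Ici 0] (s-h)) := by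
        refine tendsto_nhdsWithin_of_tendsto_nhds_of_eventually_within _ ?_ ?_
        · have h1 : Tendsto (fun k : ℕ => (2:ℝ)/k) atTop (𝓝 0) :=
            tendsto_const_div_atTop_nhds_zero_nat 2
          have h2 := tendsto_const_nhds (x := s - h) (f := atTop (α := ℕ)) |>.add h1
          rwa [add_zero] at h2
        · filter_upwards with k
          have h1 : (0:ℝ) ≤ 2/k := by positivity
          exact mem_Ici.2 (by linarith [hhmem.2])
      have htend : Tendsto (fun k : ℕ => ENNReal.ofReal (psiFn n (s - h + 2/k))) atTop
          (𝓝 (ENNReal.ofReal (psiFn n (s-h)))) :=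
        (ENNReal.continuous_ofReal.tendsto _).comp
          (((psi_contOn n hn) (s-h) (mem_Ici.2 (by linarith [hhmem.2]))).tendsto.comp harg)
      refine le_of_tendsto htend ?_
      have hk1 : ∀ᶠ k : ℕ in atTop, (1:ℝ) ≤ k := by
        filter_upwards [eventually_ge_atTop 1] with k hk
        exact_mod_cast hk
      have hk2 : ∀ᶠ k : ℕ in atTop, (1:ℝ)/k < h :=
        tendsto_one_div_atTop_nhds_zero_nat.eventually_lt_const hhmem.1
      filter_upwards [hk1, hk2] with k h1 h2
      exact hseq k h1 h2
  -- conclude via liminf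
  have hEineq : ∀ᶠ h in 𝓝[>] (0:ℝ),
      ENNReal.ofReal ((psiFn n (s-h) - psiFn n s)/h) ≤
        (expMeasure n (l1Nbhd n A h) - expMeasure n A) / ENNReal.ofReal h := by
    filter_upwards [hC1, Ioo_mem_nhdsGT_of_mem (⟨le_rfl, hs⟩ : (0:ℝ) ∈ Ico 0 s)]
      with h h1 h3
    have hψmono : psiFn n s ≤ psiFn n (s - h) :=
      psi_anti n hn (by linarith [h3.2]) hs.le (by linarith [h3.1])
    rw [ENNReal.ofReal_div_of_pos h3.1]
    refine ENNReal.div_le_div_right ?_ _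
    rw [ENNReal.ofReal_sub _ (psi_pos n hn hs.le).le, hνA]
    exact tsub_le_tsub_right h1 _
  have hliminf_E : Filter.liminf
      (fun h : ℝ => ENNReal.ofReal ((psiFn n (s-h) - psiFn n s)/h)) (𝓝[>] (0:ℝ)) =
      ENNReal.ofReal (s ^ (n-1) * Real.exp (-s) / (Nat.factorial (n-1) : ℝ)) :=
    Tendsto.liminf_eq ((ENNReal.continuous_ofReal.tendsto _).comp hderiv)
  have hbd : bdryMeasure n A = Filter.liminf
      (fun h : ℝ => (expMeasure n (l1Nbhd n A h) - expMeasure n A) / ENNReal.ofReal h)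
      (𝓝[>] (0:ℝ)) := rfl
  rw [hbd, ← hliminf_E]
  exact liminf_le_liminf hEineq

lemma P_to_R (n : ℕ)
    (hP : ∀ A : Set (Fin n → ℝ), MeasurableSet A → A ⊆ posOrthant n →
        0 < expMeasure n A → expMeasure n A < (1 : ℝ≥0∞) / 2 →
        ∀ s : ℝ, 0 < s → psiFn n s = (expMeasure n A).toReal →
          ENNReal.ofReal (s ^ (n - 1) * Real.exp (-s) / (Nat.factorial (n - 1) : ℝ))
            ≤ bdryMeasure n A) :
    ∀ A : Set (Fin n → ℝ), IsFiniteUnionOfL1Balls n A →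
        0 < expMeasure n A → expMeasure n A < (1 : ℝ≥0∞) / 2 →
        ∀ s : ℝ, 0 < s → psiFn n s = (expMeasure n A).toReal →
          ENNReal.ofReal (s ^ (n - 1) * Real.exp (-s) / (Nat.factorial (n - 1) : ℝ))
            ≤ bdryMeasure n A := by
  intro A hA
  obtain ⟨m, c, r, hcr, hAeq⟩ := hA
  have hmeas : MeasurableSet A := by
    rw [hAeq]
    exact MeasurableSet.iUnion fun j => oball_measurable (c j) (r j)
  have hsub : A ⊆ posOrthant n := by
    rw [hAeq]
    exact iUnion_subset fun j => oball_subset_orth _ _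
  exact hP A hmeas hsub

end IsoAux


/-- The isoperimetric inequality for sets of measure less than `1/2` is equivalent to the
neighbourhood inequality `ψ⁻¹(ν(B^h)) ≤ ψ⁻¹(ν(B)) − h` for finite unions of `ℓ₁`-balls,
which in turn is equivalent to the isoperimetric inequality restricted to finite unions
of `ℓ₁`-balls. -/
theorem isoperimetry_iff_nbhd_small (n : ℕ) (hn : 1 ≤ n) :
    ((∀ A : Set (Fin n → ℝ), MeasurableSet A → A ⊆ posOrthant n →
        0 < expMeasure n A → expMeasure n A < (1 : ℝ≥0∞) / 2 →
        ∀ s : ℝ, 0 < s → psiFn n s = (expMeasure n A).toReal →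
          ENNReal.ofReal (s ^ (n - 1) * Real.exp (-s) / (Nat.factorial (n - 1) : ℝ))
            ≤ bdryMeasure n A)
      ↔
      (∀ B : Set (Fin n → ℝ), IsFiniteUnionOfL1Balls n B →
        ∀ h : ℝ, 0 < h → expMeasure n (l1Nbhd n B h) < (1 : ℝ≥0∞) / 2 →
        ∀ s s' : ℝ, 0 < s → 0 < s' →
          psiFn n s = (expMeasure n B).toReal →
          psiFn n s' = (expMeasure n (l1Nbhd n B h)).toReal →
          s' ≤ s - h))
    ∧
    ((∀ B : Set (Fin n → ℝ), IsFiniteUnionOfL1Balls n B →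
        ∀ h : ℝ, 0 < h → expMeasure n (l1Nbhd n B h) < (1 : ℝ≥0∞) / 2 →
        ∀ s s' : ℝ, 0 < s → 0 < s' →
          psiFn n s = (expMeasure n B).toReal →
          psiFn n s' = (expMeasure n (l1Nbhd n B h)).toReal →
          s' ≤ s - h)
      ↔
      (∀ A : Set (Fin n → ℝ), IsFiniteUnionOfL1Balls n A →
        0 < expMeasure n A → expMeasure n A < (1 : ℝ≥0∞) / 2 →
        ∀ s : ℝ, 0 < s → psiFn n s = (expMeasure n A).toReal →
          ENNReal.ofReal (s ^ (n - 1) * Real.exp (-s) / (Nat.factorial (n - 1) : ℝ))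
            ≤ bdryMeasure n A)) := by
  refine ⟨⟨fun hP => IsoAux.R_to_Q n hn (IsoAux.P_to_R n hP),
    fun hQ => IsoAux.Q_to_P n hn hQ⟩,
    ⟨fun hQ => IsoAux.P_to_R n (IsoAux.Q_to_P n hn hQ),
    fun hR => IsoAux.R_to_Q n hn hR⟩⟩
end

section
/- Let n ≥ 1 be an integer and let x, y ≥ 0 be real numbers satisfying ∫₀ˣ e^{-t} t^{n−1} dt = ∫_y^∞ e^{-t} t^{n−1} dt ≤ (1/2)·∫₀^∞ e^{-t} t^{n−1} dt = (n−1)!/2. Then e^{-x} x^{n−1} ≥ e^{-y} y^{n−1}. (In isoperimetric terms: when the simplex and the complement of a simplex have the same measure, at most 1/2, the complement has the smaller or equal boundary measure.) -/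
open MeasureTheory Real Set Filter Topology


/-- Antiderivative bookkeeping: `gAux m t = e^{-t} * (t^m + m t^{m-1} + m(m-1)t^{m-2} + ... + m!)`,
so that `(gAux m)' = - e^{-t} t^m`. -/
noncomputable def gAux : ℕ → ℝ → ℝ
  | 0, t => Real.exp (-t)
  | (m+1), t => Real.exp (-t) * t ^ (m+1) + (m+1) * gAux m t

lemma expNeg_hasDerivAt (t : ℝ) : HasDerivAt (fun s : ℝ => Real.exp (-s)) (-Real.exp (-t)) t := by
  simpa using (hasDerivAt_neg t).exp

lemma fmono_hasDerivAt (m : ℕ) (t : ℝ) :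
    HasDerivAt (fun s : ℝ => Real.exp (-s) * s ^ m)
      (Real.exp (-t) * (m * t ^ (m-1)) - Real.exp (-t) * t ^ m) t := by
  have := (expNeg_hasDerivAt t).mul (hasDerivAt_pow m t)
  exact this.congr_deriv (by ring)

lemma gAux_hasDerivAt (m : ℕ) (t : ℝ) :
    HasDerivAt (gAux m) (-(Real.exp (-t) * t ^ m)) t := by
  induction m generalizing t with
  | zero =>
    have h : gAux 0 = fun s => Real.exp (-s) := funext fun s => rfl
    rw [h, pow_zero, mul_one]; exact expNeg_hasDerivAt t
  | succ m ih =>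
      have h1 := (fmono_hasDerivAt (m+1) t).add ((ih t).const_mul ((m:ℝ)+1))
      have : HasDerivAt (gAux (m+1))
          (Real.exp (-t) * ((m+1) * t ^ m) - Real.exp (-t) * t ^ (m+1)
            + ((m:ℝ)+1) * -(Real.exp (-t) * t ^ m)) t := by
        simpa [gAux, Pi.add_def] using h1
      convert this using 1
      ring

lemma gAux_zero (m : ℕ) : gAux m 0 = m.factorial := by
  induction m with
  | zero => simp [gAux]
  | succ m ih => simp [gAux, ih, Nat.factorial_succ]

lemma gAux_pos (m : ℕ) {t : ℝ} (ht : 0 ≤ t) : 0 < gAux m t := by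
  induction m with
  | zero => exact Real.exp_pos _
  | succ m ih =>
      have h1 : 0 ≤ Real.exp (-t) * t ^ (m+1) := by positivity
      have h2 : (0:ℝ) < ((m:ℝ)+1) * gAux m t := by positivity
      simpa [gAux] using add_pos_of_nonneg_of_pos h1 (by push_cast at h2 ⊢; linarith)

lemma gAux_tendsto (m : ℕ) : Tendsto (gAux m) atTop (𝓝 0) := by
  induction m with
  | zero =>
      exact (Real.tendsto_exp_atBot.comp tendsto_neg_atTop_atBot)
  | succ m ih =>
      have h1 : Tendsto (fun t : ℝ => Real.exp (-t) * t ^ (m+1)) atTop (𝓝 0) := by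
        simpa [mul_comm] using Real.tendsto_pow_mul_exp_neg_atTop_nhds_zero (m+1)
      have := h1.add (ih.const_mul ((m:ℝ)+1))
      simpa [gAux] using this

lemma integral_interval (m : ℕ) (x : ℝ) :
    ∫ t in (0:ℝ)..x, Real.exp (-t) * t ^ m = (m.factorial : ℝ) - gAux m x := by
  have h : ∀ t ∈ Set.uIcc (0:ℝ) x, HasDerivAt (fun s => -(gAux m s)) (Real.exp (-t) * t ^ m) t :=
    fun t _ => by have := (gAux_hasDerivAt m t).neg; rw [neg_neg] at this; exact this
  have hint : IntervalIntegrable (fun t => Real.exp (-t) * t ^ m) volume 0 x := by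
    apply Continuous.intervalIntegrable
    continuity
  have := intervalIntegral.integral_eq_sub_of_hasDerivAt h hint
  rw [this, gAux_zero]
  ring

lemma integral_Ioi (m : ℕ) {y : ℝ} (hy : 0 ≤ y) :
    ∫ t in Set.Ioi y, Real.exp (-t) * t ^ m = gAux m y := by
  have h := integral_Ioi_of_hasDerivAt_of_nonneg'
    (g := fun s => -(gAux m s)) (g' := fun t => Real.exp (-t) * t ^ m) (a := y) (l := 0)
    (fun t _ => by have := (gAux_hasDerivAt m t).neg; rw [neg_neg] at this; exact this)
    (fun t ht => mul_nonneg (Real.exp_pos _).le (pow_nonneg (le_trans hy (le_of_lt ht)) m))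
    (by simpa using (gAux_tendsto m).neg)
  rw [h]; ring

lemma gAux_strictAnti (m : ℕ) : StrictAntiOn (gAux m) (Set.Ici 0) := by
  apply strictAntiOn_of_deriv_neg (convex_Ici 0)
  · exact fun t _ => ((gAux_hasDerivAt m t).continuousAt).continuousWithinAt
  · intro t ht
    rw [interior_Ici] at ht
    rw [(gAux_hasDerivAt m t).deriv]
    have h0 : (0:ℝ) < t := ht
    have : 0 < Real.exp (-t) * t ^ m := mul_pos (Real.exp_pos _) (pow_pos h0 m)
    linarith

lemma f_antitone (m : ℕ) : AntitoneOn (fun t : ℝ => Real.exp (-t) * t ^ m) (Set.Ici (m:ℝ)) := by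
  apply antitoneOn_of_deriv_nonpos (convex_Ici _)
  · exact fun t _ => ((fmono_hasDerivAt m t).continuousAt).continuousWithinAt
  · exact fun t _ => ((fmono_hasDerivAt m t).differentiableAt).differentiableWithinAt
  · intro t ht
    rw [interior_Ici] at ht
    rw [(fmono_hasDerivAt m t).deriv]
    have h1 : (0:ℝ) < t := lt_of_le_of_lt (by positivity) ht
    have h2 : (m:ℝ) * t ^ (m-1) ≤ t ^ m := by
      rcases Nat.eq_zero_or_pos m with hm | hm
      · simp [hm]
      · calc (m:ℝ) * t ^ (m-1) ≤ t * t ^ (m-1) := by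
              apply mul_le_mul_of_nonneg_right ht.le (by positivity)
           _ = t ^ m := by rw [← pow_succ']; congr 1; omega
    nlinarith [Real.exp_pos (-t), mul_le_mul_of_nonneg_left h2 (Real.exp_pos (-t)).le]

noncomputable def pA (m : ℕ) (w : ℝ) : ℝ := m * w / (Real.exp w - 1)
noncomputable def pB (m : ℕ) (w : ℝ) : ℝ := m * w * Real.exp w / (Real.exp w - 1)
noncomputable def Gfun (m : ℕ) (w : ℝ) : ℝ := gAux m (pA m w) + gAux m (pB m w)

lemma expw_pos {w : ℝ} (hw : 0 < w) : 0 < Real.exp w - 1 := by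
  have := Real.exp_lt_exp.2 hw
  simp only [Real.exp_zero] at this
  linarith

lemma pA_pos {m : ℕ} (hm : 1 ≤ m) {w : ℝ} (hw : 0 < w) : 0 < pA m w := by
  have h1 := expw_pos hw
  have hm' : (0:ℝ) < m := by exact_mod_cast hm
  exact div_pos (by positivity) h1

lemma pB_eq (m : ℕ) {w : ℝ} (hw : 0 < w) : pB m w = pA m w * Real.exp w := by
  unfold pA pB; field_simp

lemma pB_sub_pA (m : ℕ) {w : ℝ} (hw : 0 < w) : pB m w - pA m w = m * w := by
  have h1 := (expw_pos hw).ne'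
  unfold pA pB; field_simp

lemma paired (m : ℕ) {w : ℝ} (hw : 0 < w) :
    Real.exp (-(pA m w)) * (pA m w) ^ m = Real.exp (-(pB m w)) * (pB m w) ^ m := by
  have hb1 : pB m w = pA m w + m * w := by linarith [pB_sub_pA m hw]
  have hexp : Real.exp (-(pB m w)) = Real.exp (-(pA m w)) * Real.exp (-((m:ℝ)*w)) := by
    rw [hb1, neg_add, Real.exp_add]
  rw [hexp, pB_eq m hw, mul_pow, ← Real.exp_nat_mul, Real.exp_neg ((m:ℝ)*w)]
  have := (Real.exp_pos ((m:ℝ)*w)).ne'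
  field_simp

lemma hasDerivAt_pA (m : ℕ) {w : ℝ} (hw : 0 < w) :
    HasDerivAt (pA m) ((m * (Real.exp w - 1) - m * w * Real.exp w) / (Real.exp w - 1)^2) w := by
  have h1 := (expw_pos hw).ne'
  have hnum : HasDerivAt (fun w : ℝ => (m:ℝ) * w) (m:ℝ) w := by
    simpa using (hasDerivAt_id w).const_mul (m:ℝ)
  have hden : HasDerivAt (fun w : ℝ => Real.exp w - 1) (Real.exp w) w := by
    simpa using (Real.hasDerivAt_exp w).sub_const 1
  exact hnum.div hden h1

lemma hasDerivAt_pB (m : ℕ) {w : ℝ} (hw : 0 < w) :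
    HasDerivAt (pB m)
      (((m * Real.exp w + m * w * Real.exp w) * (Real.exp w - 1) - m * w * Real.exp w * Real.exp w)
        / (Real.exp w - 1)^2) w := by
  have h1 := (expw_pos hw).ne'
  have hnum : HasDerivAt (fun w : ℝ => (m:ℝ) * w * Real.exp w)
      ((m:ℝ) * Real.exp w + m * w * Real.exp w) w := by
    have := ((hasDerivAt_id w).const_mul (m:ℝ)).mul (Real.hasDerivAt_exp w)
    exact this.congr_deriv (by simp)
  have hden : HasDerivAt (fun w : ℝ => Real.exp w - 1) (Real.exp w) w := by
    simpa using (Real.hasDerivAt_exp w).sub_const 1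
  exact hnum.div hden h1

lemma deriv_sum_nonneg (m : ℕ) {w : ℝ} (hw : 0 < w) :
    0 ≤ (m * (Real.exp w - 1) - m * w * Real.exp w) / (Real.exp w - 1)^2
      + ((m * Real.exp w + m * w * Real.exp w) * (Real.exp w - 1) - m * w * Real.exp w * Real.exp w)
        / (Real.exp w - 1)^2 := by
  have h1 := expw_pos hw
  have hsinh : 2 * w ≤ Real.exp w - Real.exp (-w) := by
    have := Real.self_le_sinh_iff.2 hw.le
    rw [Real.sinh_eq] at this
    linarith
  have hkey : 0 ≤ Real.exp w ^ 2 - 2 * w * Real.exp w - 1 := by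
    have he : Real.exp (-w) = (Real.exp w)⁻¹ := Real.exp_neg w
    have hep := Real.exp_pos w
    have := mul_le_mul_of_nonneg_right hsinh hep.le
    rw [sub_mul, he, inv_mul_cancel₀ hep.ne'] at this
    nlinarith
  rw [← add_div]
  apply div_nonneg _ (by positivity)
  nlinarith [Nat.cast_nonneg (α := ℝ) m]

lemma hasDerivAt_Gfun {m : ℕ} (hm : 1 ≤ m) {w : ℝ} (hw : 0 < w) :
    ∃ d, HasDerivAt (Gfun m) d w ∧ d ≤ 0 := by
  set dA := (m * (Real.exp w - 1) - m * w * Real.exp w) / (Real.exp w - 1)^2 with hdA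
  set dB := ((m * Real.exp w + m * w * Real.exp w) * (Real.exp w - 1) - m * w * Real.exp w * Real.exp w)
        / (Real.exp w - 1)^2 with hdB
  have hA := (gAux_hasDerivAt m (pA m w)).comp w (hasDerivAt_pA m hw)
  have hB := (gAux_hasDerivAt m (pB m w)).comp w (hasDerivAt_pB m hw)
  refine ⟨_, (hA.add hB), ?_⟩
  have hpr := paired m hw
  have hfA : 0 ≤ Real.exp (-(pA m w)) * (pA m w) ^ m := by
    have := pA_pos hm hw
    positivity
  calc -(Real.exp (-(pA m w)) * pA m w ^ m) * dA + -(Real.exp (-(pB m w)) * pB m w ^ m) * dB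
      = -(Real.exp (-(pA m w)) * pA m w ^ m) * (dA + dB) := by rw [← hpr]; ring
    _ ≤ 0 := by
        have := deriv_sum_nonneg m hw
        rw [← hdA, ← hdB] at this
        exact mul_nonpos_of_nonpos_of_nonneg (by linarith) this

lemma Gfun_antitone {m : ℕ} (hm : 1 ≤ m) : AntitoneOn (Gfun m) (Set.Ioi 0) := by
  have hint : interior (Set.Ioi (0:ℝ)) = Set.Ioi 0 := interior_Ioi
  apply antitoneOn_of_deriv_nonpos (convex_Ioi 0)
  · intro w hw
    obtain ⟨d, hd, _⟩ := hasDerivAt_Gfun hm hw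
    exact hd.continuousAt.continuousWithinAt
  · intro w hw
    rw [hint] at hw
    obtain ⟨d, hd, _⟩ := hasDerivAt_Gfun hm hw
    exact hd.differentiableAt.differentiableWithinAt
  · intro w hw
    rw [hint] at hw
    obtain ⟨d, hd, hd0⟩ := hasDerivAt_Gfun hm hw
    rw [hd.deriv]; exact hd0

lemma pA_tendsto_atTop (m : ℕ) : Tendsto (pA m) atTop (𝓝 0) := by
  have h1 : Tendsto (fun w : ℝ => (m:ℝ) * (w ^ 1 * Real.exp (-w)) * (1 - Real.exp (-w))⁻¹)
      atTop (𝓝 ((m:ℝ) * 0 * 1⁻¹)) := by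
    apply Tendsto.mul
    · exact (Real.tendsto_pow_mul_exp_neg_atTop_nhds_zero 1).const_mul _
    · apply Tendsto.inv₀ _ (by norm_num)
      have : Tendsto (fun w : ℝ => Real.exp (-w)) atTop (𝓝 0) :=
        Real.tendsto_exp_atBot.comp tendsto_neg_atTop_atBot
      simpa using (tendsto_const_nhds (x := (1:ℝ))).sub this
  simp only [mul_zero, zero_mul] at h1
  apply h1.congr'
  filter_upwards [eventually_gt_atTop (0:ℝ)] with w hw
  have h2 := (expw_pos hw).ne'
  have h3 := (Real.exp_pos (-w)).ne'
  have h4 : (1:ℝ) - Real.exp (-w) ≠ 0 := by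
    rw [Real.exp_neg]
    have := expw_pos hw
    have := Real.exp_pos w
    intro h; apply h2
    field_simp at h ⊢
    linarith
  unfold pA
  rw [Real.exp_neg]
  have := Real.exp_pos w
  field_simp

lemma pB_tendsto_atTop {m : ℕ} (hm : 1 ≤ m) : Tendsto (pB m) atTop atTop := by
  apply tendsto_atTop_mono' _ _ (tendsto_id.const_mul_atTop (by exact_mod_cast hm : (0:ℝ) < m))
  filter_upwards [eventually_gt_atTop (0:ℝ)] with w hw
  have h1 := expw_pos hw
  have h2 := pA_pos hm hw  -- fails if m = 0? hm given
  have := pB_sub_pA m hw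
  simp only [id]
  linarith

lemma Gfun_tendsto {m : ℕ} (hm : 1 ≤ m) : Tendsto (Gfun m) atTop (𝓝 (m.factorial : ℝ)) := by
  have hc : ContinuousAt (gAux m) 0 := (gAux_hasDerivAt m 0).continuousAt
  have h1 : Tendsto (fun w => gAux m (pA m w)) atTop (𝓝 (m.factorial : ℝ)) := by
    have := hc.tendsto.comp (pA_tendsto_atTop m)
    rwa [gAux_zero] at this
  have h2 : Tendsto (fun w => gAux m (pB m w)) atTop (𝓝 0) :=
    (gAux_tendsto m).comp (pB_tendsto_atTop hm)
  have := h1.add h2; rw [add_zero] at this; exact this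

lemma Gfun_ge {m : ℕ} (hm : 1 ≤ m) {w : ℝ} (hw : 0 < w) : (m.factorial : ℝ) ≤ Gfun m w := by
  apply le_of_tendsto (Gfun_tendsto hm)
  filter_upwards [eventually_ge_atTop w] with v hv
  exact Gfun_antitone hm hw (lt_of_lt_of_le hw hv) hv

lemma pair_lemma {m : ℕ} (hm : 1 ≤ m) {a b : ℝ} (ha : 0 < a) (hab : a < b)
    (hfab : Real.exp (-a) * a ^ m = Real.exp (-b) * b ^ m) :
    (m.factorial : ℝ) ≤ gAux m a + gAux m b := by
  have hb : 0 < b := ha.trans hab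
  set w := Real.log (b / a) with hwdef
  have hba : 1 < b / a := (one_lt_div ha).2 hab
  have hw : 0 < w := Real.log_pos hba
  have hew : Real.exp w = b / a := Real.exp_log (by positivity)
  -- from hfab : b - a = m * w
  have hlog : -a + m * Real.log a = -b + m * Real.log b := by
    have h1 := congrArg Real.log hfab
    rw [Real.log_mul (Real.exp_pos _).ne' (by positivity), Real.log_mul (Real.exp_pos _).ne' (by positivity),
      Real.log_exp, Real.log_exp, Real.log_pow, Real.log_pow] at h1
    push_cast at h1
    linarith
  have hbma : b - a = m * w := by
    have : Real.log (b / a) = Real.log b - Real.log a := Real.log_div hb.ne' ha.ne'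
    rw [hwdef, this]
    linarith
  have hpAa : pA m w = a := by
    unfold pA
    rw [hew]
    rw [div_sub_one ha.ne']
    rw [div_div_eq_mul_div, ← hbma]
    have hba' : b - a ≠ 0 := sub_ne_zero.2 hab.ne'
    rw [mul_comm, mul_div_assoc, div_self hba', mul_one]
  have hpBb : pB m w = b := by
    rw [pB_eq m hw, hpAa, hew]
    field_simp
  have := Gfun_ge hm hw
  unfold Gfun at this
  rwa [hpAa, hpBb] at this

lemma pA_tendsto_zero (m : ℕ) : Tendsto (pA m) (𝓝[>] 0) (𝓝 (m : ℝ)) := by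
  have hslope : Tendsto (fun w : ℝ => (Real.exp w - 1) / w) (𝓝[≠] (0:ℝ)) (𝓝 1) := by
    have h := Real.hasDerivAt_exp 0
    rw [hasDerivAt_iff_tendsto_slope] at h
    simp only [Real.exp_zero] at h
    apply h.congr
    intro w
    rw [slope_def_field]
    rw [Real.exp_zero, sub_zero]
  have hinv : Tendsto (fun w : ℝ => w / (Real.exp w - 1)) (𝓝[≠] (0:ℝ)) (𝓝 1) := by
    have := hslope.inv₀ (by norm_num)
    simpa using this.congr (fun w => by rw [← one_div, one_div_div])
  have hmono : 𝓝[>] (0:ℝ) ≤ 𝓝[≠] (0:ℝ) := nhdsWithin_mono 0 (fun x hx => ne_of_gt hx)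
  have h2 : Tendsto (fun w : ℝ => (m:ℝ) * (w / (Real.exp w - 1))) (𝓝[>] 0) (𝓝 ((m:ℝ) * 1)) :=
    ((hinv.mono_left hmono).const_mul _)
  simp only [mul_one] at h2
  exact h2.congr fun w => by unfold pA; ring

lemma pB_tendsto_zero (m : ℕ) : Tendsto (pB m) (𝓝[>] 0) (𝓝 (m : ℝ)) := by
  have h1 := pA_tendsto_zero m
  have h2 : Tendsto (fun w : ℝ => Real.exp w) (𝓝[>] (0:ℝ)) (𝓝 1) := by
    have : Tendsto (fun w : ℝ => Real.exp w) (𝓝 (0:ℝ)) (𝓝 1) := by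
      simpa using Real.continuous_exp.tendsto (0:ℝ)
    exact this.mono_left nhdsWithin_le_nhds
  have h3 := h1.mul h2
  simp only [mul_one] at h3
  apply h3.congr'
  filter_upwards [self_mem_nhdsWithin] with w hw
  exact (pB_eq m hw).symm

lemma mode_median {m : ℕ} (hm : 1 ≤ m) : (m.factorial : ℝ) ≤ 2 * gAux m m := by
  have hc : ContinuousAt (gAux m) (m:ℝ) := (gAux_hasDerivAt m m).continuousAt
  have hG : Tendsto (Gfun m) (𝓝[>] 0) (𝓝 (gAux m m + gAux m m)) :=
    (hc.tendsto.comp (pA_tendsto_zero m)).add (hc.tendsto.comp (pB_tendsto_zero m))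
  have hge : ∀ᶠ w in 𝓝[>] (0:ℝ), (m.factorial : ℝ) ≤ Gfun m w := by
    filter_upwards [self_mem_nhdsWithin] with w hw
    exact Gfun_ge hm hw
  have := ge_of_tendsto hG hge
  linarith


/-- If `∫₀ˣ e^{-t} t^{n−1} dt = ∫_y^∞ e^{-t} t^{n−1} dt ≤ (n−1)!/2` with `x, y ≥ 0`, then
`e^{-x} x^{n−1} ≥ e^{-y} y^{n−1}`. -/
theorem simplex_vs_complement_boundary (n : ℕ) (hn : 1 ≤ n) (x y : ℝ)
    (hx : 0 ≤ x) (hy : 0 ≤ y)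
    (heq : ∫ t in (0:ℝ)..x, Real.exp (-t) * t ^ (n - 1)
      = ∫ t in Set.Ioi y, Real.exp (-t) * t ^ (n - 1))
    (hle : ∫ t in Set.Ioi y, Real.exp (-t) * t ^ (n - 1)
      ≤ (Nat.factorial (n - 1) : ℝ) / 2) :
    Real.exp (-y) * y ^ (n - 1) ≤ Real.exp (-x) * x ^ (n - 1) := by
  set m := n - 1 with hmdef
  rw [integral_interval m x, integral_Ioi m hy] at heq
  rw [integral_Ioi m hy] at hle
  have hgx : (m.factorial : ℝ)/2 ≤ gAux m x := by linarith
  have hxy : x ≤ y := by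
    by_contra hlt
    push_neg at hlt
    have := gAux_strictAnti m (mem_Ici.2 hy) (mem_Ici.2 hx) hlt
    linarith
  rcases le_or_gt (m:ℝ) x with hmx | hmx
  · exact f_antitone m (mem_Ici.2 hmx) (mem_Ici.2 (hmx.trans hxy)) hxy
  · have hm : 1 ≤ m := by
      by_contra h
      push_neg at h
      have h0 : m = 0 := by omega
      rw [h0] at hmx
      simp at hmx
      linarith
    have hmy : (m:ℝ) ≤ y := by
      by_contra h
      push_neg at h
      have h1 := mode_median hm
      have := gAux_strictAnti m (mem_Ici.2 hy) (mem_Ici.2 (by positivity : (0:ℝ) ≤ (m:ℝ))) h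
      linarith
    by_contra hcon
    push_neg at hcon
    have hym : (m:ℝ) < y := by
      rcases lt_or_eq_of_le hmy with h | h
      · exact h
      · exfalso
        have hxyn : x < y := lt_of_lt_of_eq hmx h
        have := gAux_strictAnti m (mem_Ici.2 hx) (mem_Ici.2 hy) hxyn
        have h1 := mode_median hm
        rw [← h] at hle heq this
        linarith
    have hy0 : (0:ℝ) < y := lt_of_le_of_lt (by positivity) hym
    have hfy_pos : 0 < Real.exp (-y) * y ^ m := by positivity
    have hfym : Real.exp (-y) * y ^ m ≤ Real.exp (-(m:ℝ)) * (m:ℝ) ^ m :=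
      f_antitone m (self_mem_Ici) (mem_Ici.2 hmy) hmy
    have hIVT := intermediate_value_Icc hmx.le
      (Continuous.continuousOn (by continuity :
        Continuous (fun t : ℝ => Real.exp (-t) * t ^ m)))
    obtain ⟨a, haIcc, hfa'⟩ := hIVT ⟨hcon.le, hfym⟩
    replace hfa : Real.exp (-a) * a ^ m = Real.exp (-y) * y ^ m := hfa' 
    have ha0 : 0 < a := by
      rcases (le_trans hx haIcc.1).lt_or_eq with h | h
      · exact h
      · exfalso
        rw [← h] at hfa
        simp only [neg_zero, Real.exp_zero, one_mul] at hfa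
        rw [zero_pow (by omega : m ≠ 0)] at hfa
        linarith
    have hay : a < y := lt_of_le_of_lt haIcc.2 hym
    have hpl := pair_lemma hm ha0 hay hfa
    have hxa : x < a := by
      rcases haIcc.1.lt_or_eq with h | h
      · exact h
      · exfalso
        rw [← h] at hfa
        linarith
    have := gAux_strictAnti m (mem_Ici.2 hx) (mem_Ici.2 ha0.le) hxa
    linarith
end

section
/- For every integer n ≥ 1, ∫_{n−1}^∞ e^{-t} t^{n−1} dt ≥ (1/2)·(n−1)!. Equivalently, a Poisson random variable with integer parameter k = n−1 satisfies P(Poisson(k) ≤ k) = e^{-k}·Σ_{j=0}^{k} k^j/j! ≥ 1/2. -/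
open MeasureTheory Real Set

open Filter Topology

noncomputable def P (k : ℕ) (x : ℝ) : ℝ :=
  ∑ j ∈ Finset.range (k + 1), ((k.factorial : ℝ) / (j.factorial : ℝ)) * x ^ j

lemma hasDerivAt_P (k : ℕ) (x : ℝ) :
    HasDerivAt (P k) (P k x - x ^ k) x := by
  have h : HasDerivAt (P k)
      (∑ j ∈ Finset.range (k + 1), ((k.factorial : ℝ) / (j.factorial : ℝ)) * (j * x ^ (j - 1))) x := by
    apply HasDerivAt.fun_sum
    intro j _
    exact (hasDerivAt_pow j x).const_mul _
  convert h using 1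
  rw [Finset.sum_range_succ' (fun j => ((k.factorial : ℝ) / (j.factorial : ℝ)) * (j * x ^ (j-1)))]
  rw [show (P k x : ℝ) = ∑ j ∈ Finset.range k, ((k.factorial : ℝ) / (j.factorial : ℝ)) * x ^ j + x ^ k by
    rw [P, Finset.sum_range_succ, div_self (Nat.cast_ne_zero.2 k.factorial_ne_zero), one_mul]]
  simp only [Nat.cast_zero, pow_zero, Nat.factorial_zero, zero_mul, mul_zero, add_zero,
    add_sub_cancel_right]
  apply Finset.sum_congr rfl
  intro j _
  have h3 : ((j+1).factorial : ℝ) = (j+1) * j.factorial := by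
    rw [Nat.factorial_succ]; push_cast; ring
  rw [h3]
  have h1 : (j.factorial : ℝ) ≠ 0 := Nat.cast_ne_zero.2 j.factorial_ne_zero
  have h2 : ((j:ℝ)+1) ≠ 0 := by positivity
  simp only [Nat.add_sub_cancel, Nat.cast_add, Nat.cast_one]
  field_simp

noncomputable def F (k : ℕ) (x : ℝ) : ℝ := Real.exp (-x) * P k x

lemma hasDerivAt_F (k : ℕ) (x : ℝ) :
    HasDerivAt (F k) (-(Real.exp (-x) * x ^ k)) x := by
  have he : HasDerivAt (fun x : ℝ => Real.exp (-x)) (-Real.exp (-x)) x := by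
    simpa using ((hasDerivAt_id x).neg).exp
  have := he.fun_mul (hasDerivAt_P k x)
  exact this.congr_deriv (by ring)

lemma tendsto_F (k : ℕ) : Tendsto (F k) atTop (𝓝 0) := by
  have : ∀ x : ℝ, F k x = ∑ j ∈ Finset.range (k + 1),
      ((k.factorial : ℝ) / (j.factorial : ℝ)) * (x ^ j * Real.exp (-x)) := by
    intro x
    rw [F, P, Finset.mul_sum]
    apply Finset.sum_congr rfl
    intro j _; ring
  simp only [funext this]
  have h0 : (0:ℝ) = ∑ j ∈ Finset.range (k + 1), ((k.factorial : ℝ) / (j.factorial : ℝ)) * 0 := by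
    simp
  rw [h0]
  exact tendsto_finset_sum _ fun j _ =>
    (tendsto_pow_mul_exp_neg_atTop_nhds_zero j).const_mul _

lemma integral_Ioi_exp_neg_pow (k : ℕ) (a : ℝ) (ha : 0 ≤ a) :
    ∫ t in Ioi a, Real.exp (-t) * t ^ k = F k a := by
  have := integral_Ioi_of_hasDerivAt_of_nonneg'
    (g := fun x => -F k x) (g' := fun x => Real.exp (-x) * x ^ k) (a := a) (l := 0)
    (fun x _ => by simpa using (hasDerivAt_F k x).fun_neg)
    (fun x hx => mul_nonneg (Real.exp_nonneg _) (pow_nonneg (ha.trans (le_of_lt hx)) k))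
    (by simpa using (tendsto_F k).neg)
  simpa using this

lemma integrableOn_exp_neg_pow (k : ℕ) (a : ℝ) (ha : 0 ≤ a) :
    IntegrableOn (fun t => Real.exp (-t) * t ^ k) (Ioi a) := by
  exact integrableOn_Ioi_deriv_of_nonneg'
    (g := fun x => -F k x) (fun x _ => by simpa using (hasDerivAt_F k x).fun_neg)
    (fun x hx => mul_nonneg (Real.exp_nonneg _) (pow_nonneg (ha.trans (le_of_lt hx)) k)) (l := 0) (by simpa using (tendsto_F k).neg)

lemma key_ineq (x : ℝ) (hx : 0 ≤ x) :
    (1 - x) * Real.exp x ≤ (1 + x) * Real.exp (-x) := by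
  set g : ℝ → ℝ := fun x => (1 + x) * Real.exp (-x) - (1 - x) * Real.exp x with hg
  have hderiv : ∀ y : ℝ, HasDerivAt g (y * (Real.exp y - Real.exp (-y))) y := by
    intro y
    have he : HasDerivAt (fun y : ℝ => Real.exp (-y)) (-Real.exp (-y)) y := by
      simpa using ((hasDerivAt_id y).neg).exp
    have h1 : HasDerivAt (fun y : ℝ => (1 + y) * Real.exp (-y))
        (1 * Real.exp (-y) + (1 + y) * (-Real.exp (-y))) y :=
      ((hasDerivAt_id y).const_add 1).mul he
    have h2 : HasDerivAt (fun y : ℝ => (1 - y) * Real.exp y)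
        ((-1) * Real.exp y + (1 - y) * Real.exp y) y :=
      ((hasDerivAt_id y).const_sub 1).mul (Real.hasDerivAt_exp y)
    have := h1.fun_sub h2
    exact this.congr_deriv (by ring)
  have hmono : MonotoneOn g (Ici (0:ℝ)) := by
    apply monotoneOn_of_deriv_nonneg (convex_Ici 0)
      (Continuous.continuousOn (by continuity))
      (fun y hy => (hderiv y).differentiableAt.differentiableWithinAt)
    intro y hy
    rw [interior_Ici] at hy
    rw [(hderiv y).deriv]
    have : Real.exp (-y) ≤ Real.exp y := Real.exp_le_exp.2 (by linarith [hy.out.le])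
    exact mul_nonneg hy.out.le (by linarith)
  have h0 : g 0 = 0 := by simp [hg]
  have := hmono (self_mem_Ici) (mem_Ici.2 hx) hx
  rw [h0] at this
  simp only [hg] at this
  linarith

lemma reflect_ineq (k : ℕ) (u : ℝ) (hu : 0 ≤ u) (huk : u ≤ k) :
    Real.exp (-((k:ℝ) - u)) * ((k:ℝ) - u) ^ k ≤ Real.exp (-((k:ℝ) + u)) * ((k:ℝ) + u) ^ k := by
  rcases Nat.eq_zero_or_pos k with rfl | hk
  · simp only [Nat.cast_zero, pow_zero, mul_one]
    have : u = 0 := le_antisymm (by simpa using huk) hu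
    simp [this]
  have hkpos : (0:ℝ) < k := by exact_mod_cast hk
  set x := u / k with hx
  have hx0 : 0 ≤ x := div_nonneg hu hkpos.le
  have hkey := key_ineq x hx0
  have hc : (k:ℝ) * (1 - x) = (k:ℝ) - u := by rw [hx]; field_simp
  have hc2 : (k:ℝ) * (1 + x) = (k:ℝ) + u := by rw [hx]; field_simp
  have hkx : (k:ℝ) * x = u := by rw [hx, mul_comm, div_mul_cancel₀ _ (ne_of_gt hkpos)]
  have h1 : ((k:ℝ) - u) * Real.exp x ≤ ((k:ℝ) + u) * Real.exp (-x) := by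
    have h := mul_le_mul_of_nonneg_left hkey hkpos.le
    calc ((k:ℝ) - u) * Real.exp x = (k:ℝ) * ((1 - x) * Real.exp x) := by rw [← hc]; ring
      _ ≤ (k:ℝ) * ((1 + x) * Real.exp (-x)) := h
      _ = ((k:ℝ) + u) * Real.exp (-x) := by rw [← hc2]; ring
  have h2 : (Real.exp x * ((k:ℝ) - u)) ^ k ≤ (Real.exp (-x) * ((k:ℝ) + u)) ^ k := by
    apply pow_le_pow_left₀ (mul_nonneg (Real.exp_nonneg _) (by linarith))
    linarith
  have exk : Real.exp x ^ k = Real.exp u := by rw [← Real.exp_nat_mul, hkx]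
  have exk' : Real.exp (-x) ^ k = Real.exp (-u) := by
    rw [← Real.exp_nat_mul, mul_neg, hkx]
  rw [mul_pow, mul_pow, exk, exk'] at h2
  have h3 := mul_le_mul_of_nonneg_left h2 (Real.exp_nonneg (-(k:ℝ)))
  calc Real.exp (-((k:ℝ) - u)) * ((k:ℝ) - u) ^ k
      = Real.exp (-(k:ℝ)) * (Real.exp u * ((k:ℝ) - u) ^ k) := by
        rw [← mul_assoc, ← Real.exp_add]; ring_nf
    _ ≤ Real.exp (-(k:ℝ)) * (Real.exp (-u) * ((k:ℝ) + u) ^ k) := h3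
    _ = Real.exp (-((k:ℝ) + u)) * ((k:ℝ) + u) ^ k := by
        rw [← mul_assoc, ← Real.exp_add]; ring_nf

lemma half_le (k : ℕ) :
    (k.factorial : ℝ) ≤ 2 * ∫ t in Ioi ((k:ℝ)), Real.exp (-t) * t ^ k := by
  set c : ℝ := (k : ℝ) with hc
  have hc0 : (0:ℝ) ≤ c := Nat.cast_nonneg k
  set f : ℝ → ℝ := fun t => Real.exp (-t) * t ^ k with hf
  have hfc : Continuous f := by continuity
  have hint2 : IntegrableOn f (Ioi c) := integrableOn_exp_neg_pow k c hc0
  have hint1 : IntegrableOn f (Ioc 0 c) := hfc.integrableOn_Ioc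
  have hP0 : P k 0 = (k.factorial : ℝ) := by
    rw [P, Finset.sum_eq_single 0 (fun j _ hj => by simp [zero_pow hj]) (by simp)]
    simp
  have hI0 : ∫ t in Ioi (0:ℝ), f t = (k.factorial : ℝ) := by
    rw [integral_Ioi_exp_neg_pow k 0 le_rfl, F, hP0]; simp
  have hsplit : ∫ t in Ioi (0:ℝ), f t = (∫ t in Ioc 0 c, f t) + ∫ t in Ioi c, f t := by
    rw [← Ioc_union_Ioi_eq_Ioi hc0,
      setIntegral_union (Ioc_disjoint_Ioi le_rfl) measurableSet_Ioi hint1 hint2]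
  have hrefl : (∫ t in Ioc 0 c, f t) ≤ ∫ t in Ioi c, f t := by
    have e1 : (∫ t in Ioc 0 c, f t) = ∫ t in (0:ℝ)..c, f t :=
      (intervalIntegral.integral_of_le hc0).symm
    have e2 : (∫ t in (0:ℝ)..c, f t) = ∫ s in c..(2*c), f (2*c - s) := by
      rw [intervalIntegral.integral_comp_sub_left f (2*c)]
      have h1 : 2*c - c = c := by ring
      have h2 : 2*c - 2*c = 0 := by ring
      rw [h1, h2]
    have e3 : (∫ s in c..(2*c), f (2*c - s)) ≤ ∫ s in c..(2*c), f s := by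
      apply intervalIntegral.integral_mono_on (by linarith)
        ((hfc.comp (by continuity)).intervalIntegrable _ _) (hfc.intervalIntegrable _ _)
      intro s hs
      obtain ⟨hs1, hs2⟩ := hs
      have h := reflect_ineq k (s - c) (by linarith) (by rw [← hc]; linarith)
      have e4 : c - (s - c) = 2*c - s := by ring
      have e5 : c + (s - c) = s := by ring
      rw [← hc, e4, e5] at h
      simpa [hf] using h
    have e6 : (∫ s in c..(2*c), f s) = ∫ s in Ioc c (2*c), f s :=
      intervalIntegral.integral_of_le (by linarith)
    have e7 : (∫ s in Ioc c (2*c), f s) ≤ ∫ s in Ioi c, f s := by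
      apply setIntegral_mono_set hint2
      · filter_upwards [ae_restrict_mem measurableSet_Ioi] with t ht
        exact mul_nonneg (Real.exp_nonneg _) (pow_nonneg (by linarith [ht.out]) k)
      · exact HasSubset.Subset.eventuallyLE Ioc_subset_Ioi_self
    linarith
  linarith [hsplit ▸ hI0]

/-- `∫_{n−1}^∞ e^{-t} t^{n−1} dt ≥ (1/2)(n−1)!`; equivalently a Poisson random variable
with integer parameter `k = n−1` satisfies `P(Poisson(k) ≤ k) ≥ 1/2`. -/
theorem poisson_median (n : ℕ) (hn : 1 ≤ n) :
    (1 / 2 : ℝ) * (Nat.factorial (n - 1) : ℝ)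
      ≤ ∫ t in Set.Ioi ((n : ℝ) - 1), Real.exp (-t) * t ^ (n - 1) ∧
    (1 / 2 : ℝ) ≤ Real.exp (-((n : ℝ) - 1)) *
      ∑ j ∈ Finset.range n, ((n : ℝ) - 1) ^ j / (Nat.factorial j : ℝ) := by
  obtain ⟨k, rfl⟩ : ∃ k, n = k + 1 := ⟨n - 1, (Nat.succ_pred_eq_of_pos hn).symm⟩
  have hk1 : k + 1 - 1 = k := rfl
  have hkr : ((k:ℝ) + 1) - 1 = (k:ℝ) := by ring
  have hcast : ((k + 1 : ℕ) : ℝ) - 1 = (k : ℝ) := by push_cast; ring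
  rw [hk1, hcast]
  have hhalf := half_le k
  constructor
  · linarith
  · have hval : (∫ t in Ioi ((k:ℝ)), Real.exp (-t) * t ^ k) = F k (k:ℝ) :=
      integral_Ioi_exp_neg_pow k (k:ℝ) (Nat.cast_nonneg k)
    have hPS : P k (k:ℝ) = (k.factorial : ℝ) *
        ∑ j ∈ Finset.range (k + 1), ((k:ℝ)) ^ j / (Nat.factorial j : ℝ) := by
      rw [P, Finset.mul_sum]
      exact Finset.sum_congr rfl fun j _ => by ring
    have hfacpos : (0:ℝ) < (k.factorial : ℝ) := by
      exact_mod_cast k.factorial_pos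
    have h2 : (k.factorial : ℝ) ≤ 2 * (Real.exp (-(k:ℝ)) * ((k.factorial : ℝ) *
        ∑ j ∈ Finset.range (k + 1), ((k:ℝ)) ^ j / (Nat.factorial j : ℝ))) := by
      rw [← hPS]
      calc (k.factorial : ℝ) ≤ 2 * ∫ t in Ioi ((k:ℝ)), Real.exp (-t) * t ^ k := hhalf
        _ = 2 * (Real.exp (-(k:ℝ)) * P k (k:ℝ)) := by rw [hval, F]
    have h3 : (k.factorial : ℝ) * 1 ≤ (k.factorial : ℝ) *
        (2 * (Real.exp (-(k:ℝ)) * ∑ j ∈ Finset.range (k + 1),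
          ((k:ℝ)) ^ j / (Nat.factorial j : ℝ))) := by
      calc (k.factorial : ℝ) * 1 = (k.factorial : ℝ) := by ring
        _ ≤ 2 * (Real.exp (-(k:ℝ)) * ((k.factorial : ℝ) *
            ∑ j ∈ Finset.range (k + 1), ((k:ℝ)) ^ j / (Nat.factorial j : ℝ))) := h2
        _ = (k.factorial : ℝ) * (2 * (Real.exp (-(k:ℝ)) *
            ∑ j ∈ Finset.range (k + 1), ((k:ℝ)) ^ j / (Nat.factorial j : ℝ))) := by ring
    have h4 := (mul_le_mul_iff_right₀ hfacpos).1 h3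
    linarith
end

section
/- Let n ≥ 1 be an integer and let 0 ≤ a ≤ b and c ≥ 0 be real numbers satisfying ∫_a^b e^{-t} t^{n−1} dt = ∫_c^∞ e^{-t} t^{n−1} dt ≤ (1/2)·(n−1)!. Then e^{-a} a^{n−1} + e^{-b} b^{n−1} ≥ e^{-c} c^{n−1}. (In isoperimetric terms: a trapezoid of measure at most 1/2 has boundary measure at least that of the complement of a simplex of the same measure.) -/
open MeasureTheory Real Set

noncomputable section

namespace TrapAux

def ef (m : ℕ) (t : ℝ) : ℝ := Real.exp (-t) * t ^ m

def Pm (m : ℕ) (x : ℝ) : ℝ :=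
  ∑ k ∈ Finset.range (m + 1), ((Nat.factorial m : ℝ) / (Nat.factorial k : ℝ)) * x ^ k

def Fm (m : ℕ) (x : ℝ) : ℝ := Real.exp (-x) * Pm m x

def Gm (m : ℕ) (x : ℝ) : ℝ := (Nat.factorial m : ℝ) - Fm m x

lemma ef_cont (m : ℕ) : Continuous (ef m) := by
  unfold ef; continuity

lemma ef_nonneg (m : ℕ) {t : ℝ} (ht : 0 ≤ t) : 0 ≤ ef m t := by
  unfold ef; positivity

lemma ef_pos (m : ℕ) {t : ℝ} (ht : 0 < t) : 0 < ef m t := by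
  unfold ef; positivity

lemma ef_eq_exp (m : ℕ) {t : ℝ} (ht : 0 < t) : ef m t = Real.exp (m * Real.log t - t) := by
  rw [Real.exp_sub, Real.exp_nat_mul, Real.exp_log ht, ef, mul_comm, Real.exp_neg]
  rw [div_eq_mul_inv]

lemma ef_anti (m : ℕ) {x y : ℝ} (hmx : (m : ℝ) ≤ x) (hxy : x ≤ y) : ef m y ≤ ef m x := by
  rcases eq_or_lt_of_le (le_trans (Nat.cast_nonneg m) hmx) with hx0 | hx0
  · have hx : x = 0 := hx0.symm
    subst hx
    have hm0 : m = 0 := by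
      have h' : (m : ℝ) ≤ 0 := hmx
      exact_mod_cast le_antisymm (by exact_mod_cast h') (Nat.zero_le m)
    subst hm0
    simp only [ef, pow_zero, mul_one]
    apply Real.exp_le_exp.mpr
    linarith
  · have hy0 : 0 < y := lt_of_lt_of_le hx0 hxy
    rw [ef_eq_exp m hx0, ef_eq_exp m hy0, Real.exp_le_exp]
    have hlog : Real.log y - Real.log x ≤ y / x - 1 := by
      have := Real.log_le_sub_one_of_pos (div_pos hy0 hx0)
      rwa [Real.log_div hy0.ne' hx0.ne'] at this
    have hlognn : 0 ≤ Real.log y - Real.log x :=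
      sub_nonneg.mpr (Real.log_le_log hx0 hxy)
    have h1 : (m : ℝ) * (Real.log y - Real.log x) ≤ x * (Real.log y - Real.log x) :=
      mul_le_mul_of_nonneg_right hmx hlognn
    have h2 : x * (Real.log y - Real.log x) ≤ x * (y / x - 1) :=
      mul_le_mul_of_nonneg_left hlog hx0.le
    have h3 : x * (y / x - 1) = y - x := by field_simp
    nlinarith

lemma hasDerivAt_Pm (m : ℕ) (x : ℝ) :
    HasDerivAt (Pm m)
      (∑ k ∈ Finset.range m, ((Nat.factorial m : ℝ) / (Nat.factorial k : ℝ)) * x ^ k) x := by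
  have h : HasDerivAt (Pm m)
      (∑ k ∈ Finset.range (m + 1),
        ((Nat.factorial m : ℝ) / (Nat.factorial k : ℝ)) * ((k : ℝ) * x ^ (k - 1))) x := by
    apply HasDerivAt.fun_sum
    intro k _
    exact (hasDerivAt_pow k x).const_mul _
  convert h using 1
  rw [Finset.sum_range_succ']
  simp only [Nat.cast_zero, zero_mul, mul_zero, add_zero]
  apply Finset.sum_congr rfl
  intro k _
  have hfac : (Nat.factorial (k + 1) : ℝ) = (k + 1) * (Nat.factorial k : ℝ) := by
    rw [Nat.factorial_succ]; push_cast; ring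
  have hk : (k : ℝ) + 1 ≠ 0 := by positivity
  have hkfac : (Nat.factorial k : ℝ) ≠ 0 := by
    exact_mod_cast (Nat.factorial_pos k).ne'
  rw [hfac]
  push_cast
  field_simp

lemma Pm_eq_deriv_add (m : ℕ) (x : ℝ) :
    Pm m x = (∑ k ∈ Finset.range m, ((Nat.factorial m : ℝ) / (Nat.factorial k : ℝ)) * x ^ k)
      + x ^ m := by
  rw [Pm, Finset.sum_range_succ, div_self (by exact_mod_cast (Nat.factorial_pos m).ne' : (Nat.factorial m : ℝ) ≠ 0), one_mul]

lemma hasDerivAt_Fm (m : ℕ) (x : ℝ) : HasDerivAt (Fm m) (-(ef m x)) x := by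
  have h1 : HasDerivAt (fun x : ℝ => Real.exp (-x)) (-Real.exp (-x)) x := by
    exact ((Real.hasDerivAt_exp (-x)).comp x (hasDerivAt_neg x)).congr_deriv (by ring)
  have h2 := hasDerivAt_Pm m x
  have h3 := h1.mul h2
  have h4 : -Real.exp (-x) * Pm m x +
      Real.exp (-x) * (∑ k ∈ Finset.range m,
        ((Nat.factorial m : ℝ) / (Nat.factorial k : ℝ)) * x ^ k) = -(ef m x) := by
    rw [Pm_eq_deriv_add m x, ef]; ring
  rw [h4] at h3
  exact h3

lemma Fm_cont (m : ℕ) : Continuous (Fm m) := by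
  unfold Fm Pm; continuity

lemma intervalIntegral_ef (m : ℕ) (a b : ℝ) :
    ∫ t in a..b, ef m t = Fm m a - Fm m b := by
  have hderiv : ∀ t ∈ Set.uIcc a b, HasDerivAt (fun x => -(Fm m x)) (ef m t) t := by
    intro t _
    exact (hasDerivAt_Fm m t).neg.congr_deriv (neg_neg _)
  rw [intervalIntegral.integral_eq_sub_of_hasDerivAt hderiv ((ef_cont m).intervalIntegrable a b)]
  ring

lemma integrableOn_ef (m : ℕ) {c : ℝ} (hc : 0 ≤ c) : IntegrableOn (ef m) (Ioi c) := by
  have h := Real.GammaIntegral_convergent (s := (m : ℝ) + 1) (by positivity)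
  have h2 : IntegrableOn (ef m) (Ioi (0:ℝ)) := by
    apply h.congr_fun _ measurableSet_Ioi
    intro x hx
    simp only [ef]
    rw [add_sub_cancel_right, Real.rpow_natCast]
  exact h2.mono_set (Ioi_subset_Ioi hc)

lemma integral_Ioi_ef (m : ℕ) {c : ℝ} (hc : 0 ≤ c) : ∫ t in Ioi c, ef m t = Fm m c := by
  have hderiv : ∀ x ∈ Ici c, HasDerivAt (fun x => -(Fm m x)) (ef m x) x := by
    intro x _
    exact (hasDerivAt_Fm m x).neg.congr_deriv (neg_neg _)
  have htend : Filter.Tendsto (fun x => -(Fm m x)) Filter.atTop (nhds 0) := by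
    have h0 : Filter.Tendsto (fun x : ℝ => ∑ k ∈ Finset.range (m + 1),
        ((Nat.factorial m : ℝ) / (Nat.factorial k : ℝ)) * (x ^ k * Real.exp (-x)))
        Filter.atTop (nhds (∑ k ∈ Finset.range (m + 1),
          ((Nat.factorial m : ℝ) / (Nat.factorial k : ℝ)) * 0)) := by
      apply tendsto_finset_sum
      intro k _
      exact (tendsto_pow_mul_exp_neg_atTop_nhds_zero k).const_mul _
    simp only [mul_zero, Finset.sum_const_zero] at h0
    have heq : (fun x => -(Fm m x)) = fun x : ℝ => -(∑ k ∈ Finset.range (m + 1),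
        ((Nat.factorial m : ℝ) / (Nat.factorial k : ℝ)) * (x ^ k * Real.exp (-x))) := by
      funext x
      rw [Fm, Pm, Finset.mul_sum]
      congr 1
      apply Finset.sum_congr rfl
      intro k _
      ring
    rw [heq]
    simpa using h0.neg
  have := MeasureTheory.integral_Ioi_of_hasDerivAt_of_tendsto' hderiv (integrableOn_ef m hc) htend
  rw [this]
  ring

lemma Fm_pos (m : ℕ) {x : ℝ} (hx : 0 ≤ x) : 0 < Fm m x := by
  have hP : (Nat.factorial m : ℝ) ≤ Pm m x := by
    have h0 : ((Nat.factorial m : ℝ) / (Nat.factorial 0 : ℝ)) * x ^ 0 = (Nat.factorial m : ℝ) := by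
      simp
    rw [← h0, Pm]
    apply Finset.single_le_sum (f := fun k =>
      ((Nat.factorial m : ℝ) / (Nat.factorial k : ℝ)) * x ^ k)
    · intro k _
      positivity
    · simp
  have hfac : (0:ℝ) < Nat.factorial m := by exact_mod_cast Nat.factorial_pos m
  rw [Fm]
  have he : (0:ℝ) < Real.exp (-x) := Real.exp_pos _
  calc (0:ℝ) < Real.exp (-x) * (Nat.factorial m : ℝ) := by positivity
  _ ≤ Real.exp (-x) * Pm m x := mul_le_mul_of_nonneg_left hP he.le

lemma Fm_zero (m : ℕ) : Fm m 0 = (Nat.factorial m : ℝ) := by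
  rw [Fm, Pm]
  rw [Finset.sum_eq_single_of_mem 0 (by simp)]
  · simp
  · intro k _ hk
    simp [zero_pow hk]

lemma Fm_strictAnti (m : ℕ) {x y : ℝ} (hx : 0 ≤ x) (hxy : x < y) : Fm m y < Fm m x := by
  have h := intervalIntegral_ef m x y
  have hpos : 0 < ∫ t in x..y, ef m t := by
    apply intervalIntegral.intervalIntegral_pos_of_pos_on
      ((ef_cont m).intervalIntegrable x y) _ hxy
    intro t ht
    exact ef_pos m (lt_of_le_of_lt hx ht.1)
  linarith

lemma Fm_anti (m : ℕ) {x y : ℝ} (hx : 0 ≤ x) (hxy : x ≤ y) : Fm m y ≤ Fm m x := by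
  rcases eq_or_lt_of_le hxy with rfl | h
  · exact le_rfl
  · exact (Fm_strictAnti m hx h).le

lemma Gm_eq_integral (m : ℕ) (x : ℝ) : Gm m x = ∫ t in (0:ℝ)..x, ef m t := by
  rw [intervalIntegral_ef, Fm_zero, Gm]

lemma Gm_zero (m : ℕ) : Gm m 0 = 0 := by
  rw [Gm, Fm_zero, sub_self]

lemma Gm_nonneg (m : ℕ) {x : ℝ} (hx : 0 ≤ x) : 0 ≤ Gm m x := by
  rw [Gm_eq_integral]
  apply intervalIntegral.integral_nonneg hx
  intro u hu
  exact ef_nonneg m hu.1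

lemma Gm_cont (m : ℕ) : Continuous (Gm m) := by
  unfold Gm; exact continuous_const.sub (Fm_cont m)

/-- generic monotonicity helper -/
lemma mono_aux {f f' : ℝ → ℝ} {p q : ℝ}
    (hc : ContinuousOn f (Icc p q))
    (hd : ∀ x ∈ Ioo p q, HasDerivAt f (f' x) x)
    (h0 : ∀ x ∈ Ioo p q, 0 ≤ f' x) : MonotoneOn f (Icc p q) := by
  apply monotoneOn_of_deriv_nonneg (convex_Icc p q) hc
  · intro x hx
    rw [interior_Icc] at hx
    exact (hd x hx).differentiableAt.differentiableWithinAt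
  · intro x hx
    rw [interior_Icc] at hx
    rw [(hd x hx).deriv]
    exact h0 x hx

lemma two_log_le {r : ℝ} (hr : 1 ≤ r) : 2 * Real.log r ≤ r - 1 / r := by
  have hmono : MonotoneOn (fun r : ℝ => r - 1/r - 2*Real.log r) (Icc 1 r) := by
    apply mono_aux (f' := fun x => 1 + 1/x^2 - 2/x)
    · intro x hx
      have hx0 : x ≠ 0 := by
        have := hx.1; intro h; rw [h] at this; linarith
      exact (((continuousAt_id).sub
        (continuousAt_const.div continuousAt_id hx0)).sub
        (continuousAt_const.mul (Real.continuousAt_log hx0))).continuousWithinAt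
    · intro x hx
      have hx0 : (0:ℝ) < x := lt_trans one_pos hx.1
      have h1 : HasDerivAt (fun y : ℝ => y) 1 x := hasDerivAt_id x
      have h2 : HasDerivAt (fun y : ℝ => 1/y) (-(1/x^2)) x := by
        simpa [one_div] using hasDerivAt_inv hx0.ne'
      have h3 : HasDerivAt (fun y : ℝ => 2 * Real.log y) (2 * (1/x)) x := by
        simpa [one_div] using (Real.hasDerivAt_log hx0.ne').const_mul 2
      have h := (h1.sub h2).sub h3
      exact h.congr_deriv (by ring)
    · intro x hx
      have hx0 : (0:ℝ) < x := lt_trans one_pos hx.1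
      have heq : 1 + 1/x^2 - 2/x = (1 - 1/x)^2 := by field_simp; ring
      rw [heq]
      exact sq_nonneg _
  have h := hmono (left_mem_Icc.mpr hr) (right_mem_Icc.mpr hr) hr
  simp only [Real.log_one] at h
  linarith

lemma key_hm (m : ℕ) {u v : ℝ} (hu : 0 < u) (huv : u < v) (h : ef m u = ef m v) :
    2 * u * v ≤ (m : ℝ) * (u + v) := by
  have hv : 0 < v := lt_trans hu huv
  have h1 : (m:ℝ) * Real.log u - u = (m:ℝ) * Real.log v - v := by
    have := h
    rw [ef_eq_exp m hu, ef_eq_exp m hv, Real.exp_eq_exp] at this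
    linarith
  have hid : (m : ℝ) * (Real.log v - Real.log u) = v - u := by linarith
  have hr : 1 < v / u := (one_lt_div hu).mpr huv
  have hlog := two_log_le hr.le
  have hlogpos : 0 < Real.log (v / u) := Real.log_pos hr
  have hlogdiv : Real.log (v / u) = Real.log v - Real.log u := Real.log_div hv.ne' hu.ne'
  have h3 : u * v * ((v/u) - 1/(v/u)) = v^2 - u^2 := by
    field_simp
  have h2 : 2*(u*v)*Real.log (v/u) ≤ u*v*((v/u) - 1/(v/u)) := by
    have := mul_le_mul_of_nonneg_left hlog (by positivity : (0:ℝ) ≤ u*v)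
    nlinarith
  have h4 : (m:ℝ)*(u+v)*Real.log (v/u) = v^2 - u^2 := by
    rw [hlogdiv]
    linear_combination (u+v) * hid
  have h5 : (2*u*v)*Real.log (v/u) ≤ ((m:ℝ)*(u+v))*Real.log (v/u) := by
    rw [h4]
    nlinarith
  exact le_of_mul_le_mul_right h5 hlogpos

lemma R_pointwise (m : ℕ) (hm : 1 ≤ m) {u v : ℝ} (hu : 0 < u) (huv : u ≤ v)
    (hef : ef m u = ef m v) (hkey : 2 * u * v ≤ (m : ℝ) * (u + v))
    {t : ℝ} (ht : 0 ≤ t) (htu : t ≤ u) : ef m (u - t) ≤ ef m (v + t) := by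
  have hv : 0 < v := lt_of_lt_of_le hu huv
  rcases eq_or_lt_of_le htu with hteq | hlt
  · subst hteq
    have h0 : ef m (t - t) = 0 := by
      simp [ef, zero_pow (by omega : m ≠ 0)]
    rw [h0]
    exact ef_nonneg m (by linarith)
  · -- t < u
    have hut : 0 < u - t := by linarith
    have hvt : 0 < v + t := by linarith
    set φ : ℝ → ℝ := fun s => ((m:ℝ) * Real.log (v+s) - (v+s)) - ((m:ℝ) * Real.log (u-s) - (u-s))
      with hφ
    have hmono : MonotoneOn φ (Icc 0 t) := by
      apply mono_aux (f' := fun s => ((m:ℝ) * (v+s)⁻¹ - 1) + ((m:ℝ) * (u-s)⁻¹ - 1))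
      · intro s hs
        have hA : (0:ℝ) < v + s := by linarith [hs.1]
        have hB : (0:ℝ) < u - s := by linarith [hs.2]
        apply ContinuousWithinAt.sub
        · exact ((continuousAt_const.mul ((Real.continuousAt_log hA.ne').comp
            (continuousAt_const.add continuousAt_id))).sub
            (continuousAt_const.add continuousAt_id)).continuousWithinAt
        · exact ((continuousAt_const.mul ((Real.continuousAt_log hB.ne').comp
            (continuousAt_const.sub continuousAt_id))).sub
            (continuousAt_const.sub continuousAt_id)).continuousWithinAt
      · intro s hs
        have hA : (0:ℝ) < v + s := by linarith [hs.1]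
        have hB : (0:ℝ) < u - s := by linarith [hs.2]
        have d1 : HasDerivAt (fun s : ℝ => v + s) 1 s := by
          simpa using (hasDerivAt_id s).const_add v
        have d2 : HasDerivAt (fun s : ℝ => u - s) (-1) s := by
          simpa using (hasDerivAt_id s).const_sub u
        have dl1 : HasDerivAt (fun s : ℝ => Real.log (v + s)) ((v+s)⁻¹ * 1) s :=
          (Real.hasDerivAt_log hA.ne').comp s d1
        have dl2 : HasDerivAt (fun s : ℝ => Real.log (u - s)) ((u-s)⁻¹ * (-1)) s :=
          (Real.hasDerivAt_log hB.ne').comp s d2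
        have h := ((dl1.const_mul (m:ℝ)).sub d1).sub ((dl2.const_mul (m:ℝ)).sub d2)
        exact h.congr_deriv (by ring)
      · intro s hs
        have hA : (0:ℝ) < v + s := by linarith [hs.1]
        have hB : (0:ℝ) < u - s := by linarith [hs.2]
        have hAB : (v+s)*(u-s) ≤ u*v := by nlinarith [hs.1, hs.2]
        have h2 : 2*((v+s)*(u-s)) ≤ (m:ℝ)*(u+v) := by linarith
        have hdiv : (2:ℝ) ≤ ((m:ℝ)*(u+v))/((v+s)*(u-s)) :=
          (le_div_iff₀ (by positivity)).mpr (by linarith)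
        have hsum : (m:ℝ)*(v+s)⁻¹ + (m:ℝ)*(u-s)⁻¹ = ((m:ℝ)*(u+v))/((v+s)*(u-s)) := by
          field_simp
          ring
        linarith [hdiv, hsum.symm ▸ hdiv]
    have hφ0 : φ 0 = 0 := by
      have h1 : (m:ℝ) * Real.log u - u = (m:ℝ) * Real.log v - v := by
        have := hef
        rw [ef_eq_exp m hu, ef_eq_exp m hv, Real.exp_eq_exp] at this
        linarith
      simp only [hφ, add_zero, sub_zero]
      linarith
    have hφt : 0 ≤ φ t := by
      have := hmono (left_mem_Icc.mpr ht) (right_mem_Icc.mpr ht) ht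
      rw [hφ0] at this
      exact this
    rw [ef_eq_exp m hut, ef_eq_exp m hvt, Real.exp_le_exp]
    simp only [hφ] at hφt
    linarith

lemma R_integral (m : ℕ) (hm : 1 ≤ m) {u v : ℝ} (hu : 0 < u) (huv : u ≤ v)
    (hef : ef m u = ef m v) (hkey : 2 * u * v ≤ (m : ℝ) * (u + v)) :
    Gm m u ≤ Fm m v - Fm m (v + u) := by
  have hv : 0 < v := lt_of_lt_of_le hu huv
  rw [Gm_eq_integral]
  have e1 : ∫ t in (0:ℝ)..u, ef m t = ∫ t in (0:ℝ)..u, ef m (u - t) := by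
    rw [intervalIntegral.integral_comp_sub_left (ef m) u]
    norm_num
  have e2 : ∫ t in (0:ℝ)..u, ef m (v + t) = ∫ t in v..(v+u), ef m t := by
    rw [intervalIntegral.integral_comp_add_left (ef m) v]
    norm_num
  rw [e1]
  have hmono : ∫ t in (0:ℝ)..u, ef m (u - t) ≤ ∫ t in (0:ℝ)..u, ef m (v + t) := by
    apply intervalIntegral.integral_mono_on hu.le
    · exact ((ef_cont m).comp (continuous_const.sub continuous_id)).intervalIntegrable 0 u
    · exact ((ef_cont m).comp (continuous_const.add continuous_id)).intervalIntegrable 0 u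
    · intro t htmem
      exact R_pointwise m hm hu huv hef hkey htmem.1 htmem.2
  calc ∫ t in (0:ℝ)..u, ef m (u - t) ≤ ∫ t in (0:ℝ)..u, ef m (v + t) := hmono
  _ = ∫ t in v..(v+u), ef m t := e2
  _ = Fm m v - Fm m (v + u) := intervalIntegral_ef m v (v+u)

lemma median_gt_mode (m : ℕ) : (Nat.factorial m : ℝ) / 2 < Fm m m := by
  rcases Nat.eq_zero_or_pos m with rfl | hm
  · have h0 : ((0:ℕ):ℝ) = 0 := by norm_num
    rw [h0, Fm_zero]
    norm_num
  · have hm1 : 1 ≤ m := hm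
    have hu : (0:ℝ) < m := by exact_mod_cast hm
    have hkey : 2 * (m:ℝ) * (m:ℝ) ≤ (m : ℝ) * ((m:ℝ) + (m:ℝ)) := by ring_nf; exact le_rfl
    have h := R_integral m hm1 hu le_rfl rfl hkey
    have h2 : 0 < Fm m ((m:ℝ) + (m:ℝ)) := Fm_pos m (by positivity)
    rw [Gm] at h
    linarith

lemma C2 (m : ℕ) {x y : ℝ} (hx : 0 < x) (hxy : x ≤ y) :
    ef m x * Fm m y ≤ ef m y * Fm m x := by
  have hy : 0 < y := lt_of_lt_of_le hx hxy
  have hkey : x^m * Pm m y ≤ y^m * Pm m x := by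
    rw [Pm, Pm, Finset.mul_sum, Finset.mul_sum]
    apply Finset.sum_le_sum
    intro k hk
    have hk' : k ≤ m := Nat.lt_succ_iff.mp (Finset.mem_range.mp hk)
    have hc : 0 ≤ (Nat.factorial m : ℝ)/(Nat.factorial k : ℝ) := by positivity
    have h1 : x^m * y^k ≤ y^m * x^k := by
      have hxm : x^m = x^(m-k) * x^k := by rw [← pow_add]; congr 1; omega
      have hym : y^m = y^(m-k) * y^k := by rw [← pow_add]; congr 1; omega
      have h2 : x^(m-k) ≤ y^(m-k) := pow_le_pow_left₀ hx.le hxy _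
      have h3 : (0:ℝ) ≤ x^k * y^k := by positivity
      calc x^m * y^k = x^(m-k) * (x^k * y^k) := by rw [hxm]; ring
      _ ≤ y^(m-k) * (x^k * y^k) := mul_le_mul_of_nonneg_right h2 h3
      _ = y^m * x^k := by rw [hym]; ring
    calc x^m * ((Nat.factorial m : ℝ)/(Nat.factorial k : ℝ) * y^k)
        = ((Nat.factorial m : ℝ)/(Nat.factorial k : ℝ)) * (x^m * y^k) := by ring
    _ ≤ ((Nat.factorial m : ℝ)/(Nat.factorial k : ℝ)) * (y^m * x^k) :=
        mul_le_mul_of_nonneg_left h1 hc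
    _ = y^m * ((Nat.factorial m : ℝ)/(Nat.factorial k : ℝ) * x^k) := by ring
  have hE : (0:ℝ) < Real.exp (-x) * Real.exp (-y) := by positivity
  calc ef m x * Fm m y = (Real.exp (-x) * Real.exp (-y)) * (x^m * Pm m y) := by
        rw [ef, Fm]; ring
  _ ≤ (Real.exp (-x) * Real.exp (-y)) * (y^m * Pm m x) :=
        mul_le_mul_of_nonneg_left hkey hE.le
  _ = ef m y * Fm m x := by rw [ef, Fm]; ring

lemma exp_tail_key (m : ℕ) {x : ℝ} (hx : 0 < x) :
    ((m : ℝ) - x) * (Real.exp x - ∑ k ∈ Finset.range (m + 1), x ^ k / (Nat.factorial k : ℝ))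
      ≤ x ^ (m + 1) / (Nat.factorial m : ℝ) := by
  set S : ℝ := ∑ k ∈ Finset.range (m + 1), x ^ k / (Nat.factorial k : ℝ) with hS
  set T : ℕ → ℝ := fun M => ∑ k ∈ Finset.range M, x ^ k / (Nat.factorial k : ℝ) with hT
  have haux : ∀ j : ℕ, ((m:ℝ) - x) * (T (m + 1 + j) - S)
      + x ^ (m + 1 + j) / (Nat.factorial (m + j) : ℝ)
      ≤ x ^ (m + 1) / (Nat.factorial m : ℝ) := by
    intro j
    induction j with
    | zero =>
      simp only [Nat.add_zero, hT, hS, sub_self, mul_zero, zero_add]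
      exact le_rfl
    | succ j ih =>
      have hidx1 : m + 1 + (j + 1) = (m + 1 + j) + 1 := by omega
      have hidx2 : m + (j + 1) = m + 1 + j := by omega
      rw [hidx1, hidx2]
      have hsumK : T (m + 1 + j + 1) = T (m + 1 + j)
          + x ^ (m + 1 + j) / (Nat.factorial (m + 1 + j) : ℝ) := by
        simp only [hT, Finset.sum_range_succ]
      rw [hsumK]
      have hfacjpos : (0:ℝ) < (Nat.factorial (m + j) : ℝ) := by
        exact_mod_cast Nat.factorial_pos (m + j)
      have hfacsucc : (Nat.factorial (m + 1 + j) : ℝ)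
          = ((m + j + 1 : ℕ) : ℝ) * (Nat.factorial (m + j) : ℝ) := by
        rw [show m + 1 + j = (m + j) + 1 from by omega, Nat.factorial_succ]
        push_cast
        ring
      have hCpos : (0:ℝ) < ((m + j + 1 : ℕ) : ℝ) := by
        exact_mod_cast Nat.succ_pos (m + j)
      have hxK : (0:ℝ) ≤ x ^ (m + 1 + j) := by positivity
      have hmC : (m:ℝ) ≤ ((m + j + 1 : ℕ) : ℝ) := by
        exact_mod_cast (by omega : m ≤ m + j + 1)
      have hstep : ((m:ℝ) - x) * (x ^ (m + 1 + j) / (Nat.factorial (m + 1 + j) : ℝ))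
          + x ^ (m + 1 + j + 1) / (Nat.factorial (m + 1 + j) : ℝ)
          ≤ x ^ (m + 1 + j) / (Nat.factorial (m + j) : ℝ) := by
        rw [hfacsucc, pow_succ]
        have expand : ((m:ℝ) - x) * (x ^ (m + 1 + j)
              / (((m + j + 1 : ℕ) : ℝ) * (Nat.factorial (m + j) : ℝ)))
            + x ^ (m + 1 + j) * x / (((m + j + 1 : ℕ) : ℝ) * (Nat.factorial (m + j) : ℝ))
            = ((m:ℝ) * x ^ (m + 1 + j))
              / (((m + j + 1 : ℕ) : ℝ) * (Nat.factorial (m + j) : ℝ)) := by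
          field_simp
          ring
        rw [expand, div_le_div_iff₀ (by positivity) hfacjpos]
        nlinarith [mul_le_mul_of_nonneg_right (mul_le_mul_of_nonneg_right hmC hxK)
          hfacjpos.le]
      have hexp2 : ((m:ℝ) - x) * (T (m + 1 + j)
            + x ^ (m + 1 + j) / (Nat.factorial (m + 1 + j) : ℝ) - S)
          = ((m:ℝ) - x) * (T (m + 1 + j) - S)
            + ((m:ℝ) - x) * (x ^ (m + 1 + j) / (Nat.factorial (m + 1 + j) : ℝ)) := by
        ring
      rw [hexp2]
      linarith [ih, hstep]
  have hmain : ∀ j : ℕ, ((m:ℝ) - x) * (T (m + 1 + j) - S)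
      ≤ x ^ (m + 1) / (Nat.factorial m : ℝ) := by
    intro j
    have hpos : (0:ℝ) ≤ x ^ (m + 1 + j) / (Nat.factorial (m + j) : ℝ) := by positivity
    linarith [haux j]
  have htendT : Filter.Tendsto T Filter.atTop (nhds (Real.exp x)) := by
    have hs : HasSum (fun n : ℕ => x ^ n / (Nat.factorial n : ℝ)) (Real.exp x) := by
      rw [Real.exp_eq_exp_ℝ]
      exact NormedSpace.expSeries_div_hasSum_exp x
    exact hs.tendsto_sum_nat
  have htend2 : Filter.Tendsto (fun j => ((m:ℝ) - x) * (T (m + 1 + j) - S)) Filter.atTop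
      (nhds (((m:ℝ) - x) * (Real.exp x - S))) := by
    have hshift : Filter.Tendsto (fun j : ℕ => m + 1 + j) Filter.atTop Filter.atTop := by
      apply Filter.tendsto_atTop_atTop.mpr
      intro b
      exact ⟨b, fun a ha => by omega⟩
    exact ((htendT.comp hshift).sub tendsto_const_nhds).const_mul _
  exact le_of_tendsto htend2 (Filter.Eventually.of_forall hmain)

lemma C1 (m : ℕ) {x y : ℝ} (hx : 0 < x) (hxy : x ≤ y) :
    ef m y * Gm m x ≤ ef m x * Gm m y := by
  have hy : 0 < y := lt_of_lt_of_le hx hxy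
  set h : ℝ → ℝ := fun z => ((Nat.factorial m : ℝ) * Real.exp z - Pm m z) / z ^ m with hh
  have hfacpos : (0:ℝ) < (Nat.factorial m : ℝ) := by exact_mod_cast Nat.factorial_pos m
  have hident : ∀ z : ℝ, 0 < z → Gm m z = h z * ef m z := by
    intro z hz
    have hzm : z ^ m ≠ 0 := by positivity
    rw [Gm, Fm, ef, hh, Real.exp_neg]
    field_simp
  have hinner : ∀ z : ℝ, 0 < z →
      0 ≤ ((Nat.factorial m : ℝ) * Real.exp z
          - ∑ k ∈ Finset.range m, ((Nat.factorial m : ℝ) / (Nat.factorial k : ℝ)) * z ^ k) * z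
        - (m:ℝ) * ((Nat.factorial m : ℝ) * Real.exp z - Pm m z) := by
    intro z hz
    set S : ℝ := ∑ k ∈ Finset.range (m + 1), z ^ k / (Nat.factorial k : ℝ) with hSd
    have hPS : Pm m z = (Nat.factorial m : ℝ) * S := by
      rw [Pm, hSd, Finset.mul_sum]
      apply Finset.sum_congr rfl
      intro k _
      ring
    have hP1 : Pm m z = (∑ k ∈ Finset.range m,
        ((Nat.factorial m : ℝ) / (Nat.factorial k : ℝ)) * z ^ k) + z ^ m :=
      Pm_eq_deriv_add m z
    have htail := exp_tail_key m hz
    have h3 : (Nat.factorial m : ℝ) * (((m:ℝ) - z) * (Real.exp z - S)) ≤ z ^ (m + 1) := by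
      have := mul_le_mul_of_nonneg_left htail hfacpos.le
      calc (Nat.factorial m : ℝ) * (((m:ℝ) - z) * (Real.exp z - S))
          ≤ (Nat.factorial m : ℝ) * (z ^ (m+1) / (Nat.factorial m : ℝ)) := this
      _ = z ^ (m + 1) := by field_simp
    have hidentity : ((Nat.factorial m : ℝ) * Real.exp z
          - ∑ k ∈ Finset.range m, ((Nat.factorial m : ℝ) / (Nat.factorial k : ℝ)) * z ^ k) * z
        - (m:ℝ) * ((Nat.factorial m : ℝ) * Real.exp z - Pm m z)
        = -((Nat.factorial m : ℝ) * (((m:ℝ) - z) * (Real.exp z - S))) + z ^ (m + 1) := by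
      have e1 : (∑ k ∈ Finset.range m,
          ((Nat.factorial m : ℝ) / (Nat.factorial k : ℝ)) * z ^ k) = Pm m z - z ^ m := by
        rw [hP1]; ring
      rw [e1, hPS]
      ring
    rw [hidentity]
    linarith
  have hmono : MonotoneOn h (Icc x y) := by
    apply mono_aux (f' := fun z =>
      (((Nat.factorial m : ℝ) * Real.exp z
          - ∑ k ∈ Finset.range m, ((Nat.factorial m : ℝ) / (Nat.factorial k : ℝ)) * z ^ k) * z ^ m
        - ((Nat.factorial m : ℝ) * Real.exp z - Pm m z) * ((m:ℝ) * z ^ (m - 1))) / (z ^ m) ^ 2)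
    · intro z hz
      have hz0 : (0:ℝ) < z := lt_of_lt_of_le hx hz.1
      have hzm : z ^ m ≠ 0 := by positivity
      apply ContinuousWithinAt.div
      · exact ((continuousAt_const.mul Real.continuous_exp.continuousAt).sub
          (by unfold Pm; exact (continuous_finset_sum _ fun k _ =>
            continuous_const.mul (continuous_pow k)).continuousAt)).continuousWithinAt
      · exact (continuous_pow m).continuousAt.continuousWithinAt
      · exact hzm
    · intro z hz
      have hz0 : (0:ℝ) < z := lt_trans hx hz.1
      have hzm : z ^ m ≠ 0 := by positivity
      have dnum : HasDerivAt (fun z => (Nat.factorial m : ℝ) * Real.exp z - Pm m z)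
          ((Nat.factorial m : ℝ) * Real.exp z
            - ∑ k ∈ Finset.range m, ((Nat.factorial m : ℝ) / (Nat.factorial k : ℝ)) * z ^ k) z :=
        ((Real.hasDerivAt_exp z).const_mul _).sub (hasDerivAt_Pm m z)
      have dden : HasDerivAt (fun z : ℝ => z ^ m) ((m:ℝ) * z ^ (m - 1)) z := by
        simpa using hasDerivAt_pow m z
      exact dnum.div dden hzm
    · intro z hz
      have hz0 : (0:ℝ) < z := lt_trans hx hz.1
      apply div_nonneg _ (sq_nonneg _)
      rcases Nat.eq_zero_or_pos m with rfl | hm1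
      · simp only [pow_zero, mul_one, Nat.cast_zero, zero_mul, mul_zero, sub_zero,
          Nat.factorial_zero, Nat.cast_one, one_mul, Finset.range_zero, Finset.sum_empty,
          sub_zero]
        positivity
      · have hzsplit : z ^ m = z ^ (m - 1) * z := by
          rw [← pow_succ]
          congr 1
          omega
        have hfact : ((Nat.factorial m : ℝ) * Real.exp z
            - ∑ k ∈ Finset.range m, ((Nat.factorial m : ℝ) / (Nat.factorial k : ℝ)) * z ^ k) * z ^ m
            - ((Nat.factorial m : ℝ) * Real.exp z - Pm m z) * ((m:ℝ) * z ^ (m - 1))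
            = z ^ (m - 1) * ((((Nat.factorial m : ℝ) * Real.exp z
              - ∑ k ∈ Finset.range m, ((Nat.factorial m : ℝ) / (Nat.factorial k : ℝ)) * z ^ k)) * z
              - (m:ℝ) * ((Nat.factorial m : ℝ) * Real.exp z - Pm m z)) := by
          rw [hzsplit]
          ring
        rw [hfact]
        exact mul_nonneg (by positivity) (hinner z hz0)
  have hhxy : h x ≤ h y := hmono (left_mem_Icc.mpr hxy) (right_mem_Icc.mpr hxy) hxy
  have hefx : 0 < ef m x := ef_pos m hx
  have hefy : 0 < ef m y := ef_pos m hy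
  calc ef m y * Gm m x = h x * (ef m x * ef m y) := by rw [hident x hx]; ring
  _ ≤ h y * (ef m x * ef m y) := mul_le_mul_of_nonneg_right hhxy (by positivity)
  _ = ef m x * Gm m y := by rw [hident y hy]; ring

lemma claimC (m : ℕ) {β c : ℝ} (hβ : 0 < β) (hc : 0 ≤ c)
    (h1 : Gm m β = Fm m c) (h2 : Fm m c ≤ (Nat.factorial m : ℝ) / 2) :
    ef m c ≤ ef m β := by
  have hmed := median_gt_mode m
  have hcm : (m:ℝ) < c := by
    by_contra hno
    push_neg at hno
    have := Fm_anti m hc hno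
    linarith
  by_contra hno
  push_neg at hno
  have hefcm : ef m c ≤ ef m (m:ℝ) := ef_anti m le_rfl hcm.le
  rcases le_or_gt (m:ℝ) β with hβm | hβm
  · have hcβ : c < β := by
      by_contra h'
      push_neg at h'
      exact absurd (ef_anti m hβm h') (not_le.mpr hno)
    have h3 : Fm m β < Fm m c := Fm_strictAnti m hc hcβ
    rw [Gm] at h1
    linarith
  · have hm1 : 1 ≤ m := by
      rcases Nat.eq_zero_or_pos m with rfl | h'
      · exfalso
        simp only [Nat.cast_zero] at hβm
        linarith
      · exact h'
    have hcont : ContinuousOn (ef m) (Icc β (m:ℝ)) := (ef_cont m).continuousOn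
    have hmem : ef m c ∈ Ioc (ef m β) (ef m (m:ℝ)) := ⟨hno, hefcm⟩
    obtain ⟨β', hβ'mem, hβ'eq⟩ := intermediate_value_Ioc hβm.le hcont hmem
    have hβ'pos : 0 < β' := lt_trans hβ hβ'mem.1
    have hβ'c : β' < c := lt_of_le_of_lt hβ'mem.2 hcm
    have hkey := key_hm m hβ'pos hβ'c hβ'eq
    have hR := R_integral m hm1 hβ'pos hβ'c.le hβ'eq hkey
    have h4 : Gm m β' ≤ Fm m c := by
      have := Fm_pos m (show (0:ℝ) ≤ c + β' by linarith)
      linarith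
    have h5 : Gm m β < Gm m β' := by
      have := Fm_strictAnti m hβ.le hβ'mem.1
      rw [Gm, Gm]
      linarith
    linarith [h1 ▸ h5]

end TrapAux

end

open TrapAux in
/-- A trapezoid of measure at most `1/2` has boundary measure at least that of the
complement of a simplex of the same measure: if `0 ≤ a ≤ b`, `c ≥ 0` and
`∫_a^b e^{-t} t^{n−1} dt = ∫_c^∞ e^{-t} t^{n−1} dt ≤ (n−1)!/2`, then
`e^{-a} a^{n−1} + e^{-b} b^{n−1} ≥ e^{-c} c^{n−1}`. -/
theorem trapezoid_vs_complement_boundary (n : ℕ) (hn : 1 ≤ n) (a b c : ℝ)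
    (ha : 0 ≤ a) (hab : a ≤ b) (hc : 0 ≤ c)
    (heq : ∫ t in a..b, Real.exp (-t) * t ^ (n - 1)
      = ∫ t in Set.Ioi c, Real.exp (-t) * t ^ (n - 1))
    (hle : ∫ t in Set.Ioi c, Real.exp (-t) * t ^ (n - 1)
      ≤ (1 / 2 : ℝ) * (Nat.factorial (n - 1) : ℝ)) :
    Real.exp (-c) * c ^ (n - 1)
      ≤ Real.exp (-a) * a ^ (n - 1) + Real.exp (-b) * b ^ (n - 1) := by
  set m : ℕ := n - 1 with hm
  have heq' : ∫ t in a..b, ef m t = ∫ t in Set.Ioi c, ef m t := heq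
  have hle' : ∫ t in Set.Ioi c, ef m t ≤ (1 / 2 : ℝ) * (Nat.factorial m : ℝ) := hle
  rw [intervalIntegral_ef m a b, integral_Ioi_ef m hc] at heq'
  rw [integral_Ioi_ef m hc] at hle'
  set s : ℝ := Fm m c with hs
  have hfacpos : (0:ℝ) < (Nat.factorial m : ℝ) := by exact_mod_cast Nat.factorial_pos m
  have hs_pos : 0 < s := Fm_pos m hc
  have hs_le : s ≤ (Nat.factorial m : ℝ) / 2 := by linarith
  have hb0 : 0 ≤ b := le_trans ha hab
  have hFb_pos : 0 < Fm m b := Fm_pos m hb0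
  have hFa_le : Fm m a ≤ (Nat.factorial m : ℝ) := by
    have := Fm_anti m le_rfl ha
    rw [Fm_zero] at this
    exact this
  have hc_pos : 0 < c := by
    rcases eq_or_lt_of_le hc with h0 | h0
    · exfalso
      have : s = (Nat.factorial m : ℝ) := by rw [hs, ← h0, Fm_zero]
      linarith
    · exact h0
  -- find β with Gm β = s
  have hGc : Gm m c = (Nat.factorial m : ℝ) - s := by rw [Gm]
  have hmemIcc : s ∈ Icc (Gm m 0) (Gm m c) := by
    constructor
    · rw [Gm_zero]; exact hs_pos.le
    · rw [hGc]; linarith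
  obtain ⟨β, hβmem, hβeq⟩ := intermediate_value_Icc hc (Gm_cont m).continuousOn hmemIcc
  have hβpos : 0 < β := by
    rcases eq_or_lt_of_le hβmem.1 with h0 | h0
    · exfalso
      rw [← h0, Gm_zero] at hβeq
      linarith
    · exact h0
  have hFβ : Fm m β = (Nat.factorial m : ℝ) - s := by
    rw [Gm] at hβeq
    linarith
  have hβb : β ≤ b := by
    by_contra h'
    push_neg at h'
    have := Fm_strictAnti m hb0 h'
    rw [hFβ] at this
    linarith
  have hClaim : ef m c ≤ ef m β := claimC m hβpos hc (by rw [hβeq]) hs_le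
  have hC1 : ef m c * Gm m a ≤ ef m a * Gm m c := by
    rcases eq_or_lt_of_le ha with h0 | h0
    · rw [← h0]
      have : Gm m 0 = 0 := Gm_zero m
      rw [this, mul_zero]
      exact mul_nonneg (ef_nonneg m le_rfl) (Gm_nonneg m hc)
    · have hac : a ≤ c := by
        by_contra h'
        push_neg at h'
        have := Fm_strictAnti m hc h'
        rw [← hs] at this
        linarith
      exact C1 m h0 hac
  have hC2 : ef m β * Fm m b ≤ ef m b * Fm m β := C2 m hβpos hβb
  have hGaFb : Gm m a + Fm m b = (Nat.factorial m : ℝ) - s := by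
    rw [Gm]
    linarith
  have hD_pos : 0 < (Nat.factorial m : ℝ) - s := by linarith
  have hstep1 : ef m c * Fm m b ≤ ef m b * Fm m β :=
    le_trans (mul_le_mul_of_nonneg_right hClaim hFb_pos.le) hC2
  have hfinal : ef m c * ((Nat.factorial m : ℝ) - s)
      ≤ (ef m a + ef m b) * ((Nat.factorial m : ℝ) - s) := by
    calc ef m c * ((Nat.factorial m : ℝ) - s)
        = ef m c * Gm m a + ef m c * Fm m b := by rw [← hGaFb]; ring
    _ ≤ ef m a * Gm m c + ef m b * Fm m β := add_le_add hC1 hstep1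
    _ = (ef m a + ef m b) * ((Nat.factorial m : ℝ) - s) := by rw [hGc, hFβ]; ring
  have hend := le_of_mul_le_mul_right hfinal hD_pos
  exact hend
end

section
/- Let n ≥ 1 be an integer and let 0 ≤ a ≤ b and c ≥ 0 be real numbers satisfying ∫_a^b e^{-t} t^{n−1} dt = ∫_0^c e^{-t} t^{n−1} dt ≥ (1/2)·(n−1)!. Then e^{-a} a^{n−1} + e^{-b} b^{n−1} ≥ e^{-c} c^{n−1}. (In isoperimetric terms: a trapezoid of measure at least 1/2 has boundary measure at least that of the simplex of the same measure.) -/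
open MeasureTheory Real Set
open Filter Topology

namespace TrapAux

noncomputable def f (m : ℕ) (t : ℝ) : ℝ := Real.exp (-t) * t ^ m

noncomputable def D (m : ℕ) (t : ℝ) : ℝ :=
  Real.exp (-t) * ((m : ℝ) * t ^ (m - 1) - t ^ m)

lemma f_cont (m : ℕ) : Continuous (f m) := by
  unfold f; fun_prop

lemma D_cont (m : ℕ) : Continuous (D m) := by
  unfold D; fun_prop

lemma f_nonneg (m : ℕ) {t : ℝ} (ht : 0 ≤ t) : 0 ≤ f m t := by
  unfold f; positivity

lemma f_pos (m : ℕ) {t : ℝ} (ht : 0 < t) : 0 < f m t := by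
  unfold f; positivity

lemma f_intInt (m : ℕ) (x y : ℝ) : IntervalIntegrable (f m) volume x y :=
  (f_cont m).intervalIntegrable x y

lemma f_hasDeriv (m : ℕ) (t : ℝ) : HasDerivAt (f m) (D m t) t := by
  have h1 : HasDerivAt (fun t : ℝ => Real.exp (-t)) (-Real.exp (-t)) t := by
    simpa [Function.comp_def] using ((Real.hasDerivAt_exp (-t)).comp t ((hasDerivAt_id t).neg))
  have h2 : HasDerivAt (fun t : ℝ => t ^ m) ((m : ℝ) * t ^ (m - 1)) t := by
    simpa using hasDerivAt_pow m t
  have := h1.mul h2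
  refine this.congr_deriv ?_
  unfold D; ring

lemma ftc (m : ℕ) (x y : ℝ) :
    f m y - f m x = ∫ t in x..y, D m t :=
  (intervalIntegral.integral_eq_sub_of_hasDerivAt (fun t _ => f_hasDeriv m t)
    ((D_cont m).intervalIntegrable x y)).symm

lemma f_zero (m : ℕ) (hm : 1 ≤ m) : f m 0 = 0 := by
  unfold f
  rw [zero_pow (by omega), mul_zero]

lemma f_eq_gammaIntegrand (m : ℕ) :
    (fun x : ℝ => Real.exp (-x) * x ^ (((m : ℝ) + 1) - 1)) = f m := by
  funext x
  rw [add_sub_cancel_right, Real.rpow_natCast]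
  rfl

lemma f_integrableOn (m : ℕ) : IntegrableOn (f m) (Ioi 0) := by
  have := Real.GammaIntegral_convergent (s := (m : ℝ) + 1) (by positivity)
  rwa [f_eq_gammaIntegrand m] at this

lemma f_total (m : ℕ) : ∫ t in Ioi (0:ℝ), f m t = (Nat.factorial m : ℝ) := by
  have h1 := Real.Gamma_eq_integral (s := (m : ℝ) + 1) (by positivity)
  rw [f_eq_gammaIntegrand m] at h1
  rw [← h1, Real.Gamma_nat_eq_factorial]

lemma F_le_total (m : ℕ) {x : ℝ} (hx : 0 ≤ x) :
    (∫ t in (0:ℝ)..x, f m t) ≤ (Nat.factorial m : ℝ) := by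
  rw [intervalIntegral.integral_of_le hx, ← f_total m]
  apply setIntegral_mono_set (f_integrableOn m)
  · filter_upwards [ae_restrict_mem measurableSet_Ioi] with t ht
    exact mul_nonneg (Real.exp_nonneg _) (pow_nonneg (le_of_lt ht) m)
  · exact HasSubset.Subset.eventuallyLE Ioc_subset_Ioi_self

lemma F_tendsto (m : ℕ) :
    Tendsto (fun x => ∫ t in (0:ℝ)..x, f m t) atTop (𝓝 (Nat.factorial m : ℝ)) := by
  rw [← f_total m]
  exact intervalIntegral_tendsto_integral_Ioi 0 (f_integrableOn m) tendsto_id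

lemma F_lt_F (m : ℕ) {x y : ℝ} (hx : 0 ≤ x) (hxy : x < y) :
    (∫ t in (0:ℝ)..x, f m t) < ∫ t in (0:ℝ)..y, f m t := by
  have hadd : (∫ t in (0:ℝ)..x, f m t) + (∫ t in x..y, f m t) = ∫ t in (0:ℝ)..y, f m t :=
    intervalIntegral.integral_add_adjacent_intervals (f_intInt m 0 x) (f_intInt m x y)
  have hpos : 0 < ∫ t in x..y, f m t := by
    apply intervalIntegral.intervalIntegral_pos_of_pos_on (f_intInt m x y)
    · intro t ht
      exact f_pos m (lt_of_le_of_lt hx ht.1)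
    · exact hxy
  linarith

lemma le_of_F_le (m : ℕ) {x y : ℝ} (hy : 0 ≤ y)
    (h : (∫ t in (0:ℝ)..x, f m t) ≤ ∫ t in (0:ℝ)..y, f m t) : x ≤ y := by
  by_contra hxy
  exact absurd h (not_le.mpr (F_lt_F m hy (not_le.mp hxy)))

lemma F_nonneg (m : ℕ) {x : ℝ} (hx : 0 ≤ x) : 0 ≤ ∫ t in (0:ℝ)..x, f m t := by
  apply intervalIntegral.integral_nonneg hx
  intro t ht
  exact f_nonneg m ht.1


lemma log_le_half {r : ℝ} (hr : 1 ≤ r) : Real.log r ≤ (r - 1 / r) / 2 := by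
  rcases eq_or_lt_of_le hr with h | h
  · rw [← h]; simp
  · have hl : 0 < Real.log r := Real.log_pos h
    have h2 := Real.self_lt_sinh_iff.mpr hl
    rw [Real.sinh_eq, Real.exp_log (by linarith), Real.exp_neg,
      Real.exp_log (by linarith)] at h2
    rw [one_div]
    linarith

lemma phi_lt (m : ℕ) {x y : ℝ} (hm : (m : ℝ) ≤ x) (hx : 0 < x) (hxy : x < y) :
    (m : ℝ) * Real.log y - y < (m : ℝ) * Real.log x - x := by
  have hyx : 1 < y / x := (one_lt_div hx).mpr hxy
  have h1 : Real.log (y / x) < y / x - 1 :=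
    Real.log_lt_sub_one_of_pos (by positivity) (ne_of_gt hyx)
  have h2 : Real.log (y / x) = Real.log y - Real.log x :=
    Real.log_div (by linarith) (ne_of_gt hx)
  have h3 : 0 < Real.log (y / x) := Real.log_pos hyx
  have h4 : x * (y / x - 1) = y - x := by field_simp
  nlinarith [mul_lt_mul_of_pos_left h1 hx, mul_le_mul_of_nonneg_right hm h3.le]

lemma phi_le (m : ℕ) {x y : ℝ} (hm : (m : ℝ) ≤ x) (hx : 0 < x) (hxy : x ≤ y) :
    (m : ℝ) * Real.log y - y ≤ (m : ℝ) * Real.log x - x := by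
  rcases eq_or_lt_of_le hxy with h | h
  · rw [h]
  · exact (phi_lt m hm hx h).le

lemma f_eq_exp_phi (m : ℕ) {x : ℝ} (hx : 0 < x) :
    f m x = Real.exp ((m : ℝ) * Real.log x - x) := by
  unfold f
  rw [sub_eq_add_neg, Real.exp_add, Real.exp_nat_mul, Real.exp_log hx, mul_comm]

lemma f_antitone (m : ℕ) {x y : ℝ} (hm : (m : ℝ) ≤ x) (hx : 0 < x) (hxy : x ≤ y) :
    f m y ≤ f m x := by
  rw [f_eq_exp_phi m hx, f_eq_exp_phi m (lt_of_lt_of_le hx hxy)]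
  exact Real.exp_le_exp.mpr (phi_le m hm hx hxy)

lemma phi_eq_of_f_eq (m : ℕ) {p c : ℝ} (hp : 0 < p) (hc : 0 < c) (h : f m p = f m c) :
    (m : ℝ) * Real.log p - p = (m : ℝ) * Real.log c - c := by
  rw [f_eq_exp_phi m hp, f_eq_exp_phi m hc] at h
  exact Real.exp_eq_exp.mp h

lemma conj_sum (m : ℕ) (hm : 1 ≤ m) {p c : ℝ} (hp : 0 < p) (hpm : p ≤ (m : ℝ))
    (hmc : (m : ℝ) ≤ c)
    (hpc : (m : ℝ) * Real.log p - p = (m : ℝ) * Real.log c - c) :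
    2 * p * c ≤ (m : ℝ) * (p + c) := by
  have hm1 : (1 : ℝ) ≤ (m : ℝ) := by exact_mod_cast hm
  have hc : (0 : ℝ) < c := lt_of_lt_of_le (by linarith) hmc
  rcases le_or_gt (2 * p) (m : ℝ) with h | h
  · nlinarith
  · have hd : (0 : ℝ) < 2 * p - m := by linarith
    set q : ℝ := (m : ℝ) * p / (2 * p - m) with hqdef
    have hqd : q * (2 * p - m) = (m : ℝ) * p := div_mul_cancel₀ _ (ne_of_gt hd)
    have hq : (m : ℝ) ≤ q := by
      rw [hqdef, le_div_iff₀ hd]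
      nlinarith
    have hq0 : (0 : ℝ) < q := lt_of_lt_of_le (by linarith) hq
    have hpq : p ≤ q := le_trans hpm hq
    have hr : 1 ≤ q / p := (one_le_div hp).mpr hpq
    have hlog : Real.log (q / p) ≤ (q / p - 1 / (q / p)) / 2 := log_le_half hr
    have hiden : (m : ℝ) * ((q / p - 1 / (q / p)) / 2) = q - p := by
      rw [one_div_div]
      field_simp
      nlinarith [hqd]
    have hlq : Real.log (q / p) = Real.log q - Real.log p :=
      Real.log_div (ne_of_gt hq0) (ne_of_gt hp)
    have hphiq : (m : ℝ) * Real.log q - q ≤ (m : ℝ) * Real.log p - p := by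
      have := mul_le_mul_of_nonneg_left hlog (by positivity : (0:ℝ) ≤ (m:ℝ))
      rw [hiden, hlq] at this
      linarith
    have hcq : c ≤ q := by
      by_contra hcon
      have := phi_lt m hq hq0 (not_le.mp hcon)
      rw [hpc] at hphiq
      linarith
    nlinarith [mul_le_mul_of_nonneg_left hcq (le_of_lt hd)]


lemma refl_phi (m : ℕ) {p c x : ℝ} (hp : 0 < p) (hpc : p ≤ c)
    (hphi : (m : ℝ) * Real.log p - p ≤ (m : ℝ) * Real.log c - c)
    (hsum : 2 * p * c ≤ (m : ℝ) * (p + c))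
    (hx : 0 < x) (hxp : x ≤ p) :
    (m : ℝ) * Real.log x - x ≤ (m : ℝ) * Real.log (c + p - x) - (c + p - x) := by
  have hc : 0 < c := lt_of_lt_of_le hp hpc
  set u₀ : ℝ := p - x with hu₀def
  have hu₀0 : 0 ≤ u₀ := by rw [hu₀def]; linarith
  set ψ : ℝ → ℝ := fun u =>
    ((m : ℝ) * Real.log (c + u) - (c + u)) - ((m : ℝ) * Real.log (p - u) - (p - u)) with hψdef
  have hDer : ∀ u ∈ Ioo (0:ℝ) u₀,
      HasDerivAt ψ (((m : ℝ) / (c + u) - 1) + ((m : ℝ) / (p - u) - 1)) u := by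
    intro u hu
    have hcu : (0 : ℝ) < c + u := by have := hu.1; linarith
    have hpu : (0 : ℝ) < p - u := by
      have h := hu.2; rw [hu₀def] at h; linarith
    have h1 : HasDerivAt (fun u : ℝ => c + u) 1 u := by
      simpa using (hasDerivAt_id u).const_add c
    have h2 : HasDerivAt (fun u : ℝ => p - u) (-1) u := by
      simpa using (hasDerivAt_id u).const_sub p
    have hl1 : HasDerivAt (fun u : ℝ => Real.log (c + u)) ((c + u)⁻¹ * 1) u :=
      (Real.hasDerivAt_log (ne_of_gt hcu)).comp u h1
    have hl2 : HasDerivAt (fun u : ℝ => Real.log (p - u)) ((p - u)⁻¹ * (-1)) u :=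
      (Real.hasDerivAt_log (ne_of_gt hpu)).comp u h2
    have := (((hl1.const_mul (m:ℝ)).sub h1).sub ((hl2.const_mul (m:ℝ)).sub h2))
    refine this.congr_deriv ?_
    ring
  have hne1 : ∀ u ∈ Icc (0:ℝ) u₀, c + u ≠ 0 := by
    intro u hu; have := hu.1; exact ne_of_gt (by linarith)
  have hne2 : ∀ u ∈ Icc (0:ℝ) u₀, p - u ≠ 0 := by
    intro u hu
    have h := hu.2; rw [hu₀def] at h
    exact ne_of_gt (by linarith)
  have hmono : MonotoneOn ψ (Icc 0 u₀) := by
    apply monotoneOn_of_deriv_nonneg (convex_Icc _ _)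
    · apply ContinuousOn.sub
      · exact (continuousOn_const.mul
          (((continuousOn_const.add continuousOn_id).log hne1))).sub
          (continuousOn_const.add continuousOn_id)
      · exact (continuousOn_const.mul
          (((continuousOn_const.sub continuousOn_id).log hne2))).sub
          (continuousOn_const.sub continuousOn_id)
    · rw [interior_Icc]
      intro u hu
      exact (hDer u hu).differentiableAt.differentiableWithinAt
    · rw [interior_Icc]
      intro u hu
      rw [(hDer u hu).deriv]
      have hcu : (0 : ℝ) < c + u := by have := hu.1; linarith
      have hpu : (0 : ℝ) < p - u := by
        have h := hu.2; rw [hu₀def] at h; linarith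
      have key : 2 * (c + u) * (p - u) ≤ (m : ℝ) * ((c + u) + (p - u)) := by
        nlinarith [hu.1.le, mul_nonneg hu.1.le (sub_nonneg.mpr hpc), sq_nonneg u]
      have heq2 : ((m : ℝ) / (c + u) - 1) + ((m : ℝ) / (p - u) - 1)
          = ((m : ℝ) * ((c + u) + (p - u)) - 2 * (c + u) * (p - u)) / ((c + u) * (p - u)) := by
        field_simp
        ring
      rw [heq2]
      exact div_nonneg (by linarith) (by positivity)
  have h0mem : (0 : ℝ) ∈ Icc (0:ℝ) u₀ := ⟨le_refl _, hu₀0⟩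
  have h1mem : u₀ ∈ Icc (0:ℝ) u₀ := ⟨hu₀0, le_refl _⟩
  have hψle := hmono h0mem h1mem hu₀0
  have hψ0 : ψ 0 = ((m : ℝ) * Real.log c - c) - ((m : ℝ) * Real.log p - p) := by
    simp [hψdef]
  have hψ1 : ψ u₀ = ((m : ℝ) * Real.log (c + p - x) - (c + p - x))
      - ((m : ℝ) * Real.log x - x) := by
    rw [hψdef, hu₀def]
    have e1 : c + (p - x) = c + p - x := by ring
    have e2 : p - (p - x) = x := by ring
    simp only [e1, e2]
  rw [hψ0, hψ1] at hψle
  linarith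


lemma reflection_claim (m : ℕ) (hm : 1 ≤ m) {p c : ℝ} (hp : 0 < p) (hpc : p ≤ c)
    (hphi : (m : ℝ) * Real.log p - p ≤ (m : ℝ) * Real.log c - c)
    (hsum : 2 * p * c ≤ (m : ℝ) * (p + c)) :
    (∫ t in (0:ℝ)..p, f m t) + (∫ t in (0:ℝ)..c, f m t) ≤ (Nat.factorial m : ℝ) := by
  have hc : 0 < c := lt_of_lt_of_le hp hpc
  have hpt : ∀ t ∈ Icc (0:ℝ) p, f m t ≤ f m (c + p - t) := by
    intro t ht
    rcases eq_or_lt_of_le ht.1 with h0 | h0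
    · rw [← h0, f_zero m hm]
      exact f_nonneg m (by linarith [ht.2])
    · have h1 := refl_phi m hp hpc hphi hsum h0 ht.2
      rw [f_eq_exp_phi m h0, f_eq_exp_phi m (show (0:ℝ) < c + p - t by linarith [ht.2])]
      exact Real.exp_le_exp.mpr h1
  have hcompcont : Continuous (fun t : ℝ => f m (c + p - t)) :=
    (f_cont m).comp (by fun_prop)
  have hmono2 : (∫ t in (0:ℝ)..p, f m t) ≤ ∫ t in (0:ℝ)..p, f m (c + p - t) :=
    intervalIntegral.integral_mono_on hp.le (f_intInt m 0 p)
      (hcompcont.intervalIntegrable 0 p) hpt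
  have hcomp : (∫ t in (0:ℝ)..p, f m (c + p - t)) = ∫ t in c..(c+p), f m t := by
    have h := intervalIntegral.integral_comp_sub_left (a := (0:ℝ)) (b := p) (f m) (c + p)
    simpa using h
  have hadd : (∫ t in (0:ℝ)..c, f m t) + (∫ t in c..(c+p), f m t)
      = ∫ t in (0:ℝ)..(c+p), f m t :=
    intervalIntegral.integral_add_adjacent_intervals (f_intInt m 0 c) (f_intInt m c (c+p))
  have hle : (∫ t in (0:ℝ)..(c+p), f m t) ≤ (Nat.factorial m : ℝ) :=
    F_le_total m (by linarith)
  rw [hcomp] at hmono2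
  linarith

lemma median (m : ℕ) (hm : 1 ≤ m) :
    (∫ t in (0:ℝ)..(m:ℝ), f m t) ≤ (Nat.factorial m : ℝ) / 2 := by
  have hm0 : (0:ℝ) < m := by exact_mod_cast Nat.pos_of_ne_zero (by omega)
  have h := reflection_claim m hm (p := (m:ℝ)) (c := (m:ℝ)) hm0 le_rfl le_rfl (by nlinarith)
  linarith

lemma pt1 (m : ℕ) (hm : 1 ≤ m) {a t : ℝ} (ht0 : 0 ≤ t) (hta : t ≤ a) :
    ((m : ℝ) - a) * f m t ≤ a * D m t := by
  unfold f D
  have h : t ^ m = t ^ (m - 1) * t := by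
    rw [← pow_succ]; congr 1; omega
  rw [h]
  nlinarith [mul_nonneg (mul_nonneg (Real.exp_nonneg (-t)) (pow_nonneg ht0 (m-1)))
    (mul_nonneg (by positivity : (0:ℝ) ≤ (m:ℝ)) (sub_nonneg.mpr hta))]

lemma pt2 (m : ℕ) (hm : 1 ≤ m) {b t : ℝ} (ht0 : 0 ≤ t) (htb : t ≤ b) :
    b * (-(D m t)) ≤ (b - (m : ℝ)) * f m t := by
  unfold f D
  have h : t ^ m = t ^ (m - 1) * t := by
    rw [← pow_succ]; congr 1; omega
  rw [h]
  nlinarith [mul_nonneg (mul_nonneg (Real.exp_nonneg (-t)) (pow_nonneg ht0 (m-1)))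
    (mul_nonneg (by positivity : (0:ℝ) ≤ (m:ℝ)) (sub_nonneg.mpr htb))]

lemma pt3 (m : ℕ) (hm : 1 ≤ m) {b t : ℝ} (ht0 : 0 ≤ t) (hbt : b ≤ t) :
    (b - (m : ℝ)) * f m t ≤ b * (-(D m t)) := by
  unfold f D
  have h : t ^ m = t ^ (m - 1) * t := by
    rw [← pow_succ]; congr 1; omega
  rw [h]
  nlinarith [mul_nonneg (mul_nonneg (Real.exp_nonneg (-t)) (pow_nonneg ht0 (m-1)))
    (mul_nonneg (by positivity : (0:ℝ) ≤ (m:ℝ)) (sub_nonneg.mpr hbt))]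

lemma pt4 (m : ℕ) (hm : 1 ≤ m) {b s : ℝ} (hs0 : 0 ≤ s)
    (h : (m : ℝ) * (b + s) ≤ 2 * b * s) :
    b * D m s ≤ (b - (m : ℝ)) * f m s := by
  unfold f D
  have he : s ^ m = s ^ (m - 1) * s := by
    rw [← pow_succ]; congr 1; omega
  rw [he]
  nlinarith [mul_nonneg (mul_nonneg (Real.exp_nonneg (-s)) (pow_nonneg hs0 (m-1)))
    (sub_nonneg.mpr h)]


lemma tail_bound (m : ℕ) (hm : 1 ≤ m) {b : ℝ} (hb : 0 < b) (hbm : (m : ℝ) ≤ b) :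
    (b - (m : ℝ)) * ((Nat.factorial m : ℝ) - ∫ t in (0:ℝ)..b, f m t) ≤ b * f m b := by
  have hstep : ∀ x, b ≤ x →
      (b - (m : ℝ)) * ((∫ t in (0:ℝ)..x, f m t) - ∫ t in (0:ℝ)..b, f m t) ≤ b * f m b := by
    intro x hx
    have hFx : (∫ t in (0:ℝ)..x, f m t) - (∫ t in (0:ℝ)..b, f m t) = ∫ t in b..x, f m t := by
      have h := intervalIntegral.integral_add_adjacent_intervals
        (f_intInt m 0 b) (f_intInt m b x)
      linarith
    rw [hFx]
    have hftc : f m x - f m b = ∫ t in b..x, D m t := ftc m b x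
    have hmono : (∫ t in b..x, (b - (m : ℝ)) * f m t) ≤ ∫ t in b..x, b * (-(D m t)) := by
      apply intervalIntegral.integral_mono_on hx
      · exact (continuous_const.mul (f_cont m)).intervalIntegrable _ _
      · exact (continuous_const.mul (D_cont m).neg).intervalIntegrable _ _
      · intro t ht
        exact pt3 m hm (le_trans hb.le ht.1) ht.1
    rw [intervalIntegral.integral_const_mul, intervalIntegral.integral_const_mul,
      intervalIntegral.integral_neg, ← hftc] at hmono
    have hfx : 0 ≤ f m x := f_nonneg m (le_trans hb.le hx)
    nlinarith [mul_nonneg hb.le hfx]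
  have htend : Tendsto
      (fun x => (b - (m : ℝ)) * ((∫ t in (0:ℝ)..x, f m t) - ∫ t in (0:ℝ)..b, f m t)) atTop
      (𝓝 ((b - (m : ℝ)) * ((Nat.factorial m : ℝ) - ∫ t in (0:ℝ)..b, f m t))) :=
    ((F_tendsto m).sub_const _).const_mul _
  exact le_of_tendsto htend (eventually_atTop.mpr ⟨b, hstep⟩)

end TrapAux

open TrapAux in
set_option maxHeartbeats 1000000 in
/-- A trapezoid of measure at least `1/2` has boundary measure at least that of the
simplex of the same measure: if `0 ≤ a ≤ b`, `c ≥ 0` and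
`∫_a^b e^{-t} t^{n−1} dt = ∫_0^c e^{-t} t^{n−1} dt ≥ (n−1)!/2`, then
`e^{-a} a^{n−1} + e^{-b} b^{n−1} ≥ e^{-c} c^{n−1}`. -/
theorem trapezoid_vs_simplex_boundary (n : ℕ) (hn : 1 ≤ n) (a b c : ℝ)
    (ha : 0 ≤ a) (hab : a ≤ b) (hc : 0 ≤ c)
    (heq : ∫ t in a..b, Real.exp (-t) * t ^ (n - 1)
      = ∫ t in (0:ℝ)..c, Real.exp (-t) * t ^ (n - 1))
    (hge : (1 / 2 : ℝ) * (Nat.factorial (n - 1) : ℝ)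
      ≤ ∫ t in (0:ℝ)..c, Real.exp (-t) * t ^ (n - 1)) :
    Real.exp (-c) * c ^ (n - 1)
      ≤ Real.exp (-a) * a ^ (n - 1) + Real.exp (-b) * b ^ (n - 1) := by
  rcases Nat.lt_or_ge n 2 with hn2 | hn2
  · -- n = 1
    have hn1 : n = 1 := by omega
    subst hn1
    simp only [Nat.sub_self, pow_zero, mul_one, Nat.factorial_zero, Nat.cast_one] at *
    have hI : ∀ x y : ℝ, (∫ t in x..y, Real.exp (-t)) = Real.exp (-x) - Real.exp (-y) := by
      intro x y
      have hd : ∀ t : ℝ, HasDerivAt (fun t : ℝ => -Real.exp (-t)) (Real.exp (-t)) t := by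
        intro t
        simpa [Function.comp_def, Pi.neg_def] using (((Real.hasDerivAt_exp (-t)).comp t ((hasDerivAt_id t).neg)).neg)
      rw [intervalIntegral.integral_eq_sub_of_hasDerivAt (fun t _ => hd t)
        ((by fun_prop : Continuous fun t : ℝ => Real.exp (-t)).intervalIntegrable x y)]
      ring
    rw [hI, hI] at heq
    rw [hI] at hge
    simp only [neg_zero, Real.exp_zero] at heq hge
    linarith [Real.exp_nonneg (-b)]
  · -- n ≥ 2
    obtain ⟨m, rfl⟩ : ∃ m, n = m + 1 := ⟨n - 1, by omega⟩
    have hm : 1 ≤ m := by omega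
    simp only [Nat.add_sub_cancel] at heq hge ⊢
    have hm1 : (1 : ℝ) ≤ (m : ℝ) := by exact_mod_cast hm
    replace heq : (∫ t in a..b, f m t) = ∫ t in (0:ℝ)..c, f m t := heq
    replace hge : (1 / 2 : ℝ) * (Nat.factorial m : ℝ) ≤ ∫ t in (0:ℝ)..c, f m t := hge
    show f m c ≤ f m a + f m b
    have hb0 : 0 ≤ b := le_trans ha hab
    have hsplit : (∫ t in (0:ℝ)..a, f m t) + (∫ t in a..b, f m t) = ∫ t in (0:ℝ)..b, f m t :=
      intervalIntegral.integral_add_adjacent_intervals (f_intInt m 0 a) (f_intInt m a b)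
    have hFb : (∫ t in (0:ℝ)..b, f m t)
        = (∫ t in (0:ℝ)..a, f m t) + (∫ t in (0:ℝ)..c, f m t) := by
      rw [← hsplit, heq]
    have hFa0 : 0 ≤ ∫ t in (0:ℝ)..a, f m t := F_nonneg m ha
    have hFble : (∫ t in (0:ℝ)..b, f m t) ≤ (Nat.factorial m : ℝ) := F_le_total m hb0
    have hmed := median m hm
    have hmc : (m : ℝ) ≤ c := le_of_F_le m hc (by linarith)
    have hcb : c ≤ b := le_of_F_le m hb0 (by linarith)
    have hac : a ≤ c := le_of_F_le m hc (by linarith)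
    have hc0 : (0 : ℝ) < c := lt_of_lt_of_le (by linarith) hmc
    have hb0' : (0 : ℝ) < b := lt_of_lt_of_le hc0 hcb
    have hIcb : (∫ t in c..b, f m t) = ∫ t in (0:ℝ)..a, f m t := by
      have h := intervalIntegral.integral_add_adjacent_intervals
        (f_intInt m 0 c) (f_intInt m c b)
      linarith
    by_cases hcase : 2 * a * b ≤ (m : ℝ) * (a + b)
    · -- Case I
      have hI2 : b * (f m c - f m b) ≤ (b - (m : ℝ)) * ∫ t in (0:ℝ)..a, f m t := by
        have hftc : f m b - f m c = ∫ t in c..b, D m t := ftc m c b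
        have hmono : (∫ t in c..b, b * (-(D m t))) ≤ ∫ t in c..b, (b - (m : ℝ)) * f m t := by
          apply intervalIntegral.integral_mono_on hcb
          · exact (continuous_const.mul (D_cont m).neg).intervalIntegrable _ _
          · exact (continuous_const.mul (f_cont m)).intervalIntegrable _ _
          · intro t ht
            exact pt2 m hm (le_trans hc0.le ht.1) ht.2
        rw [intervalIntegral.integral_const_mul, intervalIntegral.integral_const_mul,
          intervalIntegral.integral_neg, ← hftc, hIcb] at hmono
        nlinarith [hmono]
      rcases eq_or_lt_of_le ha with ha0 | ha0
      · have hFa : (∫ t in (0:ℝ)..a, f m t) = 0 := by rw [← ha0]; simp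
        rw [hFa, mul_zero] at hI2
        have hfb : f m c ≤ f m b := by nlinarith
        linarith [f_nonneg m ha]
      · have hI1 : ((m : ℝ) - a) * (∫ t in (0:ℝ)..a, f m t) ≤ a * f m a := by
          have hftc : f m a - f m 0 = ∫ t in (0:ℝ)..a, D m t := ftc m 0 a
          rw [f_zero m hm, sub_zero] at hftc
          have hmono : (∫ t in (0:ℝ)..a, ((m : ℝ) - a) * f m t)
              ≤ ∫ t in (0:ℝ)..a, a * D m t := by
            apply intervalIntegral.integral_mono_on ha
            · exact (continuous_const.mul (f_cont m)).intervalIntegrable _ _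
            · exact (continuous_const.mul (D_cont m)).intervalIntegrable _ _
            · intro t ht
              exact pt1 m hm ht.1 ht.2
          rw [intervalIntegral.integral_const_mul, intervalIntegral.integral_const_mul,
            ← hftc] at hmono
          exact hmono
        nlinarith [mul_le_mul_of_nonneg_left hI1 hb0'.le,
          mul_le_mul_of_nonneg_left hI2 ha0.le,
          mul_nonneg (sub_nonneg.mpr hcase) hFa0, mul_pos ha0 hb0']
    · -- Case II
      push_neg at hcase
      have ha0 : 0 < a := by
        rcases eq_or_lt_of_le ha with h | h
        · exfalso; rw [← h] at hcase; nlinarith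
        · exact h
      have hbm : (m : ℝ) < b := by nlinarith
      by_cases hfa : f m c ≤ f m a
      · linarith [f_nonneg m hb0]
      · push_neg at hfa
        have ham : a ≤ (m : ℝ) := by
          by_contra h
          push_neg at h
          exact absurd (f_antitone m h.le ha0 hac) (not_le.mpr hfa)
        have hfcm : f m c ≤ f m (m : ℝ) := f_antitone m le_rfl (by linarith) hmc
        obtain ⟨p, hpIcc, hfp⟩ :=
          intermediate_value_Icc ham (f_cont m).continuousOn ⟨hfa.le, hfcm⟩
        have hp0 : 0 < p := by
          rcases lt_or_ge 0 p with h | h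
          · exact h
          · exfalso
            have hpz : p = 0 := le_antisymm h (le_trans ha hpIcc.1)
            rw [hpz, f_zero m hm] at hfp
            exact absurd hfp.symm (ne_of_gt (f_pos m hc0))
        have hphi := phi_eq_of_f_eq m hp0 hc0 hfp
        have hsum := conj_sum m hm hp0 hpIcc.2 hmc hphi
        have hclaim := reflection_claim m hm hp0 (le_trans hpIcc.2 hmc) (le_of_eq hphi) hsum
        have hIap : (∫ t in a..p, f m t)
            = (∫ t in (0:ℝ)..p, f m t) - ∫ t in (0:ℝ)..a, f m t := by
          have h := intervalIntegral.integral_add_adjacent_intervals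
            (f_intInt m 0 a) (f_intInt m a p)
          linarith
        have hM0 : 0 ≤ ∫ t in a..p, f m t :=
          intervalIntegral.integral_nonneg hpIcc.1 (fun t ht => f_nonneg m (le_trans ha ht.1))
        have key1 : b * (f m p - f m a)
            ≤ (b - (m : ℝ)) * ((∫ t in (0:ℝ)..p, f m t) - ∫ t in (0:ℝ)..a, f m t) := by
          have hftc : f m p - f m a = ∫ t in a..p, D m t := ftc m a p
          have hmono : (∫ t in a..p, b * D m t) ≤ ∫ t in a..p, (b - (m : ℝ)) * f m t := by
            apply intervalIntegral.integral_mono_on hpIcc.1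
            · exact (continuous_const.mul (D_cont m)).intervalIntegrable _ _
            · exact (continuous_const.mul (f_cont m)).intervalIntegrable _ _
            · intro s hs
              apply pt4 m hm (le_trans ha hs.1)
              have hprod : 0 ≤ (s - a) * (2 * b - (m:ℝ)) :=
                mul_nonneg (by linarith [hs.1]) (by linarith)
              nlinarith [hprod]
          rw [intervalIntegral.integral_const_mul, intervalIntegral.integral_const_mul,
            ← hftc, hIap] at hmono
          exact hmono
        have key2 := tail_bound m hm hb0' hbm.le
        have hgap : (∫ t in (0:ℝ)..p, f m t) - (∫ t in (0:ℝ)..a, f m t)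
            ≤ (Nat.factorial m : ℝ) - ∫ t in (0:ℝ)..b, f m t := by
          rw [hFb]; linarith
        rw [← hfp]
        have hA := mul_le_mul_of_nonneg_left hgap (by linarith : (0:ℝ) ≤ b - (m:ℝ))
        have hchain : b * (f m p - f m a) ≤ b * f m b := le_trans key1 (le_trans hA key2)
        have hfin := (mul_le_mul_iff_right₀ hb0').mp hchain
        linarith
end

section
/- Let n ≥ 1 be an integer and let x, y, z ≥ 0 be real numbers satisfying ∫_x^∞ e^{-t} t^{n−1} dt + ∫_y^∞ e^{-t} t^{n−1} dt = ∫_z^∞ e^{-t} t^{n−1} dt. Then e^{-x} x^{n−1} + e^{-y} y^{n−1} ≥ e^{-z} z^{n−1}. -/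
open MeasureTheory Real Set

private lemma cbs_integrable (n : ℕ) (hn : 1 ≤ n) {a : ℝ} (ha : 0 ≤ a) :
    IntegrableOn (fun t : ℝ => Real.exp (-t) * t ^ (n - 1)) (Ioi a) := by
  have h := Real.GammaIntegral_convergent (s := (n : ℝ))
    (by exact_mod_cast Nat.pos_of_ne_zero (by omega))
  have h2 : IntegrableOn (fun t : ℝ => Real.exp (-t) * t ^ (n - 1)) (Ioi 0) := by
    refine h.congr_fun (fun t ht => ?_) measurableSet_Ioi
    have : (n : ℝ) - 1 = ((n - 1 : ℕ) : ℝ) := by push_cast [Nat.cast_sub hn]; ring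
    beta_reduce
    rw [this, Real.rpow_natCast]
  exact h2.mono_set (Ioi_subset_Ioi ha)

private lemma cbs_shift (g : ℝ → ℝ) (c x : ℝ) :
    ∫ t in Ioi x, g (t + c) = ∫ t in Ioi (x + c), g t := by
  rw [← (measurePreserving_add_right volume c).setIntegral_preimage_emb
    (MeasurableEquiv.addRight c).measurableEmbedding g (Ioi (x + c))]
  congr 1
  ext u
  simp [add_lt_add_iff_right]

private lemma cbs_pos (n : ℕ) (hn : 1 ≤ n) {a : ℝ} (ha : 0 ≤ a) :
    0 < ∫ t in Ioi a, Real.exp (-t) * t ^ (n - 1) := by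
  set c : ℝ := Real.exp (-(a + 2)) * (a + 1) ^ (n - 1) with hc
  have hcpos : 0 < c := by positivity
  have h1 : ∫ t in Ioc (a + 1) (a + 2), c
      ≤ ∫ t in Ioc (a + 1) (a + 2), Real.exp (-t) * t ^ (n - 1) := by
    refine setIntegral_mono_on (integrableOn_const (by simp [Real.volume_Ioc]))
      (((cbs_integrable n hn ha).mono_set ?_).mono_set Ioc_subset_Ioi_self)
      measurableSet_Ioc (fun t ht => ?_)
    · exact Ioi_subset_Ioi (by linarith)
    · rw [hc]
      have e1 : Real.exp (-(a + 2)) ≤ Real.exp (-t) := Real.exp_le_exp.2 (by linarith [ht.2])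
      have e2 : (a + 1) ^ (n - 1) ≤ t ^ (n - 1) :=
        pow_le_pow_left₀ (by linarith) ht.1.le _
      exact mul_le_mul e1 e2 (by positivity) (Real.exp_pos _).le
  have h2 : ∫ t in Ioc (a + 1) (a + 2), c = c := by
    rw [setIntegral_const, Real.volume_real_Ioc_of_le (by linarith)]
    norm_num
  have h3 : ∫ t in Ioc (a + 1) (a + 2), Real.exp (-t) * t ^ (n - 1)
      ≤ ∫ t in Ioi a, Real.exp (-t) * t ^ (n - 1) := by
    refine setIntegral_mono_set (cbs_integrable n hn ha) ?_
      (HasSubset.Subset.eventuallyLE (fun t ht => lt_trans (by linarith) ht.1))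
    filter_upwards [ae_restrict_mem measurableSet_Ioi] with t ht
    have h0 : (0:ℝ) < t := lt_of_le_of_lt ha ht
    positivity
  linarith

private lemma cbs_key (n : ℕ) (hn : 1 ≤ n) {z x : ℝ} (hz : 0 ≤ z) (hzx : z ≤ x) :
    (Real.exp (-z) * z ^ (n - 1)) * ∫ t in Ioi x, Real.exp (-t) * t ^ (n - 1)
      ≤ (Real.exp (-x) * x ^ (n - 1)) * ∫ t in Ioi z, Real.exp (-t) * t ^ (n - 1) := by
  have hx : 0 ≤ x := hz.trans hzx
  have hshift : ∫ t in Ioi z, Real.exp (-t) * t ^ (n - 1)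
      = ∫ t in Ioi x, Real.exp (-(t + (z - x))) * (t + (z - x)) ^ (n - 1) := by
    rw [cbs_shift (fun t => Real.exp (-t) * t ^ (n - 1)) (z - x) x]
    norm_num
  rw [hshift, ← MeasureTheory.integral_const_mul, ← MeasureTheory.integral_const_mul]
  have hB : IntegrableOn (fun t => Real.exp (-(t + (z - x))) * (t + (z - x)) ^ (n - 1))
      (Ioi x) := by
    have := (measurePreserving_add_right (volume : Measure ℝ) (z - x)).integrableOn_comp_preimage
      (MeasurableEquiv.addRight (z - x)).measurableEmbedding
      (f := fun t => Real.exp (-t) * t ^ (n - 1)) (s := Ioi z)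
    have hpre : (fun t : ℝ => t + (z - x)) ⁻¹' Ioi z = Ioi x := by
      ext u; simp
    have h2 := this.2 (cbs_integrable n hn hz)
    rw [hpre] at h2
    exact h2
  refine setIntegral_mono_on ((cbs_integrable n hn hx).const_mul _)
    (hB.const_mul _) measurableSet_Ioi (fun t ht => ?_)
  have htx : x ≤ t := le_of_lt ht
  have htz : 0 ≤ t + (z - x) := by linarith
  have hprod : z * t ≤ x * (t + (z - x)) := by nlinarith
  calc Real.exp (-z) * z ^ (n - 1) * (Real.exp (-t) * t ^ (n - 1))
      = Real.exp (-z) * Real.exp (-t) * (z * t) ^ (n - 1) := by rw [mul_pow]; ring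
    _ ≤ Real.exp (-z) * Real.exp (-t) * (x * (t + (z - x))) ^ (n - 1) := by
        have h0 : (0:ℝ) ≤ z * t := mul_nonneg hz (hx.trans htx)
        exact mul_le_mul_of_nonneg_left (pow_le_pow_left₀ h0 hprod _) (by positivity)
    _ = Real.exp (-x) * Real.exp (-(t + (z - x))) * (x * (t + (z - x))) ^ (n - 1) := by
        rw [← Real.exp_add, ← Real.exp_add]; ring_nf
    _ = Real.exp (-x) * x ^ (n - 1) * (Real.exp (-(t + (z - x))) * (t + (z - x)) ^ (n - 1)) := by
        rw [mul_pow]; ring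

/-- If `∫_x^∞ e^{-t}t^{n−1}dt + ∫_y^∞ e^{-t}t^{n−1}dt = ∫_z^∞ e^{-t}t^{n−1}dt` with
`x, y, z ≥ 0`, then `e^{-x}x^{n−1} + e^{-y}y^{n−1} ≥ e^{-z}z^{n−1}`. -/
theorem complement_boundary_superadditive (n : ℕ) (hn : 1 ≤ n) (x y z : ℝ)
    (hx : 0 ≤ x) (hy : 0 ≤ y) (hz : 0 ≤ z)
    (heq : (∫ t in Set.Ioi x, Real.exp (-t) * t ^ (n - 1))
        + ∫ t in Set.Ioi y, Real.exp (-t) * t ^ (n - 1)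
      = ∫ t in Set.Ioi z, Real.exp (-t) * t ^ (n - 1)) :
    Real.exp (-z) * z ^ (n - 1)
      ≤ Real.exp (-x) * x ^ (n - 1) + Real.exp (-y) * y ^ (n - 1) := by
  have hanti : ∀ a b : ℝ, 0 ≤ a → a ≤ b →
      (∫ t in Ioi b, Real.exp (-t) * t ^ (n - 1))
        ≤ ∫ t in Ioi a, Real.exp (-t) * t ^ (n - 1) := by
    intro a b ha hab
    refine setIntegral_mono_set (cbs_integrable n hn ha)
      ?_ (HasSubset.Subset.eventuallyLE (Ioi_subset_Ioi hab))
    filter_upwards [ae_restrict_mem measurableSet_Ioi] with t ht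
    have h0 : (0:ℝ) < t := lt_of_le_of_lt ha ht
    positivity
  have hzx : z ≤ x := by
    by_contra h
    push_neg at h
    have h1 := hanti x z hx h.le
    have h2 := cbs_pos n hn hy
    linarith
  have hzy : z ≤ y := by
    by_contra h
    push_neg at h
    have h1 := hanti y z hy h.le
    have h2 := cbs_pos n hn hx
    linarith
  have k1 := cbs_key n hn hz hzx
  have k2 := cbs_key n hn hz hzy
  have hFz := cbs_pos n hn hz
  have hsum := add_le_add k1 k2
  rw [← mul_add, heq] at hsum
  refine le_of_mul_le_mul_right ?_ hFz
  calc Real.exp (-z) * z ^ (n - 1) * ∫ t in Ioi z, Real.exp (-t) * t ^ (n - 1)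
      ≤ Real.exp (-x) * x ^ (n - 1) * (∫ t in Ioi z, Real.exp (-t) * t ^ (n - 1))
        + Real.exp (-y) * y ^ (n - 1) * ∫ t in Ioi z, Real.exp (-t) * t ^ (n - 1) := hsum
    _ = (Real.exp (-x) * x ^ (n - 1) + Real.exp (-y) * y ^ (n - 1))
        * ∫ t in Ioi z, Real.exp (-t) * t ^ (n - 1) := by ring
end

section
/- Let n ≥ 2 be an integer and let x, y, z ≥ 0 be real numbers satisfying ∫_x^∞ e^{-t} t^{n−1} dt + ∫_y^∞ e^{-t} t^{n−1} dt = ∫_z^∞ e^{-t} t^{n−1} dt. Then ∫_x^∞ e^{-t} t^{n−2} dt + ∫_y^∞ e^{-t} t^{n−2} dt ≤ ∫_z^∞ e^{-t} t^{n−2} dt. -/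
open MeasureTheory Real Set Filter Topology

namespace ComplementAux

noncomputable def f (k : ℕ) (t : ℝ) : ℝ := Real.exp (-t) * t ^ k

lemma cont (k : ℕ) : Continuous (f k) := by
  unfold f; continuity

lemma intg (k : ℕ) (r : ℝ) : IntegrableOn (f k) (Ioi r) := by
  have h0 : IntegrableOn (f k) (Ioi (0 : ℝ)) := by
    have h := Real.GammaIntegral_convergent (s := (k : ℝ) + 1) (by positivity)
    refine h.congr_fun (fun t ht => ?_) measurableSet_Ioi
    simp only [add_sub_cancel_right, f]
    rw [Real.rpow_natCast]
  rcases le_total 0 r with h | h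
  · exact h0.mono_set (Ioi_subset_Ioi h)
  · rw [← Ioc_union_Ioi_eq_Ioi h, integrableOn_union]
    exact ⟨(cont k).integrableOn_Ioc, h0⟩

lemma fnonneg (k : ℕ) {t : ℝ} (ht : 0 ≤ t) : 0 ≤ f k t := by
  unfold f; positivity

lemma Fpos (k : ℕ) {r : ℝ} (hr : 0 ≤ r) : 0 < ∫ t in Ioi r, f k t := by
  rw [setIntegral_pos_iff_support_of_nonneg_ae]
  · have hsub : Ioi r ⊆ Function.support (f k) ∩ Ioi r := by
      intro t ht
      have htpos : 0 < t := lt_of_le_of_lt hr ht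
      refine ⟨?_, ht⟩
      simp only [Function.mem_support, f]
      positivity
    calc (0 : ENNReal) < volume (Ioi r) := by rw [Real.volume_Ioi]; simp
      _ ≤ volume (Function.support (f k) ∩ Ioi r) := measure_mono hsub
  · refine (ae_restrict_iff' measurableSet_Ioi).2 ?_
    filter_upwards with t ht
    exact fnonneg k (hr.trans (le_of_lt ht))
  · exact intg k r

lemma Fmono (k : ℕ) {a b : ℝ} (ha : 0 ≤ a) (hab : a ≤ b) :
    (∫ t in Ioi b, f k t) ≤ ∫ t in Ioi a, f k t := by
  rw [← Ioc_union_Ioi_eq_Ioi hab,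
    setIntegral_union (Ioc_disjoint_Ioi le_rfl) measurableSet_Ioi
      ((intg k a).mono_set Ioc_subset_Ioi_self) (intg k b)]
  have h : 0 ≤ ∫ t in Ioc a b, f k t :=
    setIntegral_nonneg measurableSet_Ioc (fun t ht => fnonneg k (ha.trans ht.1.le))
  linarith

lemma hasDerivG (k : ℕ) (r : ℝ) :
    HasDerivAt (f (k + 1))
      (Real.exp (-r) * (((k : ℝ) + 1) * r ^ k) - Real.exp (-r) * r ^ (k + 1)) r := by
  have h1 : HasDerivAt (fun t : ℝ => Real.exp (-t)) (-Real.exp (-r)) r := by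
    exact ((Real.hasDerivAt_exp (-r)).comp r (hasDerivAt_neg r)).congr_deriv (by simp)
  have h2 : HasDerivAt (fun t : ℝ => t ^ (k + 1)) (((k : ℝ) + 1) * r ^ k) r := by
    simpa using hasDerivAt_pow (k + 1) r
  have := h1.mul h2
  exact this.congr_deriv (by ring)

lemma ibp (k : ℕ) (r : ℝ) :
    (∫ t in Ioi r, f (k + 1) t)
      = Real.exp (-r) * r ^ (k + 1) + ((k : ℝ) + 1) * ∫ t in Ioi r, f k t := by
  have hG : ∀ t : ℝ, HasDerivAt (fun t => -(Real.exp (-t) * t ^ (k + 1)))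
      (f (k + 1) t - ((k : ℝ) + 1) * f k t) t := by
    intro t
    have := (hasDerivG k t).neg
    exact this.congr_deriv (by unfold f; ring)
  have htend : Tendsto (fun t : ℝ => -(Real.exp (-t) * t ^ (k + 1))) atTop (𝓝 0) := by
    have h := (tendsto_pow_mul_exp_neg_atTop_nhds_zero (k + 1)).neg
    rw [neg_zero] at h
    convert h using 2 with t
    ring
  have hint : IntegrableOn (fun t => f (k + 1) t - ((k : ℝ) + 1) * f k t) (Ioi r) :=
    (intg (k + 1) r).sub ((intg k r).const_mul _)
  have key := integral_Ioi_of_hasDerivAt_of_tendsto' (fun t _ => hG t) hint htend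
  rw [integral_sub (intg (k + 1) r) ((intg k r).const_mul _), integral_const_mul] at key
  have : (0 : ℝ) - -(Real.exp (-r) * r ^ (k + 1)) = Real.exp (-r) * r ^ (k + 1) := by ring
  rw [this] at key
  linarith

lemma keymono (k : ℕ) {r : ℝ} (hr : 0 ≤ r) :
    r * (∫ t in Ioi r, f k t) ≤ ∫ t in Ioi r, f (k + 1) t := by
  rw [← integral_const_mul]
  refine setIntegral_mono_on ((intg k r).const_mul r) (intg (k + 1) r) measurableSet_Ioi ?_
  intro t ht
  have h0 : 0 ≤ t := hr.trans (le_of_lt ht)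
  simp only [f, pow_succ]
  nlinarith [Real.exp_pos (-t), pow_nonneg h0 k, (le_of_lt ht : r ≤ t),
    mul_le_mul_of_nonneg_right (le_of_lt ht : r ≤ t)
      (mul_nonneg (Real.exp_pos (-t)).le (pow_nonneg h0 k))]

lemma hasDerivF (k : ℕ) (r : ℝ) :
    HasDerivAt (fun r => ∫ t in Ioi r, f k t) (-(f k r)) r := by
  have heqF : ∀ r : ℝ,
      (∫ t in Ioi r, f k t) = (∫ t in Ioi (0 : ℝ), f k t) - ∫ t in (0 : ℝ)..r, f k t := by
    intro r
    rcases le_total 0 r with h | h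
    · rw [intervalIntegral.integral_of_le h, ← Ioc_union_Ioi_eq_Ioi h,
        setIntegral_union (Ioc_disjoint_Ioi le_rfl) measurableSet_Ioi
          ((intg k 0).mono_set Ioc_subset_Ioi_self) (intg k r)]
      ring
    · rw [intervalIntegral.integral_of_ge h]
      rw [← Ioc_union_Ioi_eq_Ioi h, setIntegral_union (Ioc_disjoint_Ioi le_rfl) measurableSet_Ioi
          ((intg k r).mono_set Ioc_subset_Ioi_self) (intg k 0)]
      ring
  have hd : HasDerivAt (fun u => ∫ t in (0 : ℝ)..u, f k t) (f k r) r :=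
    intervalIntegral.integral_hasDerivAt_right ((cont k).intervalIntegrable _ _)
      ((cont k).stronglyMeasurable.stronglyMeasurableAtFilter) (cont k).continuousAt
  have hcomb : HasDerivAt
      (fun u => (∫ t in Ioi (0 : ℝ), f k t) - ∫ t in (0 : ℝ)..u, f k t) (0 - f k r) r :=
    (hasDerivAt_const r _).sub hd
  rw [zero_sub] at hcomb
  have hfun : (fun r : ℝ => ∫ t in Ioi r, f k t)
      = fun u => (∫ t in Ioi (0 : ℝ), f k t) - ∫ t in (0 : ℝ)..u, f k t := funext heqF
  rw [hfun]
  exact hcomb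

lemma ratio_mono (m : ℕ) :
    MonotoneOn (fun r => f (m + 1) r / ∫ t in Ioi r, f (m + 1) t) (Ici 0) := by
  have hdiv : ∀ r : ℝ, 0 ≤ r → HasDerivAt (fun r => f (m + 1) r / ∫ t in Ioi r, f (m + 1) t)
      (((Real.exp (-r) * (((m : ℝ) + 1) * r ^ m) - Real.exp (-r) * r ^ (m + 1))
          * (∫ t in Ioi r, f (m + 1) t)
        - f (m + 1) r * -(f (m + 1) r)) / (∫ t in Ioi r, f (m + 1) t) ^ 2) r := by
    intro r hr
    exact (hasDerivG m r).div (hasDerivF (m + 1) r) (Fpos (m + 1) hr).ne'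
  apply monotoneOn_of_deriv_nonneg (convex_Ici 0)
  · intro r hr
    exact ((hdiv r hr).continuousAt).continuousWithinAt
  · intro r hr
    rw [interior_Ici] at hr
    exact ((hdiv r hr.le).differentiableAt).differentiableWithinAt
  · intro r hr
    rw [interior_Ici] at hr
    rw [(hdiv r hr.le).deriv]
    apply div_nonneg _ (sq_nonneg _)
    set F := ∫ t in Ioi r, f (m + 1) t with hF
    set E := ∫ t in Ioi r, f m t with hE
    have h1 : Real.exp (-r) * r ^ (m + 1) = F - ((m : ℝ) + 1) * E := by
      have := ibp m r; rw [← hF, ← hE] at this; linarith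
    have h2 : r * E ≤ F := keymono m hr.le
    have hnum : (Real.exp (-r) * (((m : ℝ) + 1) * r ^ m) - Real.exp (-r) * r ^ (m + 1)) * F
        - f (m + 1) r * -(f (m + 1) r)
        = Real.exp (-r) * r ^ m * ((m : ℝ) + 1) * (F - r * E) := by
      simp only [f]
      linear_combination (Real.exp (-r) * r ^ (m + 1)) * h1
    rw [hnum]
    have hrpos : (0 : ℝ) < r := hr
    have hA : (0 : ℝ) < Real.exp (-r) * r ^ m * ((m : ℝ) + 1) :=
      mul_pos (mul_pos (Real.exp_pos (-r)) (pow_pos hrpos m)) (by positivity)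
    exact mul_nonneg hA.le (by linarith)

end ComplementAux

open ComplementAux

/-- If `∫_x^∞ e^{-t}t^{n−1}dt + ∫_y^∞ e^{-t}t^{n−1}dt = ∫_z^∞ e^{-t}t^{n−1}dt` with
`x, y, z ≥ 0` and `n ≥ 2`, then
`∫_x^∞ e^{-t}t^{n−2}dt + ∫_y^∞ e^{-t}t^{n−2}dt ≤ ∫_z^∞ e^{-t}t^{n−2}dt`. -/
theorem complement_integral_inequality (n : ℕ) (hn : 2 ≤ n) (x y z : ℝ)
    (hx : 0 ≤ x) (hy : 0 ≤ y) (hz : 0 ≤ z)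
    (heq : (∫ t in Set.Ioi x, Real.exp (-t) * t ^ (n - 1))
        + ∫ t in Set.Ioi y, Real.exp (-t) * t ^ (n - 1)
      = ∫ t in Set.Ioi z, Real.exp (-t) * t ^ (n - 1)) :
    (∫ t in Set.Ioi x, Real.exp (-t) * t ^ (n - 2))
        + ∫ t in Set.Ioi y, Real.exp (-t) * t ^ (n - 2)
      ≤ ∫ t in Set.Ioi z, Real.exp (-t) * t ^ (n - 2) := by
  obtain ⟨m, rfl⟩ : ∃ m, n = m + 2 := ⟨n - 2, by omega⟩
  have e1 : m + 2 - 1 = m + 1 := rfl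
  have e2 : m + 2 - 2 = m := rfl
  rw [e1] at heq
  rw [e2]
  change (∫ t in Ioi x, f (m + 1) t) + (∫ t in Ioi y, f (m + 1) t)
      = ∫ t in Ioi z, f (m + 1) t at heq
  change (∫ t in Ioi x, f m t) + (∫ t in Ioi y, f m t) ≤ ∫ t in Ioi z, f m t
  have hFx : 0 < ∫ t in Ioi x, f (m + 1) t := Fpos (m + 1) hx
  have hFy : 0 < ∫ t in Ioi y, f (m + 1) t := Fpos (m + 1) hy
  have hFz : 0 < ∫ t in Ioi z, f (m + 1) t := Fpos (m + 1) hz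
  have hzx : z ≤ x := by
    by_contra h
    push_neg at h
    have h1 := Fmono (m + 1) hx h.le
    linarith
  have hzy : z ≤ y := by
    by_contra h
    push_neg at h
    have h1 := Fmono (m + 1) hy h.le
    linarith
  have hmx := ratio_mono m (mem_Ici.2 hz) (mem_Ici.2 hx) hzx
  have hmy := ratio_mono m (mem_Ici.2 hz) (mem_Ici.2 hy) hzy
  rw [div_le_div_iff₀ hFz hFx] at hmx
  rw [div_le_div_iff₀ hFz hFy] at hmy
  have hg : f (m + 1) z ≤ f (m + 1) x + f (m + 1) y := by
    have h3 : f (m + 1) z * ∫ t in Ioi z, f (m + 1) t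
        ≤ (f (m + 1) x + f (m + 1) y) * ∫ t in Ioi z, f (m + 1) t := by
      calc f (m + 1) z * ∫ t in Ioi z, f (m + 1) t
          = f (m + 1) z * (∫ t in Ioi x, f (m + 1) t)
            + f (m + 1) z * ∫ t in Ioi y, f (m + 1) t := by rw [← heq]; ring
        _ ≤ f (m + 1) x * (∫ t in Ioi z, f (m + 1) t)
            + f (m + 1) y * ∫ t in Ioi z, f (m + 1) t := add_le_add hmx hmy
        _ = (f (m + 1) x + f (m + 1) y) * ∫ t in Ioi z, f (m + 1) t := by ring
    exact le_of_mul_le_mul_right h3 hFz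
  have hix := ibp m x
  have hiy := ibp m y
  have hiz := ibp m z
  have hgx : f (m + 1) x = Real.exp (-x) * x ^ (m + 1) := rfl
  have hgy : f (m + 1) y = Real.exp (-y) * y ^ (m + 1) := rfl
  have hgz : f (m + 1) z = Real.exp (-z) * z ^ (m + 1) := rfl
  rw [hgx, hgy, hgz] at hg
  have hm1 : (0 : ℝ) < (m : ℝ) + 1 := by positivity
  have hkey : ((m : ℝ) + 1) * ((∫ t in Ioi x, f m t) + ∫ t in Ioi y, f m t)
      ≤ ((m : ℝ) + 1) * ∫ t in Ioi z, f m t := by nlinarith [hg, hix, hiy, hiz, heq]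
  exact le_of_mul_le_mul_left hkey hm1
end
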